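/- arXiv:2112.10147 — 5 statements merged into one kernel-verified Lean document; each statement's English description precedes it below -/
import Mathlib

section
/- Let X : Ω → ℝ^d and Y : Ω → ℝ be random variables with G, the distribution function of Y, continuous, set V := G(Y), and let ψ_C(s,t) := E[ E[1_{V ≤ s} | σ(X)] · E[1_{V ≤ t} | σ(X)] ]. Then the distribution-free coefficient of determination R²(V,X) := Var(E[V | σ(X)]) / Var(V) satisfies R²(V,X) = 12 ∫_{[0,1]²} ψ_C(s,t) ds dt − 3, i.e., it equals Spearman's rho applied to ψ_C. -/
open MeasureTheory ProbabilityTheory Set Filter Topology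
open scoped ENNReal

lemma aux_map_eq {Ω : Type*} [MeasurableSpace Ω] (P : Measure Ω) [IsProbabilityMeasure P]
    (Y : Ω → ℝ) (hY : Measurable Y) (G : ℝ → ℝ)
    (hG : ∀ y, G y = (P {ω | Y ω ≤ y}).toReal) (hGc : Continuous G) :
    Measure.map (fun ω => G (Y ω)) P = volume.restrict (Icc (0:ℝ) 1) := by
  set μ := Measure.map Y P with hμdef
  haveI : IsProbabilityMeasure μ := Measure.isProbabilityMeasure_map hY.aemeasurable
  have hGcdf : ∀ y, G y = cdf μ y := by
    intro y
    rw [hG, cdf_eq_real, measureReal_def, hμdef, Measure.map_apply hY measurableSet_Iic]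
    rfl
  have hG0 : ∀ y, 0 ≤ G y := fun y => (hGcdf y) ▸ cdf_nonneg μ y
  have hG1 : ∀ y, G y ≤ 1 := fun y => (hGcdf y) ▸ cdf_le_one μ y
  have hGmono : Monotone G := by
    intro a b hab; rw [hGcdf a, hGcdf b]; exact monotone_cdf (μ := μ) hab
  have hGfun : G = cdf μ := funext hGcdf
  have htop : Tendsto G atTop (𝓝 1) := hGfun ▸ tendsto_cdf_atTop μ
  have hbot : Tendsto G atBot (𝓝 0) := hGfun ▸ tendsto_cdf_atBot μ
  have key : ∀ s : ℝ, 0 ≤ s → s < 1 → μ {y | G y ≤ s} = ENNReal.ofReal s := by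
    intro s hs0 hs1
    have hAclosed : IsClosed {y | G y ≤ s} := isClosed_le hGc continuous_const
    obtain ⟨b, hb⟩ : ∃ b, ∀ y ≥ b, s < G y := by
      have := htop.eventually (lt_mem_nhds hs1)
      rwa [eventually_atTop] at this
    have hbddA : BddAbove {y | G y ≤ s} := by
      refine ⟨b, fun y hy => ?_⟩
      by_contra hby
      exact absurd (hb y (not_le.mp hby).le) (not_lt.mpr hy)
    by_cases hA : Set.Nonempty {y | G y ≤ s}
    · have hcmem : sSup {y | G y ≤ s} ∈ {y | G y ≤ s} := hAclosed.csSup_mem hA hbddA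
      have hGcs : G (sSup {y | G y ≤ s}) ≤ s := hcmem
      have hGcs' : s ≤ G (sSup {y | G y ≤ s}) := by
        rcases eq_or_lt_of_le hs0 with h0 | h0
        · rw [← h0]; exact hG0 _
        · obtain ⟨a, ha⟩ : ∃ a, G a < s := by
            have := hbot.eventually (gt_mem_nhds h0)
            rw [eventually_atBot] at this
            obtain ⟨a, ha⟩ := this
            exact ⟨a, ha a le_rfl⟩
          obtain ⟨b', hb'⟩ : ∃ b', s < G b' := ⟨b, hb b le_rfl⟩
          have hab : a ≤ b' := by
            by_contra hcon
            exact absurd (hGmono (not_le.mp hcon).le) (not_le.mpr (ha.trans hb'))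
          obtain ⟨y₀, _, hy₀⟩ := intermediate_value_Icc hab hGc.continuousOn ⟨ha.le, hb'.le⟩
          have hy₀A : y₀ ∈ {y | G y ≤ s} := le_of_eq hy₀
          calc s = G y₀ := hy₀.symm
          _ ≤ G (sSup {y | G y ≤ s}) := hGmono (le_csSup hbddA hy₀A)
      have hGeq : G (sSup {y | G y ≤ s}) = s := le_antisymm hGcs hGcs'
      have hAeq : {y | G y ≤ s} = Iic (sSup {y | G y ≤ s}) := by
        ext y
        constructor
        · exact fun hy => le_csSup hbddA hy
        · exact fun hy => (hGmono hy).trans hGcs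
      rw [hAeq, ← ofReal_cdf, ← hGcdf, hGeq]
    · rw [not_nonempty_iff_eq_empty] at hA
      have hs0' : s = 0 := by
        by_contra h
        have h0 : 0 < s := lt_of_le_of_ne hs0 (Ne.symm h)
        obtain ⟨a, ha⟩ : ∃ a, G a < s := by
          have := hbot.eventually (gt_mem_nhds h0)
          rw [eventually_atBot] at this
          obtain ⟨a, ha⟩ := this
          exact ⟨a, ha a le_rfl⟩
        have : a ∈ {y | G y ≤ s} := ha.le
        rw [hA] at this
        exact this
      rw [hA, hs0', measure_empty, ENNReal.ofReal_zero]
  haveI : IsProbabilityMeasure (Measure.map (fun ω => G (Y ω)) P) :=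
    Measure.isProbabilityMeasure_map (hGc.measurable.comp hY).aemeasurable
  refine Measure.ext_of_Iic _ _ (fun a => ?_)
  rw [Measure.map_apply (show Measurable fun ω => G (Y ω) from hGc.measurable.comp hY) measurableSet_Iic,
    Measure.restrict_apply measurableSet_Iic]
  have hpre : (fun ω => G (Y ω)) ⁻¹' Iic a = Y ⁻¹' (G ⁻¹' Iic a) := rfl
  rw [hpre, ← Measure.map_apply hY (hGc.measurable measurableSet_Iic), ← hμdef]
  rcases lt_or_ge a 0 with ha | ha
  · have h1 : G ⁻¹' Iic a = (∅ : Set ℝ) := by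
      ext y; simp only [mem_preimage, mem_Iic, mem_empty_iff_false, iff_false, not_le]
      exact lt_of_lt_of_le ha (hG0 y)
    have h2 : Iic a ∩ Icc (0:ℝ) 1 = ∅ := by
      ext x; simp only [mem_inter_iff, mem_Iic, mem_Icc, mem_empty_iff_false, iff_false]
      rintro ⟨hx, hx0, -⟩; linarith
    rw [h1, h2]; simp
  · rcases lt_or_ge a 1 with ha1 | ha1
    · have h1 : G ⁻¹' Iic a = {y | G y ≤ a} := rfl
      rw [h1, key a ha ha1]
      have h2 : Iic a ∩ Icc (0:ℝ) 1 = Icc 0 a := by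
        ext x
        simp only [mem_inter_iff, mem_Iic, mem_Icc]
        constructor
        · rintro ⟨hx, hx0, -⟩; exact ⟨hx0, hx⟩
        · rintro ⟨hx0, hx⟩; exact ⟨hx, hx0, hx.trans ha1.le⟩
      rw [h2, Real.volume_Icc, sub_zero]
    · have h1 : G ⁻¹' Iic a = univ := by
        ext y; simp only [mem_preimage, mem_Iic, mem_univ, iff_true]
        exact (hG1 y).trans ha1
      have h2 : Iic a ∩ Icc (0:ℝ) 1 = Icc 0 1 := by
        ext x
        simp only [mem_inter_iff, mem_Iic, mem_Icc, and_iff_right_iff_imp]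
        rintro ⟨-, hx1⟩; exact hx1.trans ha1
      rw [h1, h2, Real.volume_Icc, measure_univ]
      norm_num

lemma aux_swap {Ω : Type*} [MeasurableSpace Ω] (P : Measure Ω) [IsProbabilityMeasure P]
    (V : Ω → ℝ) (hVm : Measurable V) (hV0 : ∀ ω, 0 ≤ V ω) (hV1 : ∀ ω, V ω ≤ 1)
    (h : Ω → ℝ) (hmeas : Measurable h) (hbd : ∀ ω, ‖h ω‖ ≤ 1) :
    ∫ s in (0:ℝ)..1, (∫ ω, (if V ω ≤ s then (1:ℝ) else 0) * h ω ∂P)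
      = ∫ ω, (1 - V ω) * h ω ∂P := by
  rw [intervalIntegral.integral_of_le zero_le_one]
  set ν := volume.restrict (Ioc (0:ℝ) 1) with hν
  haveI : IsFiniteMeasure ν := by
    constructor
    rw [hν, Measure.restrict_apply_univ, Real.volume_Ioc]
    exact ENNReal.ofReal_lt_top
  have hmeasp : Measurable (fun p : ℝ × Ω => (if V p.2 ≤ p.1 then (1:ℝ) else 0) * h p.2) := by
    have hset : MeasurableSet {p : ℝ × Ω | V p.2 ≤ p.1} :=
      measurableSet_le (hVm.comp measurable_snd) measurable_fst
    exact (Measurable.ite hset measurable_const measurable_const).mul (hmeas.comp measurable_snd)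
  have hintp : Integrable (Function.uncurry fun s ω => (if V ω ≤ s then (1:ℝ) else 0) * h ω)
      (ν.prod P) := by
    refine Integrable.mono' (integrable_const 1) hmeasp.aestronglyMeasurable ?_
    refine Filter.Eventually.of_forall (fun p => ?_)
    simp only [Function.uncurry]
    rw [norm_mul]
    calc ‖if V p.2 ≤ p.1 then (1:ℝ) else 0‖ * ‖h p.2‖ ≤ 1 * 1 := by
          apply mul_le_mul _ (hbd p.2) (norm_nonneg _) zero_le_one
          split <;> simp
    _ = 1 := mul_one 1
  rw [integral_integral_swap hintp]
  refine integral_congr_ae (Filter.Eventually.of_forall (fun ω => ?_))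
  show (∫ s, (if V ω ≤ s then (1:ℝ) else 0) * h ω ∂ν) = (1 - V ω) * h ω
  rw [MeasureTheory.integral_mul_const]
  have hind : (fun s => if V ω ≤ s then (1:ℝ) else 0) = (Ici (V ω)).indicator 1 := by
    funext s
    by_cases hc : V ω ≤ s <;> simp [indicator_apply, mem_Ici, hc]
  rw [hind, MeasureTheory.integral_indicator_one measurableSet_Ici, hν,
    measureReal_def, Measure.restrict_apply measurableSet_Ici]
  have hvol : volume (Ici (V ω) ∩ Ioc (0:ℝ) 1) = ENNReal.ofReal (1 - V ω) := by
    rcases eq_or_lt_of_le (hV0 ω) with h0 | h0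
    · have : Ici (V ω) ∩ Ioc (0:ℝ) 1 = Ioc 0 1 := by
        ext x
        simp only [mem_inter_iff, mem_Ici, mem_Ioc, and_iff_right_iff_imp]
        rintro ⟨hx, -⟩
        rw [← h0]; exact hx.le
      rw [this, Real.volume_Ioc, ← h0, sub_zero]
    · have : Ici (V ω) ∩ Ioc (0:ℝ) 1 = Icc (V ω) 1 := by
        ext x
        simp only [mem_inter_iff, mem_Ici, mem_Ioc, mem_Icc]
        constructor
        · rintro ⟨hx, -, hx1⟩; exact ⟨hx, hx1⟩
        · rintro ⟨hx, hx1⟩; exact ⟨hx, lt_of_lt_of_le h0 hx, hx1⟩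
      rw [this, Real.volume_Icc]
  rw [hvol, ENNReal.toReal_ofReal (by linarith [hV1 ω])]

lemma aux_main {Ω : Type*} {m : MeasurableSpace Ω} [mΩ : MeasurableSpace Ω] (hm : m ≤ mΩ)
    (P : Measure Ω) [IsProbabilityMeasure P]
    (Y : Ω → ℝ) (hY : Measurable Y)
    (G : ℝ → ℝ) (hG : ∀ y, G y = (P {ω | Y ω ≤ y}).toReal) (hGc : Continuous G)
    (V : Ω → ℝ) (hV : V = fun ω => G (Y ω))
    (ψ : ℝ → ℝ → ℝ)
    (hψ : ∀ s t : ℝ, ψ s t =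
      ∫ ω, (P[fun ω' => if V ω' ≤ s then (1:ℝ) else 0 | m]) ω *
           (P[fun ω' => if V ω' ≤ t then (1:ℝ) else 0 | m]) ω ∂P) :
    variance (P[V|m]) P / variance V P
      = 12 * (∫ s in (0:ℝ)..1, ∫ t in (0:ℝ)..1, ψ s t) - 3 := by
  haveI : SigmaFinite (P.trim hm) := inferInstance
  -- basic facts about V
  have hVm : Measurable V := by rw [hV]; exact hGc.measurable.comp hY
  have hV0 : ∀ ω, 0 ≤ V ω := by
    intro ω; simp only [hV]; rw [hG]; exact ENNReal.toReal_nonneg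
  have hV1 : ∀ ω, V ω ≤ 1 := by
    intro ω; simp only [hV]; rw [hG]
    calc (P {ω' | Y ω' ≤ Y ω}).toReal ≤ (1 : ℝ≥0∞).toReal :=
          ENNReal.toReal_mono ENNReal.one_ne_top prob_le_one
    _ = 1 := by simp
  have hVnorm : ∀ ω, ‖V ω‖ ≤ 1 := fun ω => by
    rw [Real.norm_eq_abs, abs_le]; exact ⟨by linarith [hV0 ω], hV1 ω⟩
  have hbd_int : ∀ f : Ω → ℝ, Measurable f → (∀ ω, ‖f ω‖ ≤ 1) → Integrable f P := by
    intro f hf hbd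
    exact Integrable.mono' (integrable_const 1) hf.aestronglyMeasurable
      (Eventually.of_forall hbd)
  have hVint : Integrable V P := hbd_int V hVm hVnorm
  set W : Ω → ℝ := fun ω => 1 - V ω with hWdef
  have hWm : Measurable W := measurable_const.sub hVm
  have hWnorm : ∀ ω, ‖W ω‖ ≤ 1 := fun ω => by
    rw [Real.norm_eq_abs, abs_le]
    constructor <;> simp only [hWdef] <;> [linarith [hV1 ω]; linarith [hV0 ω]]
  have hWint : Integrable W P := hbd_int W hWm hWnorm
  -- indicators
  set ind : ℝ → Ω → ℝ := fun s ω' => if V ω' ≤ s then (1:ℝ) else 0 with hind_def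
  have hind_meas : ∀ s, Measurable (ind s) := fun s =>
    Measurable.ite (measurableSet_le hVm measurable_const) measurable_const measurable_const
  have hind_norm : ∀ s ω, ‖ind s ω‖ ≤ 1 := by
    intro s ω; simp only [hind_def]; split <;> simp
  have hind_nonneg : ∀ s ω, 0 ≤ ind s ω := by
    intro s ω; simp only [hind_def]; split <;> norm_num
  have hind_le_one : ∀ s ω, ind s ω ≤ 1 := by
    intro s ω; simp only [hind_def]; split <;> norm_num
  have hind_int : ∀ s, Integrable (ind s) P := fun s => hbd_int (ind s) (hind_meas s) (hind_norm s)
  -- conditional expectations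
  set F : ℝ → Ω → ℝ := fun s => P[ind s | m] with hF_def
  set N : Ω → ℝ := P[W | m] with hN_def
  set M : Ω → ℝ := P[V | m] with hM_def
  have hψ' : ∀ s t, ψ s t = ∫ ω, F s ω * F t ω ∂P := hψ
  -- bounds on conditional expectations
  have hcond01 : ∀ (g : Ω → ℝ), Integrable g P → (∀ ω, 0 ≤ g ω) → (∀ ω, g ω ≤ 1) →
      ∀ᵐ ω ∂P, 0 ≤ (P[g|m]) ω ∧ (P[g|m]) ω ≤ 1 := by
    intro g hgint hg0 hg1
    have h0 : 0 ≤ᵐ[P] P[g|m] := condExp_nonneg (Eventually.of_forall hg0)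
    have h1 : P[g|m] ≤ᵐ[P] P[(fun _ => (1:ℝ))|m] :=
      condExp_mono hgint (integrable_const 1) (Eventually.of_forall hg1)
    rw [condExp_const hm] at h1
    filter_upwards [h0, h1] with ω hω0 hω1
    exact ⟨hω0, hω1⟩
  have hF01 : ∀ s, ∀ᵐ ω ∂P, 0 ≤ F s ω ∧ F s ω ≤ 1 := fun s =>
    hcond01 (ind s) (hind_int s) (hind_nonneg s) (hind_le_one s)
  have hN01 : ∀ᵐ ω ∂P, 0 ≤ N ω ∧ N ω ≤ 1 := by
    refine hcond01 W hWint (fun ω => ?_) (fun ω => ?_) <;> simp only [hWdef] <;>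
      [linarith [hV1 ω]; linarith [hV0 ω]]
  have hM01 : ∀ᵐ ω ∂P, 0 ≤ M ω ∧ M ω ≤ 1 := hcond01 V hVint hV0 hV1
  have hbd_of_01 : ∀ (f : Ω → ℝ), (∀ᵐ ω ∂P, 0 ≤ f ω ∧ f ω ≤ 1) → ∀ᵐ ω ∂P, ‖f ω‖ ≤ 1 := by
    intro f h01
    filter_upwards [h01] with ω ⟨h0, h1⟩
    rw [Real.norm_eq_abs, abs_le]; exact ⟨by linarith, h1⟩
  have hFbd : ∀ s, ∀ᵐ ω ∂P, ‖F s ω‖ ≤ 1 := fun s => hbd_of_01 _ (hF01 s)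
  have hNbd : ∀ᵐ ω ∂P, ‖N ω‖ ≤ 1 := hbd_of_01 _ hN01
  have hMbd : ∀ᵐ ω ∂P, ‖M ω‖ ≤ 1 := hbd_of_01 _ hM01
  -- truncations
  set Fb : ℝ → Ω → ℝ := fun s ω => max 0 (min (F s ω) 1) with hFb_def
  set Nb : Ω → ℝ := fun ω => max 0 (min (N ω) 1) with hNb_def
  have hF_meas : ∀ s, Measurable (F s) := fun s =>
    (stronglyMeasurable_condExp.mono hm).measurable
  have hN_meas : Measurable N := (stronglyMeasurable_condExp.mono hm).measurable
  have hFb_meas : ∀ s, Measurable (Fb s) := fun s =>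
    measurable_const.max ((hF_meas s).min measurable_const)
  have hNb_meas : Measurable Nb := measurable_const.max (hN_meas.min measurable_const)
  have htrunc_norm : ∀ x : ℝ, ‖max 0 (min x 1)‖ ≤ 1 := by
    intro x
    rw [Real.norm_eq_abs, abs_le]
    refine ⟨by linarith [le_max_left (0:ℝ) (min x 1)], ?_⟩
    exact max_le zero_le_one (min_le_right x 1)
  have hFb_norm : ∀ s ω, ‖Fb s ω‖ ≤ 1 := fun s ω => htrunc_norm _
  have hNb_norm : ∀ ω, ‖Nb ω‖ ≤ 1 := fun ω => htrunc_norm _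
  have hFb_ae : ∀ s, Fb s =ᵐ[P] F s := by
    intro s
    filter_upwards [hF01 s] with ω ⟨h0, h1⟩
    simp only [hFb_def]
    rw [min_eq_left h1, max_eq_right h0]
  have hNb_ae : Nb =ᵐ[P] N := by
    filter_upwards [hN01] with ω ⟨h0, h1⟩
    simp only [hNb_def]
    rw [min_eq_left h1, max_eq_right h0]
  -- pull-out property
  have pull : ∀ (f g : Ω → ℝ), StronglyMeasurable[m] f → (∀ᵐ ω ∂P, ‖f ω‖ ≤ 1) →
      Integrable g P → ∫ ω, f ω * (P[g|m]) ω ∂P = ∫ ω, f ω * g ω ∂P := by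
    intro f g hf hfbd hg
    have h1 : P[f * g|m] =ᵐ[P] f * P[g|m] :=
      condExp_stronglyMeasurable_mul_of_bound hm hf hg 1 hfbd
    have h2 : Integrable (f * g) P := hg.bdd_mul ((hf.mono hm).aestronglyMeasurable) hfbd
    calc ∫ ω, f ω * (P[g|m]) ω ∂P = ∫ ω, (f * P[g|m]) ω ∂P := rfl
    _ = ∫ ω, (P[f * g|m]) ω ∂P := (integral_congr_ae h1).symm
    _ = ∫ ω, (f * g) ω ∂P := integral_condExp hm
    _ = ∫ ω, f ω * g ω ∂P := rfl
  have hFsm : ∀ s, StronglyMeasurable[m] (F s) := fun s => stronglyMeasurable_condExp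
  have hNsm : StronglyMeasurable[m] N := stronglyMeasurable_condExp
  -- step 1
  have step1 : ∀ s t, ψ s t = ∫ ω, ind t ω * Fb s ω ∂P := by
    intro s t
    rw [hψ' s t, pull (F s) (ind t) (hFsm s) (hFbd s) (hind_int t)]
    refine integral_congr_ae ?_
    filter_upwards [hFb_ae s] with ω hω
    rw [hω, mul_comm]
  -- step 2
  have step2 : ∀ s, (∫ t in (0:ℝ)..1, ψ s t) = ∫ ω, (1 - V ω) * Fb s ω ∂P := by
    intro s
    rw [intervalIntegral.integral_congr (g := fun t => ∫ ω, ind t ω * Fb s ω ∂P)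
      (fun t _ => step1 s t)]
    exact aux_swap P V hVm hV0 hV1 (Fb s) (hFb_meas s) (hFb_norm s)
  -- step 3
  have step3 : ∀ s, ∫ ω, (1 - V ω) * Fb s ω ∂P = ∫ ω, ind s ω * Nb ω ∂P := by
    intro s
    have e1 : ∫ ω, (1 - V ω) * Fb s ω ∂P = ∫ ω, F s ω * W ω ∂P := by
      refine integral_congr_ae ?_
      filter_upwards [hFb_ae s] with ω hω
      rw [hω]; simp only [hWdef]; ring
    have e2 : ∫ ω, F s ω * W ω ∂P = ∫ ω, F s ω * N ω ∂P :=
      (pull (F s) W (hFsm s) (hFbd s) hWint).symm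
    have e3 : ∫ ω, F s ω * N ω ∂P = ∫ ω, N ω * ind s ω ∂P := by
      rw [← pull N (ind s) hNsm hNbd (hind_int s)]
      refine integral_congr_ae (Eventually.of_forall (fun ω => ?_))
      exact mul_comm (F s ω) (N ω)
    have e4 : ∫ ω, N ω * ind s ω ∂P = ∫ ω, ind s ω * Nb ω ∂P := by
      refine integral_congr_ae ?_
      filter_upwards [hNb_ae] with ω hω
      rw [hω, mul_comm]
    rw [e1, e2, e3, e4]
  -- total
  have step4 : (∫ s in (0:ℝ)..1, ∫ ω, ind s ω * Nb ω ∂P) = ∫ ω, (1 - V ω) * Nb ω ∂P :=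
    aux_swap P V hVm hV0 hV1 Nb hNb_meas hNb_norm
  have step5 : ∫ ω, (1 - V ω) * Nb ω ∂P = ∫ ω, N ω * N ω ∂P := by
    have e1 : ∫ ω, (1 - V ω) * Nb ω ∂P = ∫ ω, N ω * W ω ∂P := by
      refine integral_congr_ae ?_
      filter_upwards [hNb_ae] with ω hω
      rw [hω]; simp only [hWdef]; ring
    rw [e1, ← pull N W hNsm hNbd hWint]
  have total : (∫ s in (0:ℝ)..1, ∫ t in (0:ℝ)..1, ψ s t) = ∫ ω, N ω * N ω ∂P := by
    rw [intervalIntegral.integral_congr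
      (g := fun s => ∫ ω, ind s ω * Nb ω ∂P) (fun s _ => (step2 s).trans (step3 s))]
    rw [step4, step5]
  -- moments of V
  have hmap : Measure.map V P = volume.restrict (Icc (0:ℝ) 1) := by
    rw [hV]; exact aux_map_eq P Y hY G hG hGc
  have hEV : ∫ ω, V ω ∂P = 1/2 := by
    have h1 : ∫ x, x ∂(Measure.map V P) = ∫ ω, V ω ∂P :=
      integral_map hVm.aemeasurable aestronglyMeasurable_id
    rw [← h1, hmap, MeasureTheory.integral_Icc_eq_integral_Ioc,
      ← intervalIntegral.integral_of_le zero_le_one, integral_id]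
    norm_num
  have hEV2 : ∫ ω, V ω ^ 2 ∂P = 1/3 := by
    have h1 : ∫ x, x ^ 2 ∂(Measure.map V P) = ∫ ω, V ω ^ 2 ∂P :=
      integral_map hVm.aemeasurable (continuous_pow 2).aestronglyMeasurable
    rw [← h1, hmap, MeasureTheory.integral_Icc_eq_integral_Ioc,
      ← intervalIntegral.integral_of_le zero_le_one, integral_pow]
    norm_num
  have hVmem2 : MemLp V 2 P :=
    MemLp.of_bound hVm.aestronglyMeasurable 1 (Eventually.of_forall hVnorm)
  have hVarV : variance V P = 1/12 := by
    rw [variance_eq_sub hVmem2]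
    simp only [Pi.pow_apply]
    rw [hEV, hEV2]
    norm_num
  -- relate N and M
  have hMint : Integrable M P := integrable_condExp
  have hMmem2 : MemLp M 2 P :=
    MemLp.of_bound (stronglyMeasurable_condExp.mono hm).aestronglyMeasurable 1 hMbd
  have hEM : ∫ ω, M ω ∂P = 1/2 := by
    rw [hM_def, integral_condExp hm, hEV]
  have hNM : N =ᵐ[P] fun ω => 1 - M ω := by
    have h1 : W = (fun _ => (1:ℝ)) - V := rfl
    have h2 : P[W|m] =ᵐ[P] P[(fun _ => (1:ℝ))|m] - P[V|m] := by
      rw [h1]; exact condExp_sub (integrable_const 1) hVint m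
    rw [condExp_const hm] at h2
    exact h2
  have hNN : ∫ ω, N ω * N ω ∂P = ∫ ω, M ω ^ 2 ∂P := by
    have h1 : ∀ᵐ ω ∂P, N ω * N ω = (1 - 2 * M ω) + M ω ^ 2 := by
      filter_upwards [hNM] with ω hω
      rw [hω]; ring
    rw [integral_congr_ae h1]
    have ha : Integrable (fun ω => 1 - 2 * M ω) P := (integrable_const (1:ℝ)).sub (hMint.const_mul 2)
    rw [integral_add ha hMmem2.integrable_sq,
      integral_sub (integrable_const (1:ℝ)) (hMint.const_mul 2),
      integral_const_mul, hEM, integral_const]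
    simp
  have hVarM : variance M P = ∫ ω, M ω ^ 2 ∂P - 1/4 := by
    rw [variance_eq_sub hMmem2]
    simp only [Pi.pow_apply]
    rw [hEM]
    norm_num
  rw [total, hNN, hVarM, hVarV]
  rw [div_eq_iff (by norm_num : (1:ℝ)/12 ≠ 0)]
  ring

/-- The distribution-free coefficient of determination
`R²(V,X) = Var(E[V|X])/Var(V)` with `V = G(Y)` equals Spearman's rho applied to `ψ_C`,
i.e. `R²(V,X) = 12 ∫∫_{[0,1]²} ψ_C(s,t) ds dt − 3`. -/
theorem R2_eq_spearman_rho_of_psi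
    {Ω : Type*} [MeasurableSpace Ω] (P : Measure Ω) [IsProbabilityMeasure P]
    {d : ℕ} (X : Ω → (Fin d → ℝ)) (Y : Ω → ℝ) (hX : Measurable X) (hY : Measurable Y)
    (G : ℝ → ℝ) (hG : ∀ y, G y = (P {ω | Y ω ≤ y}).toReal) (hGc : Continuous G)
    (V : Ω → ℝ) (hV : V = fun ω => G (Y ω))
    (ψ : ℝ → ℝ → ℝ)
    (hψ : ∀ s t : ℝ, ψ s t =
      ∫ ω, (P[fun ω' => if V ω' ≤ s then (1:ℝ) else 0 |
              MeasurableSpace.comap X inferInstance]) ω *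
           (P[fun ω' => if V ω' ≤ t then (1:ℝ) else 0 |
              MeasurableSpace.comap X inferInstance]) ω ∂P)
    (R2 : ℝ)
    (hR2 : R2 = variance (P[V | MeasurableSpace.comap X inferInstance]) P / variance V P) :
    R2 = 12 * (∫ s in (0:ℝ)..1, ∫ t in (0:ℝ)..1, ψ s t) - 3 := by
  rw [hR2]
  exact aux_main (measurable_iff_comap_le.mp hX) P Y hY G hG hGc V hV ψ hψ
end

section
/- Let X : Ω → ℝ^d and Y : Ω → ℝ be random variables with G, the distribution function of Y, continuous, and set V := G(Y). Then the distribution-free coefficient of determination R²(V,X) := Var(E[V | σ(X)]) / Var(V) satisfies R²(V,X) = 12·E[(E[V | σ(X)] − 1/2)²]; in particular, R²(V,X) = 0 if and only if E[V | σ(X)] = 1/2 almost surely, and R²(V,X) = 0 whenever Y and X are independent. Moreover, R²(V,X) = 1 if and only if there exists a measurable function f : ℝ^d → ℝ with P(Y = f(X)) = 1. -/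
open MeasureTheory ProbabilityTheory Set Filter Topology

section Aux

/-- Doob–Dynkin: a real function measurable w.r.t. the σ-algebra generated by `X`
factors through `X`. -/
theorem doob_dynkin_real {Ω β : Type*} [mβ : MeasurableSpace β]
    {X : Ω → β} {φ : Ω → ℝ} (hφ : Measurable[MeasurableSpace.comap X mβ] φ) :
    ∃ g : β → ℝ, Measurable g ∧ ∀ ω, φ ω = g (X ω) := by
  have hBq : ∀ q : ℚ, ∃ B : Set β, MeasurableSet B ∧ X ⁻¹' B = {ω | φ ω ≤ (q:ℝ)} := by
    intro q
    have : MeasurableSet[MeasurableSpace.comap X mβ] {ω | φ ω ≤ (q:ℝ)} :=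
      hφ measurableSet_Iic
    exact this
  choose B hBmeas hBpre using hBq
  set C : ℚ → Set β := fun q => ⋂ (q' : ℚ) (_ : q ≤ q'), B q' with hC
  have hCmeas : ∀ q, MeasurableSet (C q) := fun q =>
    MeasurableSet.iInter fun q' => MeasurableSet.iInter fun _ => hBmeas q'
  have hCpre : ∀ q, X ⁻¹' (C q) = {ω | φ ω ≤ (q:ℝ)} := by
    intro q
    ext ω
    simp only [hC, preimage_iInter, mem_iInter, hBpre, mem_setOf_eq, mem_preimage]
    constructor
    · intro h
      exact h q le_rfl
    · intro h q' hq'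
      exact h.trans (by exact_mod_cast hq')
  have hCmono : ∀ q q' : ℚ, q ≤ q' → C q ⊆ C q' := by
    intro q q' hqq' x hx
    simp only [hC, mem_iInter] at hx ⊢
    intro r hr
    exact hx r (hqq'.trans hr)
  classical
  set D : β → Set ℚ := fun x => {q : ℚ | x ∈ C q} with hD
  set g : β → ℝ := fun x => sInf ((↑) '' D x) with hg
  have hgX : ∀ ω, φ ω = g (X ω) := by
    intro ω
    have hDX : D (X ω) = {q : ℚ | φ ω ≤ (q:ℝ)} := by
      ext q
      simp only [hD, mem_setOf_eq]
      simpa using Set.ext_iff.1 (hCpre q) ω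
    rw [hg]
    simp only [hDX]
    obtain ⟨q0, hq0⟩ := exists_rat_gt (φ ω)
    have hne : (((↑) : ℚ → ℝ) '' {q : ℚ | φ ω ≤ (q:ℝ)}).Nonempty :=
      ⟨(q0:ℝ), ⟨q0, hq0.le, rfl⟩⟩
    have hbdd : BddBelow (((↑) : ℚ → ℝ) '' {q : ℚ | φ ω ≤ (q:ℝ)}) :=
      ⟨φ ω, fun r ⟨q, hq, hqr⟩ => hqr ▸ hq⟩
    refine le_antisymm ?_ ?_
    · exact le_csInf hne fun r ⟨q, hq, hqr⟩ => hqr ▸ hq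
    · refine le_of_forall_pos_le_add fun ε hε => ?_
      obtain ⟨q, hq1, hq2⟩ := exists_rat_btwn (lt_add_of_pos_right (φ ω) hε)
      exact (csInf_le hbdd ⟨q, hq1.le, rfl⟩).trans hq2.le
  refine ⟨g, ?_, hgX⟩
  set E : Set β := (⋃ q, C q) ∩ (⋃ q, (C q)ᶜ) with hE
  have hEmeas : MeasurableSet E :=
    ((MeasurableSet.iUnion hCmeas).inter (MeasurableSet.iUnion fun q => (hCmeas q).compl))
  have hEchar : ∀ x, x ∈ E ↔
      ((((↑) : ℚ → ℝ) '' D x).Nonempty ∧ BddBelow (((↑) : ℚ → ℝ) '' D x)) := by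
    intro x
    constructor
    · rintro ⟨⟨_, ⟨⟨q, rfl⟩, hq⟩⟩, ⟨_, ⟨⟨q', rfl⟩, hq'⟩⟩⟩
      refine ⟨⟨(q:ℝ), ⟨q, hq, rfl⟩⟩, ⟨(q':ℝ), ?_⟩⟩
      rintro r ⟨p, hp, rfl⟩
      by_contra hcon
      push_neg at hcon
      have : p ≤ q' := by exact_mod_cast hcon.le
      exact hq' (hCmono p q' this hp)
    · rintro ⟨⟨r, ⟨q, hq, rfl⟩⟩, ⟨b, hb⟩⟩
      refine ⟨mem_iUnion.2 ⟨q, hq⟩, ?_⟩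
      obtain ⟨p, hp⟩ := exists_rat_lt b
      refine mem_iUnion.2 ⟨p, fun hcon => ?_⟩
      have := hb ⟨p, hcon, rfl⟩
      exact absurd this (not_le.2 hp)
  refine measurable_of_Iio fun t => ?_
  have : g ⁻¹' Iio t =
      (E ∩ ⋃ (q : ℚ) (_ : (q:ℝ) < t), C q) ∪ (Eᶜ ∩ (if (0:ℝ) < t then univ else ∅)) := by
    ext x
    by_cases hx : x ∈ E
    · simp only [mem_union, mem_inter_iff, hx, true_and, mem_compl_iff, not_true, false_and,
        or_false, mem_preimage, mem_Iio]
      obtain ⟨hne, hbdd⟩ := (hEchar x).1 hx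
      rw [hg]
      simp only [csInf_lt_iff hbdd hne, mem_iUnion]
      constructor
      · rintro ⟨r, ⟨q, hq, rfl⟩, hr⟩
        exact ⟨q, hr, hq⟩
      · rintro ⟨q, hq, hq'⟩
        exact ⟨(q:ℝ), ⟨q, hq', rfl⟩, hq⟩
    · have hjunk : g x = 0 := by
        show sInf (((↑) : ℚ → ℝ) '' D x) = 0
        by_cases hne : (((↑) : ℚ → ℝ) '' D x).Nonempty
        · have hnb : ¬ BddBelow (((↑) : ℚ → ℝ) '' D x) := fun hb => hx ((hEchar x).2 ⟨hne, hb⟩)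
          exact Real.sInf_of_not_bddBelow hnb
        · simp only [not_nonempty_iff_eq_empty.1 hne, Real.sInf_empty]
      simp only [mem_union, mem_inter_iff, hx, false_and, false_or, mem_compl_iff, not_false_iff,
        true_and, mem_preimage, mem_Iio, hjunk]
      split_ifs with h
      · simp [h]
      · simp [not_lt.1 h]
  rw [this]
  refine ((hEmeas.inter
    (MeasurableSet.iUnion fun q => MeasurableSet.iUnion fun _ => hCmeas q)).union
    (hEmeas.compl.inter (by split_ifs <;> simp)))

/-- A function monotone on an open interval (and `0` outside) is measurable. -/
theorem measurable_ite_monotoneOn {f : ℝ → ℝ} {a b : ℝ} (hf : MonotoneOn f (Ioo a b)) :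
    Measurable (fun v => if v ∈ Ioo a b then f v else 0) := by
  classical
  refine measurable_of_Iio fun t => ?_
  have h1 : MeasurableSet {v ∈ Ioo a b | f v < t} := by
    refine Set.OrdConnected.measurableSet ⟨fun x hx y hy z hz => ?_⟩
    have hzI : z ∈ Ioo a b := (Set.ordConnected_Ioo (a := a) (b := b)).out hx.1 hy.1 hz
    exact ⟨hzI, lt_of_le_of_lt (hf hzI hy.1 hz.2) hy.2⟩
  have : (fun v => if v ∈ Ioo a b then f v else 0) ⁻¹' Iio t =
      {v ∈ Ioo a b | f v < t} ∪ ((Ioo a b)ᶜ ∩ (if (0:ℝ) < t then univ else ∅)) := by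
    ext v
    by_cases hv : v ∈ Ioo a b
    · rw [mem_preimage, mem_Iio, if_pos hv]
      simp only [mem_union, mem_sep_iff, hv, true_and, mem_inter_iff, mem_compl_iff,
        not_true_eq_false, false_and, or_false]
    · rw [mem_preimage, mem_Iio, if_neg hv]
      simp only [mem_union, mem_sep_iff, hv, false_and, false_or, mem_inter_iff, mem_compl_iff,
        not_false_iff, true_and]
      split_ifs with h
      · simp [h]
      · simp [not_lt.1 h]
  rw [this]
  exact h1.union (measurableSet_Ioo.compl.inter (by split_ifs <;> simp))

variable {Ω : Type*} [MeasurableSpace Ω] {P : Measure Ω} [IsProbabilityMeasure P]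
  {Y : Ω → ℝ} {G : ℝ → ℝ}

theorem G_mono (hG : ∀ y, G y = (P {ω | Y ω ≤ y}).toReal) : Monotone G := by
  intro y y' h
  rw [hG, hG]
  exact ENNReal.toReal_mono (measure_ne_top _ _)
    (measure_mono fun ω (hω : Y ω ≤ y) => hω.trans h)

theorem G_nonneg (hG : ∀ y, G y = (P {ω | Y ω ≤ y}).toReal) (y : ℝ) : 0 ≤ G y := by
  rw [hG]; exact ENNReal.toReal_nonneg

theorem G_le_one (hG : ∀ y, G y = (P {ω | Y ω ≤ y}).toReal) (y : ℝ) : G y ≤ 1 := by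
  rw [hG]
  exact ENNReal.toReal_le_of_le_ofReal zero_le_one (by simpa using prob_le_one)

theorem G_eq_cdf (hY : Measurable Y) (hG : ∀ y, G y = (P {ω | Y ω ≤ y}).toReal) :
    G = cdf (P.map Y) := by
  have : IsProbabilityMeasure (P.map Y) := Measure.isProbabilityMeasure_map hY.aemeasurable
  funext y
  rw [hG, cdf_eq_real, measureReal_def, Measure.map_apply hY measurableSet_Iic]
  rfl

theorem G_tendsto_atBot (hY : Measurable Y) (hG : ∀ y, G y = (P {ω | Y ω ≤ y}).toReal) :
    Tendsto G atBot (𝓝 0) := by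
  rw [G_eq_cdf hY hG]; exact tendsto_cdf_atBot _

theorem G_tendsto_atTop (hY : Measurable Y) (hG : ∀ y, G y = (P {ω | Y ω ≤ y}).toReal) :
    Tendsto G atTop (𝓝 1) := by
  rw [G_eq_cdf hY hG]; exact tendsto_cdf_atTop _

/-- The probability integral transform: `G ∘ Y` is uniform on `(0,1]`. -/
theorem map_G_comp_Y (hY : Measurable Y) (hG : ∀ y, G y = (P {ω | Y ω ≤ y}).toReal)
    (hGc : Continuous G) :
    P.map (fun ω => G (Y ω)) = volume.restrict (Ioc (0:ℝ) 1) := by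
  have hVmeas : Measurable fun ω => G (Y ω) := hGc.measurable.comp hY
  refine Measure.ext_of_Iic _ _ (fun v => ?_)
  rw [Measure.map_apply hVmeas measurableSet_Iic]
  have hRHS : (volume.restrict (Ioc (0:ℝ) 1)) (Iic v) = ENNReal.ofReal (min v 1) := by
    rw [Measure.restrict_apply measurableSet_Iic]
    have : Iic v ∩ Ioc (0:ℝ) 1 = Ioc 0 (min v 1) := by
      ext x
      simp only [mem_inter_iff, mem_Iic, mem_Ioc, mem_Ioc, le_min_iff]
      tauto
    rw [this, Real.volume_Ioc, sub_zero]
  rw [hRHS]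
  rcases lt_or_ge v 0 with hv | hv
  · have : (fun ω => G (Y ω)) ⁻¹' Iic v = ∅ := by
      ext ω
      simp only [mem_preimage, mem_Iic, mem_empty_iff_false, iff_false, not_le]
      exact lt_of_lt_of_le hv (G_nonneg hG _)
    rw [this, measure_empty, min_eq_left (hv.le.trans zero_le_one),
      ENNReal.ofReal_of_nonpos hv.le]
  rcases le_or_gt 1 v with hv1 | hv1
  · have : (fun ω => G (Y ω)) ⁻¹' Iic v = univ := by
      ext ω
      simp only [mem_preimage, mem_Iic, mem_univ, iff_true]
      exact (G_le_one hG _).trans hv1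
    rw [this, measure_univ, min_eq_right hv1, ENNReal.ofReal_one]
  · rw [min_eq_left hv1.le]
    set S : Set ℝ := {y | G y ≤ v} with hS
    by_cases hSne : S.Nonempty
    · have hSbdd : BddAbove S := by
        have : ∀ᶠ y in atTop, v < G y :=
          (G_tendsto_atTop hY hG).eventually_const_lt hv1
        obtain ⟨y₁, hy₁⟩ := this.exists
        refine ⟨y₁, fun y hy => ?_⟩
        by_contra hcon
        push_neg at hcon
        exact absurd (G_mono hG hcon.le) (not_le.2 (lt_of_le_of_lt hy hy₁))
      set y₀ := sSup S with hy₀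
      have hlt : ∀ y < y₀, G y ≤ v := by
        intro y hy
        obtain ⟨s, hs, hys⟩ := exists_lt_of_lt_csSup hSne hy
        exact (G_mono hG hys.le).trans hs
      have hgt : ∀ y, y₀ < y → v < G y := by
        intro y hy
        by_contra hcon
        push_neg at hcon
        exact absurd (le_csSup hSbdd hcon) (not_le.2 hy)
      have hGy₀ : G y₀ = v := by
        refine le_antisymm ?_ ?_
        · by_contra hcon
          push_neg at hcon
          have h1 : {y | v < G y} ∈ 𝓝 y₀ :=
            hGc.continuousAt.preimage_mem_nhds (Ioi_mem_nhds hcon)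
          have h2 : {y | v < G y} ∈ 𝓝[<] y₀ := nhdsWithin_le_nhds h1
          obtain ⟨y, hy1, hy2⟩ :=
            Filter.nonempty_of_mem (Filter.inter_mem h2 self_mem_nhdsWithin)
          exact absurd (hlt y hy2) (not_le.2 hy1)
        · by_contra hcon
          push_neg at hcon
          have h1 : {y | G y < v} ∈ 𝓝 y₀ :=
            hGc.continuousAt.preimage_mem_nhds (Iio_mem_nhds hcon)
          have h2 : {y | G y < v} ∈ 𝓝[>] y₀ := nhdsWithin_le_nhds h1
          obtain ⟨y, hy1, hy2⟩ :=
            Filter.nonempty_of_mem (Filter.inter_mem h2 self_mem_nhdsWithin)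
          exact absurd (hgt y hy2) (not_lt.2 hy1.le)
      have hev : (fun ω => G (Y ω)) ⁻¹' Iic v = {ω | Y ω ≤ y₀} := by
        ext ω
        simp only [mem_preimage, mem_Iic, mem_setOf_eq]
        constructor
        · intro h
          exact le_csSup hSbdd h
        · intro h
          exact (G_mono hG h).trans_eq hGy₀
      rw [hev, ← ENNReal.ofReal_toReal (measure_ne_top P {ω | Y ω ≤ y₀}), ← hG, hGy₀]
    · have hevempty : (fun ω => G (Y ω)) ⁻¹' Iic v = ∅ := by
        ext ω
        simp only [mem_preimage, mem_Iic, mem_empty_iff_false, iff_false]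
        intro h
        exact hSne ⟨Y ω, h⟩
      have hv0 : v = 0 := by
        by_contra hcon
        have hvpos : 0 < v := lt_of_le_of_ne hv (Ne.symm hcon)
        have : ∀ᶠ y in atBot, G y < v := (G_tendsto_atBot hY hG).eventually_lt_const hvpos
        obtain ⟨y, hy⟩ := this.exists
        exact hSne ⟨y, hy.le⟩
      rw [hevempty, measure_empty, hv0, ENNReal.ofReal_zero]

/-- The quantile function is monotone on `(0,1)`. -/
theorem quantile_monotoneOn (hG : ∀ y, G y = (P {ω | Y ω ≤ y}).toReal)
    (hGtop : Tendsto G atTop (𝓝 1)) (hGbot : Tendsto G atBot (𝓝 0)) :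
    MonotoneOn (fun v => sInf {y | v ≤ G y}) (Ioo (0:ℝ) 1) := by
  intro v hv v' hv' hvv'
  have hne : {y | v' ≤ G y}.Nonempty := by
    obtain ⟨y, hy⟩ := (hGtop.eventually_const_lt hv'.2).exists
    exact ⟨y, hy.le⟩
  have hbdd : BddBelow {y | v ≤ G y} := by
    obtain ⟨y₀, hy₀⟩ := (hGbot.eventually_lt_const hv.1).exists
    refine ⟨y₀, fun y hy => ?_⟩
    by_contra hcon
    push_neg at hcon
    exact absurd ((G_mono hG hcon.le).trans_lt hy₀) (not_lt.2 hy)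
  exact csInf_le_csInf hbdd hne fun y hy => le_trans hvv' hy

/-- Almost surely, `G (Y ω) ∈ (0,1)`. -/
theorem ae_G_Y_mem_Ioo (hY : Measurable Y)
    (hmap : P.map (fun ω => G (Y ω)) = volume.restrict (Ioc (0:ℝ) 1))
    (hGc : Continuous G) :
    ∀ᵐ ω ∂P, G (Y ω) ∈ Ioo (0:ℝ) 1 := by
  have hVmeas : Measurable fun ω => G (Y ω) := hGc.measurable.comp hY
  have hms : MeasurableSet (Iic (0:ℝ) ∪ Ici 1) := measurableSet_Iic.union measurableSet_Ici
  have h0 : P ((fun ω => G (Y ω)) ⁻¹' (Iic 0 ∪ Ici 1)) = 0 := by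
    rw [← Measure.map_apply hVmeas hms, hmap, Measure.restrict_apply hms]
    have : (Iic (0:ℝ) ∪ Ici 1) ∩ Ioc 0 1 = {1} := by
      ext x
      simp only [mem_inter_iff, mem_union, mem_Iic, mem_Ici, mem_Ioc, mem_singleton_iff]
      constructor
      · rintro ⟨h1 | h1, h2, h3⟩
        · exact absurd h2 (not_lt.2 h1)
        · exact le_antisymm h3 h1
      · rintro rfl
        exact ⟨Or.inr le_rfl, one_pos, le_rfl⟩
    rw [this, Real.volume_singleton]
  rw [ae_iff]
  refine measure_mono_null (fun ω hω => ?_) h0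
  simp only [mem_setOf_eq, mem_Ioo, not_and_or, not_lt] at hω
  simp only [mem_preimage, mem_union, mem_Iic, mem_Ici]
  exact hω

/-- Almost surely, `Y` is recovered from `G (Y ·)` by the quantile function. -/
theorem ae_Y_eq_quantile (hY : Measurable Y) (hG : ∀ y, G y = (P {ω | Y ω ≤ y}).toReal)
    (hGc : Continuous G)
    (hmap : P.map (fun ω => G (Y ω)) = volume.restrict (Ioc (0:ℝ) 1))
    (hGtop : Tendsto G atTop (𝓝 1)) (hGbot : Tendsto G atBot (𝓝 0)) :
    ∀ᵐ ω ∂P, Y ω =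
      (fun v => if v ∈ Ioo (0:ℝ) 1 then sInf {y | v ≤ G y} else 0) (G (Y ω)) := by
  have hBq : ∀ q : ℚ, P {ω | (q:ℝ) < Y ω ∧ G (Y ω) ≤ G q} = 0 := by
    intro q
    by_cases hT : BddAbove {y | G y ≤ G q}
    · set s := sSup {y | G y ≤ G q} with hs
      have hqmem : (q:ℝ) ∈ {y | G y ≤ G (q:ℝ)} := by simp [mem_setOf_eq]
      have hqs : (q:ℝ) ≤ s := le_csSup hT hqmem
      have hGs : G s ≤ G q := by
        by_contra hcon
        push_neg at hcon
        have h1 : {y | G q < G y} ∈ 𝓝 s :=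
          hGc.continuousAt.preimage_mem_nhds (Ioi_mem_nhds hcon)
        obtain ⟨y, hy1, hy2⟩ := Filter.nonempty_of_mem
          (Filter.inter_mem (nhdsWithin_le_nhds h1 : {y | G (q:ℝ) < G y} ∈ 𝓝[<] s)
            self_mem_nhdsWithin)
        obtain ⟨t, ht, hyt⟩ := exists_lt_of_lt_csSup ⟨(q:ℝ), hqmem⟩ hy2
        exact absurd ((G_mono hG hyt.le).trans ht) (not_le.2 hy1)
      have hGsq : G s = G q := le_antisymm hGs (G_mono hG hqs)
      have hsub : {ω | (q:ℝ) < Y ω ∧ G (Y ω) ≤ G q} ⊆ {ω | Y ω ≤ s} \ {ω | Y ω ≤ (q:ℝ)} := by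
        rintro ω ⟨h1, h2⟩
        exact ⟨le_csSup hT h2, not_le.2 h1⟩
      refine measure_mono_null hsub ?_
      have hPq : P {ω | Y ω ≤ (q:ℝ)} = P {ω | Y ω ≤ s} := by
        rw [← ENNReal.ofReal_toReal (measure_ne_top P {ω | Y ω ≤ (q:ℝ)}),
          ← ENNReal.ofReal_toReal (measure_ne_top P {ω | Y ω ≤ s}), ← hG, ← hG, hGsq]
      have hdiff : P ({ω | Y ω ≤ s} \ {ω | Y ω ≤ (q:ℝ)}) =
          P {ω | Y ω ≤ s} - P {ω | Y ω ≤ (q:ℝ)} :=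
        measure_diff (fun ω (hω : Y ω ≤ (q:ℝ)) => hω.trans hqs)
          (hY measurableSet_Iic).nullMeasurableSet (measure_ne_top _ _)
      rw [hdiff, ← hPq, tsub_self]
    · have hGq1 : 1 ≤ G q := by
        refine le_of_tendsto hGtop ?_
        rw [eventually_atTop]
        refine ⟨q, fun y hy => ?_⟩
        obtain ⟨t, ht, hyt⟩ := not_bddAbove_iff.1 hT y
        exact (G_mono hG hyt.le).trans ht
      have : P {ω | Y ω ≤ (q:ℝ)} = 1 := by
        have h1 : G q = 1 := le_antisymm (G_le_one hG _) hGq1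
        rw [hG] at h1
        rw [← ENNReal.ofReal_toReal (measure_ne_top P {ω | Y ω ≤ (q:ℝ)}), h1,
          ENNReal.ofReal_one]
      have hsub : {ω | (q:ℝ) < Y ω ∧ G (Y ω) ≤ G q} ⊆ {ω | Y ω ≤ (q:ℝ)}ᶜ :=
        fun ω hω => not_le.2 hω.1
      refine measure_mono_null hsub ?_
      have hc : P ({ω | Y ω ≤ (q:ℝ)}ᶜ) = P univ - P {ω | Y ω ≤ (q:ℝ)} :=
        measure_compl (hY measurableSet_Iic) (measure_ne_top _ _)
      rw [hc, this, measure_univ, tsub_self]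
  have hB : ∀ᵐ ω ∂P, ∀ q : ℚ, ¬((q:ℝ) < Y ω ∧ G (Y ω) ≤ G q) := by
    rw [ae_all_iff]
    intro q
    rw [ae_iff]
    simpa using hBq q
  filter_upwards [ae_G_Y_mem_Ioo hY hmap hGc, hB] with ω h01 hq
  simp only [if_pos h01]
  set v := G (Y ω) with hv
  have hYmem : Y ω ∈ {y | v ≤ G y} := le_refl v
  have hbdd : BddBelow {y | v ≤ G y} := by
    obtain ⟨y₀, hy₀⟩ := (hGbot.eventually_lt_const h01.1).exists
    refine ⟨y₀, fun y hy => ?_⟩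
    by_contra hcon
    push_neg at hcon
    exact absurd ((G_mono hG hcon.le).trans_lt hy₀) (not_lt.2 hy)
  refine le_antisymm ?_ (csInf_le hbdd hYmem)
  by_contra hcon
  push_neg at hcon
  obtain ⟨q, hq1, hq2⟩ := exists_rat_btwn hcon
  obtain ⟨t, ht, htq⟩ := exists_lt_of_csInf_lt ⟨Y ω, hYmem⟩ hq1
  exact hq q ⟨hq2, le_trans ht (G_mono hG htq.le)⟩

end Aux

/-- For `V = G(Y)`, the distribution-free coefficient of determination
`R²(V,X) = Var(E[V|X])/Var(V)` equals `12·E[(E[V|X] − 1/2)²]`; it vanishes iff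
`E[V|X] = 1/2` a.s. (in particular when `Y` and `X` are independent), and equals `1`
iff `Y` is completely dependent on `X`. -/
theorem R2_characterizations
    {Ω : Type*} [MeasurableSpace Ω] (P : Measure Ω) [IsProbabilityMeasure P]
    {d : ℕ} (X : Ω → (Fin d → ℝ)) (Y : Ω → ℝ) (hX : Measurable X) (hY : Measurable Y)
    (G : ℝ → ℝ) (hG : ∀ y, G y = (P {ω | Y ω ≤ y}).toReal) (hGc : Continuous G)
    (V : Ω → ℝ) (hV : V = fun ω => G (Y ω))
    (R2 : ℝ)
    (hR2 : R2 = variance (P[V | MeasurableSpace.comap X inferInstance]) P / variance V P) :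
    R2 = 12 * ∫ ω, ((P[V | MeasurableSpace.comap X inferInstance]) ω - 1 / 2) ^ 2 ∂P ∧
    (R2 = 0 ↔ P[V | MeasurableSpace.comap X inferInstance] =ᵐ[P] fun _ => 1 / 2) ∧
    (IndepFun Y X P → R2 = 0) ∧
    (R2 = 1 ↔ ∃ f : (Fin d → ℝ) → ℝ, Measurable f ∧ ∀ᵐ ω ∂P, Y ω = f (X ω)) := by
  have hVmeas : Measurable V := by rw [hV]; exact hGc.measurable.comp hY
  have hm := hX.comap_le
  have hmap : P.map V = volume.restrict (Ioc (0:ℝ) 1) := by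
    rw [hV]; exact map_G_comp_Y hY hG hGc
  have hV0 : ∀ ω, 0 ≤ V ω := fun ω => by rw [hV]; exact G_nonneg hG _
  have hV1 : ∀ ω, V ω ≤ 1 := fun ω => by rw [hV]; exact G_le_one hG _
  have hVnorm : ∀ ω, ‖V ω‖ ≤ 1 := fun ω => by
    rw [Real.norm_eq_abs, abs_le]; exact ⟨by linarith [hV0 ω], hV1 ω⟩
  have hVmem2 : MemLp V 2 P := MemLp.of_bound hVmeas.aestronglyMeasurable 1 (ae_of_all _ hVnorm)
  have hVint : Integrable V P := hVmem2.integrable one_le_two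
  have hEV : ∫ ω, V ω ∂P = 1/2 := by
    have h1 : ∫ x, x ∂(P.map V) = ∫ ω, V ω ∂P :=
      integral_map hVmeas.aemeasurable aestronglyMeasurable_id
    rw [← h1, hmap, ← intervalIntegral.integral_of_le zero_le_one, integral_id]
    norm_num
  have hEV2 : ∫ ω, (V ω)^2 ∂P = 1/3 := by
    have h1 : ∫ x, x^2 ∂(P.map V) = ∫ ω, (V ω)^2 ∂P :=
      integral_map hVmeas.aemeasurable (continuous_pow 2).aestronglyMeasurable
    rw [← h1, hmap, ← intervalIntegral.integral_of_le zero_le_one, integral_pow]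
    norm_num
  set CE := P[V|MeasurableSpace.comap X inferInstance] with hCE_def
  have hCEint : Integrable CE P := integrable_condExp
  have hCEsm : StronglyMeasurable[MeasurableSpace.comap X inferInstance] CE :=
    stronglyMeasurable_condExp
  have hCE0 : 0 ≤ᵐ[P] CE := condExp_nonneg (ae_of_all _ hV0)
  have hCE1 : CE ≤ᵐ[P] fun _ => (1:ℝ) := by
    have h := condExp_mono (m := MeasurableSpace.comap X inferInstance)
      hVint (integrable_const (1:ℝ)) (ae_of_all _ hV1)
    rwa [condExp_const hm (1:ℝ)] at h
  have hCEnorm : ∀ᵐ ω ∂P, ‖CE ω‖ ≤ 1 := by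
    filter_upwards [hCE0, hCE1] with ω h0 h1
    have h0' : (0:ℝ) ≤ CE ω := h0
    have h1' : CE ω ≤ 1 := h1
    rw [Real.norm_eq_abs, abs_le]
    exact ⟨by linarith, h1'⟩
  have hCEmem2 : MemLp CE 2 P :=
    MemLp.of_bound (hCEsm.mono hm).aestronglyMeasurable 1 hCEnorm
  have hECE : ∫ ω, CE ω ∂P = 1/2 := by
    rw [hCE_def, integral_condExp hm]; exact hEV
  have hVarV : variance V P = 1/12 := by
    rw [variance_eq_sub hVmem2]
    have h2 : (∫ ω, (V ^ 2) ω ∂P) = 1/3 := by simpa only [Pi.pow_apply] using hEV2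
    show (∫ ω, (V ^ 2) ω ∂P) - (∫ ω, V ω ∂P) ^ 2 = 1/12
    rw [h2, hEV]
    norm_num
  have hCE2int : Integrable (fun ω => CE ω ^ 2) P := hCEmem2.integrable_sq
  have hint1 : Integrable (fun ω => CE ω ^ 2 - CE ω) P := by
    have := hCE2int.sub hCEint
    exact this
  have hIdent : ∫ ω, (CE ω - 1/2)^2 ∂P = (∫ ω, CE ω ^ 2 ∂P) - 1/4 := by
    have h1 : ∫ ω, (CE ω ^ 2 - CE ω) + 1/4 ∂P
        = (∫ ω, CE ω ^ 2 - CE ω ∂P) + ∫ _, (1/4 : ℝ) ∂P :=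
      integral_add hint1 (integrable_const _)
    have h2 : ∫ ω, CE ω ^ 2 - CE ω ∂P = (∫ ω, CE ω ^ 2 ∂P) - ∫ ω, CE ω ∂P :=
      integral_sub hCE2int hCEint
    calc ∫ ω, (CE ω - 1/2)^2 ∂P = ∫ ω, (CE ω ^ 2 - CE ω) + 1/4 ∂P := by
          refine integral_congr_ae (ae_of_all _ fun ω => ?_)
          ring
      _ = (∫ ω, CE ω ^ 2 ∂P) - (∫ ω, CE ω ∂P) + (1/4 : ℝ) := by
          rw [h1, h2]
          simp
      _ = (∫ ω, CE ω ^ 2 ∂P) - 1/4 := by rw [hECE]; ring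
  have hVarCE : variance CE P = ∫ ω, (CE ω - 1/2)^2 ∂P := by
    rw [variance_eq_sub hCEmem2]
    show (∫ ω, (CE ^ 2) ω ∂P) - (∫ ω, CE ω ∂P) ^ 2 = _
    have h2 : (∫ ω, (CE ^ 2) ω ∂P) = ∫ ω, CE ω ^ 2 ∂P := by simp only [Pi.pow_apply]
    rw [h2, hECE, hIdent]
    norm_num
  have hclaim1 : R2 = 12 * ∫ ω, (CE ω - 1/2)^2 ∂P := by
    rw [hR2, hVarV, hVarCE]
    ring
  have hint_sq : Integrable (fun ω => (CE ω - 1/2)^2) P := by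
    have h1 : Integrable (fun ω => (CE ω ^ 2 - CE ω) + 1/4) P :=
      hint1.add (integrable_const _)
    refine h1.congr (ae_of_all _ fun ω => ?_)
    ring
  have hclaim2 : R2 = 0 ↔ CE =ᵐ[P] fun _ => 1/2 := by
    rw [hclaim1]
    constructor
    · intro h
      have hI0 : ∫ ω, (CE ω - 1/2)^2 ∂P = 0 := by linarith
      have h0 := (integral_eq_zero_iff_of_nonneg_ae
        (ae_of_all _ fun ω => sq_nonneg (CE ω - 1/2)) hint_sq).1 hI0
      filter_upwards [h0] with ω hω
      have h1 : (CE ω - 1/2)^2 = 0 := hω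
      have h2 : CE ω - 1/2 = 0 := pow_eq_zero_iff (two_ne_zero) |>.1 h1
      have : CE ω = 1/2 := by linarith
      simpa using this
    · intro h
      have heq : (fun ω => (CE ω - 1/2)^2) =ᵐ[P] fun _ => (0:ℝ) := by
        filter_upwards [h] with ω hω
        have : CE ω = 1/2 := hω
        simp [this]
      rw [integral_congr_ae heq, integral_zero, mul_zero]
  refine ⟨by simpa using hclaim1, by simpa using hclaim2, ?_, ?_⟩
  · -- independence implies R2 = 0
    intro hind
    have hindVX : IndepFun V X P := by
      rw [hV]
      exact hind.comp hGc.measurable measurable_id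
    have hIndep : Indep (MeasurableSpace.comap V inferInstance)
        (MeasurableSpace.comap X inferInstance) P :=
      (IndepFun_iff_Indep V X P).1 hindVX
    have hCEconst : CE =ᵐ[P] fun _ => ∫ ω, V ω ∂P :=
      condExp_indep_eq hVmeas.comap_le hm
        ((comap_measurable V).stronglyMeasurable) hIndep
    refine hclaim2.2 ?_
    refine hCEconst.trans ?_
    rw [hEV]
  · -- R2 = 1 iff complete dependence
    have hGtop : Tendsto G atTop (𝓝 1) := G_tendsto_atTop hY hG
    have hGbot : Tendsto G atBot (𝓝 0) := G_tendsto_atBot hY hG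
    have hmap' : P.map (fun ω => G (Y ω)) = volume.restrict (Ioc (0:ℝ) 1) := by
      rw [← hV]; exact hmap
    constructor
    · intro h1
      have hVarCE12 : variance CE P = 1/12 := by
        rw [hR2, hVarV] at h1
        field_simp at h1
        linarith
      have hECE2 : ∫ ω, CE ω ^ 2 ∂P = 1/3 := by
        have h3 := hVarCE
        rw [hVarCE12, hIdent] at h3
        linarith
      have hprodint : Integrable (fun ω => CE ω * V ω) P :=
        hVint.bdd_mul (hCEsm.mono hm).aestronglyMeasurable hCEnorm
      have hpull : P[(fun ω => CE ω * V ω)|MeasurableSpace.comap X inferInstance] =ᵐ[P]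
          fun ω => CE ω * CE ω := by
        have h := condExp_mul_of_stronglyMeasurable_left hCEsm
          (show Integrable (CE * V) P from hprodint) hVint
        exact h
      have hint_prod_eq : ∫ ω, CE ω * V ω ∂P = ∫ ω, CE ω ^ 2 ∂P := by
        calc ∫ ω, CE ω * V ω ∂P
            = ∫ ω, (P[(fun ω => CE ω * V ω)|MeasurableSpace.comap X inferInstance]) ω ∂P :=
              (integral_condExp hm).symm
          _ = ∫ ω, CE ω * CE ω ∂P := integral_congr_ae hpull
          _ = ∫ ω, CE ω ^ 2 ∂P := by
              refine integral_congr_ae (ae_of_all _ fun ω => ?_)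
              ring
      have hV2int : Integrable (fun ω => V ω ^ 2) P := hVmem2.integrable_sq
      have hint2 : Integrable (fun ω => V ω ^ 2 - 2*(CE ω * V ω)) P := by
        have := hV2int.sub (hprodint.const_mul 2)
        exact this
      have hdiffint : Integrable (fun ω => (V ω - CE ω)^2) P := by
        have h2 : Integrable (fun ω => (V ω ^ 2 - 2*(CE ω * V ω)) + CE ω ^ 2) P :=
          hint2.add hCE2int
        refine h2.congr (ae_of_all _ fun ω => ?_)
        ring
      have hdiff0 : ∫ ω, (V ω - CE ω)^2 ∂P = 0 := by
        have e1 : ∫ ω, (V ω ^ 2 - 2*(CE ω * V ω)) + CE ω ^ 2 ∂P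
            = (∫ ω, V ω ^ 2 - 2*(CE ω * V ω) ∂P) + ∫ ω, CE ω ^ 2 ∂P :=
          integral_add hint2 hCE2int
        have e2 : ∫ ω, V ω ^ 2 - 2*(CE ω * V ω) ∂P
            = (∫ ω, V ω ^ 2 ∂P) - ∫ ω, 2*(CE ω * V ω) ∂P :=
          integral_sub hV2int (hprodint.const_mul 2)
        have e3 : ∫ ω, 2*(CE ω * V ω) ∂P = 2 * ∫ ω, CE ω * V ω ∂P :=
          integral_const_mul 2 _
        calc ∫ ω, (V ω - CE ω)^2 ∂P
            = ∫ ω, (V ω ^ 2 - 2*(CE ω * V ω)) + CE ω ^ 2 ∂P := by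
              refine integral_congr_ae (ae_of_all _ fun ω => ?_)
              ring
          _ = 0 := by
              rw [e1, e2, e3, hint_prod_eq, hEV2, hECE2]
              ring
      have hae : V =ᵐ[P] CE := by
        have h0 := (integral_eq_zero_iff_of_nonneg_ae
          (ae_of_all _ fun ω => sq_nonneg (V ω - CE ω)) hdiffint).1 hdiff0
        filter_upwards [h0] with ω hω
        have h1 : (V ω - CE ω)^2 = 0 := hω
        have h2 : V ω - CE ω = 0 := pow_eq_zero_iff (two_ne_zero) |>.1 h1
        linarith
      obtain ⟨g, hgmeas, hgfac⟩ := doob_dynkin_real hCEsm.measurable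
      refine ⟨(fun v => if v ∈ Ioo (0:ℝ) 1 then sInf {y | v ≤ G y} else 0) ∘ g,
        (measurable_ite_monotoneOn (quantile_monotoneOn hG hGtop hGbot)).comp hgmeas, ?_⟩
      have hq := ae_Y_eq_quantile hY hG hGc hmap' hGtop hGbot
      filter_upwards [hq, hae] with ω hqω haeω
      have hGYg : G (Y ω) = g (X ω) := by
        have h2 : V ω = G (Y ω) := by rw [hV]
        rw [← h2, haeω, hgfac ω]
      rw [hqω, Function.comp_apply, ← hGYg]
    · rintro ⟨f, hf, hYf⟩
      have hgm : Measurable (fun x => G (f x)) := hGc.measurable.comp hf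
      have hVae : V =ᵐ[P] fun ω => G (f (X ω)) := by
        filter_upwards [hYf] with ω hω
        rw [hV]
        simp only [hω]
      have hcomp_sm : StronglyMeasurable[MeasurableSpace.comap X inferInstance]
          (fun ω => G (f (X ω))) :=
        (hgm.comp (comap_measurable X)).stronglyMeasurable
      have hcomp_int : Integrable (fun ω => G (f (X ω))) P := by
        refine memLp_one_iff_integrable.1 ?_
        refine MemLp.of_bound ((hgm.comp hX).aestronglyMeasurable) 1 (ae_of_all _ fun ω => ?_)
        rw [Real.norm_eq_abs, abs_le]
        exact ⟨by linarith [G_nonneg hG (f (X ω))], G_le_one hG _⟩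
      have hCEV : CE =ᵐ[P] V := by
        have h1 : CE =ᵐ[P] P[(fun ω => G (f (X ω)))|MeasurableSpace.comap X inferInstance] :=
          condExp_congr_ae hVae
        rw [condExp_of_stronglyMeasurable hm hcomp_sm hcomp_int] at h1
        exact h1.trans hVae.symm
      have hVarEq : variance CE P = 1/12 := by
        rw [hVarCE]
        have heq : (fun ω => (CE ω - 1/2)^2) =ᵐ[P] fun ω => (V ω - 1/2)^2 := by
          filter_upwards [hCEV] with ω hω
          rw [hω]
        rw [integral_congr_ae heq]
        have hVsubint : Integrable (fun ω => V ω ^ 2 - V ω) P := by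
          have := hVmem2.integrable_sq.sub hVint
          exact this
        have e1 : ∫ ω, (V ω ^ 2 - V ω) + 1/4 ∂P
            = (∫ ω, V ω ^ 2 - V ω ∂P) + ∫ _, (1/4 : ℝ) ∂P :=
          integral_add hVsubint (integrable_const _)
        have e2 : ∫ ω, V ω ^ 2 - V ω ∂P = (∫ ω, V ω ^ 2 ∂P) - ∫ ω, V ω ∂P :=
          integral_sub hVmem2.integrable_sq hVint
        calc ∫ ω, (V ω - 1/2)^2 ∂P = ∫ ω, (V ω ^ 2 - V ω) + 1/4 ∂P := by
              refine integral_congr_ae (ae_of_all _ fun ω => ?_)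
              ring
          _ = 1/12 := by
              rw [e1, e2, hEV2, hEV]
              simp
              norm_num
      rw [hR2, hVarEq, hVarV]
      norm_num
end

section
/- Let X : Ω → ℝ^d and Y : Ω → ℝ be random variables with G, the distribution function of Y, continuous, and let ψ_C(s,t) := E[ E[1_{G(Y) ≤ s} | σ(X)] · E[1_{G(Y) ≤ t} | σ(X)] ]. Define Q(Y,X) := 4 ∫₀¹ ( ψ_C(t,t) + ψ_C(t,1−t) ) dt − 2 (Gini's gamma applied to ψ_C). Then Q(Y,X) = 2 ∫₀¹ E[ ( E[1_{G(Y) ≤ t} | σ(X)] − (1 − E[1_{G(Y) ≤ 1−t} | σ(X)]) )² ] dt ≥ 0, and Q(Y,X) = 0 if and only if for every t ∈ [0,1], E[1_{G(Y) ≤ t} | σ(X)] = 1 − E[1_{G(Y) ≤ 1−t} | σ(X)] almost surely (i.e., (X,Y) and (X,−Y) have the same copula); in particular Q(Y,X) = 0 if Y and X are independent. Moreover Q(Y,X) = 1 if and only if there exists a measurable f : ℝ^d → ℝ with P(Y = f(X)) = 1. -/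
open MeasureTheory ProbabilityTheory Set Filter
open scoped Topology ENNReal
set_option linter.unusedSectionVars false

namespace GiniAux
variable {Ω : Type*} [m0 : MeasurableSpace Ω] (P : Measure Ω) [IsProbabilityMeasure P]
  {Y : Ω → ℝ} {G : ℝ → ℝ}

lemma G_cdf (hY : Measurable Y) (hG : ∀ y, G y = (P {ω | Y ω ≤ y}).toReal) (y : ℝ) :
    G y = cdf (P.map Y) y := by
  have : IsProbabilityMeasure (P.map Y) := Measure.isProbabilityMeasure_map hY.aemeasurable
  rw [cdf_eq_real, measureReal_def, Measure.map_apply hY measurableSet_Iic, hG]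
  rfl

section Gfacts
variable (hY : Measurable Y) (hG : ∀ y, G y = (P {ω | Y ω ≤ y}).toReal)
include hY hG

lemma G_mono : Monotone G := by
  have := fun y => G_cdf P hY hG y
  intro a b hab
  rw [this a, this b]; exact monotone_cdf _ hab

lemma G_nonneg (y : ℝ) : 0 ≤ G y := by rw [G_cdf P hY hG y]; exact cdf_nonneg _ _

lemma G_le_one (y : ℝ) : G y ≤ 1 := by rw [G_cdf P hY hG y]; exact cdf_le_one _ _

lemma G_tendsto_atBot : Tendsto G atBot (𝓝 0) := by
  have : G = cdf (P.map Y) := funext (G_cdf P hY hG)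
  rw [this]; exact tendsto_cdf_atBot _

lemma G_tendsto_atTop : Tendsto G atTop (𝓝 1) := by
  have : G = cdf (P.map Y) := funext (G_cdf P hY hG)
  rw [this]; exact tendsto_cdf_atTop _

variable (hGc : Continuous G)
include hGc

/-- the probability integral transform is uniform -/
lemma unif : ∀ t ∈ Icc (0:ℝ) 1, (P {ω | G (Y ω) ≤ t}).toReal = t := by
  rintro t ⟨ht0, ht1⟩
  rcases eq_or_lt_of_le ht1 with h1 | h1
  · have : {ω | G (Y ω) ≤ t} = univ := by
      ext ω; simp only [mem_setOf_eq, mem_univ, iff_true]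
      exact h1 ▸ G_le_one P hY hG (Y ω)
    rw [this]
    simp [← h1]
  · set S : Set ℝ := {y | G y ≤ t} with hS
    have hSclosed : IsClosed S := isClosed_le hGc continuous_const
    have hkey : {ω | G (Y ω) ≤ t} = Y ⁻¹' S := rfl
    rcases eq_empty_or_nonempty S with hSe | hSne
    · -- S empty : G y > t for all y; G → 0 at bot forces t < 0 unless t = 0... show measure is 0 and t = 0
      have ht0' : t ≤ 0 := by
        by_contra hpos
        push_neg at hpos
        have := (G_tendsto_atBot P hY hG).eventually (eventually_lt_nhds hpos)
        rcases this.exists with ⟨y, hy⟩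
        exact absurd (le_of_lt hy) (fun h => (eq_empty_iff_forall_notMem.1 hSe) y h)
      have ht00 : t = 0 := le_antisymm ht0' ht0
      have : {ω | G (Y ω) ≤ t} = ∅ := by
        rw [hkey, hSe]; simp
      rw [this]; simp [ht00]
    · -- S nonempty, bounded above since t < 1
      obtain ⟨y₀, hy₀⟩ : ∃ y₀, t < G y₀ := by
        have := (G_tendsto_atTop P hY hG).eventually (eventually_gt_nhds h1)
        exact this.exists
      have hbdd : BddAbove S := by
        refine ⟨y₀, fun s hs => ?_⟩
        by_contra hc
        push_neg at hc
        exact absurd (le_trans (G_mono P hY hG hc.le) hs) (not_le.2 hy₀)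
      set b := sSup S with hb
      have hbS : b ∈ S := hSclosed.csSup_mem hSne hbdd
      have hGb_le : G b ≤ t := hbS
      have hGb_ge : t ≤ G b := by
        have hev : ∀ y ∈ Ioi b, t ≤ G y := by
          intro y hy
          by_contra hc
          push_neg at hc
          exact absurd (le_csSup hbdd (le_of_lt hc : G y ≤ t)) (not_le.2 hy)
        have htd : Tendsto G (𝓝[>] b) (𝓝 (G b)) :=
          (hGc.tendsto b).mono_left nhdsWithin_le_nhds
        exact ge_of_tendsto htd (eventually_nhdsWithin_of_forall hev)
      have hSeq : S = Iic b := by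
        ext y; constructor
        · intro hy; exact le_csSup hbdd hy
        · intro hy; exact le_trans (G_mono P hY hG hy) hGb_le
      rw [hkey, hSeq]
      have : Y ⁻¹' Iic b = {ω | Y ω ≤ b} := rfl
      rw [this, ← hG b]
      exact le_antisymm hGb_le hGb_ge

end Gfacts
section CondexpLayer
variable {Ω : Type*} [m0 : MeasurableSpace Ω] (P : Measure Ω) [IsProbabilityMeasure P]
  (G : ℝ → ℝ) (Y : Ω → ℝ)

/-- the indicator of `{G ∘ Y ≤ t}` -/
noncomputable def It (t : ℝ) : Ω → ℝ := fun ω' => if G (Y ω') ≤ t then (1:ℝ) else 0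

lemma It_eq_ind (t : ℝ) : It G Y t = ({ω | G (Y ω) ≤ t}).indicator (fun _ => (1:ℝ)) := by
  funext ω; simp [It, Set.indicator_apply, mem_setOf_eq]

variable {Y} {G}
variable (hY : Measurable Y) (hGc : Continuous G)
include hY hGc

lemma meas_set_It (t : ℝ) : MeasurableSet {ω | G (Y ω) ≤ t} :=
  measurableSet_le (hGc.measurable.comp hY) measurable_const

lemma measurable_It (t : ℝ) : Measurable (It G Y t) := by
  rw [It_eq_ind]; exact (measurable_const.indicator (meas_set_It (m0 := m0) hY hGc t))

lemma integrable_It (t : ℝ) : Integrable (It G Y t) P := by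
  rw [It_eq_ind]; exact (integrable_const (1:ℝ)).indicator (meas_set_It (m0 := m0) hY hGc t)

lemma It_nonneg (t : ℝ) (ω : Ω) : 0 ≤ It G Y t ω := by
  unfold It; positivity

lemma It_le_one (t : ℝ) (ω : Ω) : It G Y t ω ≤ 1 := by
  unfold It; split <;> norm_num

lemma integral_It (hG : ∀ y, G y = (P {ω | Y ω ≤ y}).toReal) {t : ℝ} (ht : t ∈ Icc (0:ℝ) 1) :
    ∫ ω, It G Y t ω ∂P = t := by
  rw [It_eq_ind, integral_indicator_const (1:ℝ) (meas_set_It (m0 := m0) hY hGc t), smul_eq_mul, mul_one]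
  exact GiniAux.unif P hY hG hGc t ht

section WithmX
variable (mX : MeasurableSpace Ω) (hm : mX ≤ m0)
include hm

lemma g_nonneg (t : ℝ) : 0 ≤ᵐ[P] P[It G Y t|mX] :=
  condExp_nonneg (Eventually.of_forall (It_nonneg (m0 := m0) hY hGc t))

lemma g_le_one (t : ℝ) : P[It G Y t|mX] ≤ᵐ[P] fun _ => 1 := by
  have h := condExp_mono (μ := P) (m := mX) (integrable_It (m0 := m0) P hY hGc t) (integrable_const (1:ℝ))
    (Eventually.of_forall (It_le_one (m0 := m0) hY hGc t))
  rwa [condExp_const hm (1:ℝ)] at h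

lemma g_abs_le_one (t : ℝ) : ∀ᵐ ω ∂P, |(P[It G Y t|mX]) ω| ≤ 1 := by
  filter_upwards [g_nonneg (m0 := m0) P hY hGc mX hm t, g_le_one (m0 := m0) P hY hGc mX hm t] with ω h0 h1
  have h0' : (0:ℝ) ≤ (P[It G Y t|mX]) ω := h0
  rw [abs_le]; exact ⟨by linarith, h1⟩

lemma g_aesm (t : ℝ) : AEStronglyMeasurable (P[It G Y t|mX]) P :=
  stronglyMeasurable_condExp.aestronglyMeasurable

lemma integral_g (hG : ∀ y, G y = (P {ω | Y ω ≤ y}).toReal) {t : ℝ} (ht : t ∈ Icc (0:ℝ) 1) :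
    ∫ ω, (P[It G Y t|mX]) ω ∂P = t := by
  rw [integral_condExp hm]; exact integral_It (m0 := m0) P hY hGc hG ht

lemma g_mono {s t : ℝ} (hst : s ≤ t) :
    ∀ᵐ ω ∂P, (P[It G Y s|mX]) ω ≤ (P[It G Y t|mX]) ω := by
  refine condExp_mono (integrable_It (m0 := m0) P hY hGc s) (integrable_It (m0 := m0) P hY hGc t)
    (Eventually.of_forall fun ω => ?_)
  unfold It
  split
  · rename_i h; rw [if_pos (le_trans h hst)]
  · split <;> norm_num

lemma integral_abs_g_sub (hG : ∀ y, G y = (P {ω | Y ω ≤ y}).toReal) {s t : ℝ}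
    (hs : s ∈ Icc (0:ℝ) 1) (ht : t ∈ Icc (0:ℝ) 1) :
    ∫ ω, |(P[It G Y t|mX]) ω - (P[It G Y s|mX]) ω| ∂P ≤ |t - s| := by
  wlog hst : s ≤ t generalizing s t
  · have h := this ht hs (le_of_not_ge hst)
    calc ∫ ω, |(P[It G Y t|mX]) ω - (P[It G Y s|mX]) ω| ∂P
        = ∫ ω, |(P[It G Y s|mX]) ω - (P[It G Y t|mX]) ω| ∂P := by
          congr 1; funext ω; rw [abs_sub_comm]
      _ ≤ |s - t| := h
      _ = |t - s| := abs_sub_comm _ _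
  have hmono := g_mono (m0 := m0) P hY hGc mX hm hst
  have h1 : ∫ ω, |(P[It G Y t|mX]) ω - (P[It G Y s|mX]) ω| ∂P
      = ∫ ω, ((P[It G Y t|mX]) ω - (P[It G Y s|mX]) ω) ∂P := by
    refine integral_congr_ae ?_
    filter_upwards [hmono] with ω hω
    rw [abs_of_nonneg (by linarith)]
  rw [h1, integral_sub integrable_condExp integrable_condExp,
    integral_g (m0 := m0) P hY hGc mX hm hG ht, integral_g (m0 := m0) P hY hGc mX hm hG hs]
  exact le_abs_self _

end WithmX
end CondexpLayer

section Analysis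
variable {Ω : Type*} [m0 : MeasurableSpace Ω] (P : Measure Ω) [IsProbabilityMeasure P]

lemma int_bdd {f : Ω → ℝ} (hf : AEStronglyMeasurable f P) {C : ℝ}
    (h : ∀ᵐ ω ∂P, |f ω| ≤ C) : Integrable f P :=
  Integrable.mono' (integrable_const C) hf (by simpa [Real.norm_eq_abs] using h)

lemma int_prod_bdd {a b : Ω → ℝ} (ham : AEStronglyMeasurable a P) (hbm : AEStronglyMeasurable b P)
    (ha1 : ∀ᵐ ω ∂P, |a ω| ≤ 1) (hb1 : ∀ᵐ ω ∂P, |b ω| ≤ 1) :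
    Integrable (fun ω => a ω * b ω) P := by
  refine int_bdd P (ham.mul hbm) (C := 1) ?_
  filter_upwards [ha1, hb1] with ω h1 h2
  rw [abs_mul]
  exact mul_le_one₀ h1 (abs_nonneg _) h2

lemma int_abs_sub_bdd {a b : Ω → ℝ} (ham : AEStronglyMeasurable a P) (hbm : AEStronglyMeasurable b P)
    (ha1 : ∀ᵐ ω ∂P, |a ω| ≤ 1) (hb1 : ∀ᵐ ω ∂P, |b ω| ≤ 1) :
    Integrable (fun ω => |a ω - b ω|) P := by
  have hasm : AEStronglyMeasurable (fun ω => |a ω - b ω|) P := by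
    simpa [Real.norm_eq_abs, Pi.sub_apply] using (ham.sub hbm).norm
  refine int_bdd P hasm (C := 2) ?_
  filter_upwards [ha1, hb1] with ω h1 h2
  rw [abs_abs]
  calc |a ω - b ω| ≤ |a ω| + |b ω| := abs_sub _ _
    _ ≤ 2 := by linarith

lemma abs_int_mul_sub {a b a' b' : Ω → ℝ}
    (ham : AEStronglyMeasurable a P) (hbm : AEStronglyMeasurable b P)
    (ha'm : AEStronglyMeasurable a' P) (hb'm : AEStronglyMeasurable b' P)
    (ha1 : ∀ᵐ ω ∂P, |a ω| ≤ 1) (hb1 : ∀ᵐ ω ∂P, |b ω| ≤ 1)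
    (ha'1 : ∀ᵐ ω ∂P, |a' ω| ≤ 1) (hb'1 : ∀ᵐ ω ∂P, |b' ω| ≤ 1) :
    |(∫ ω, a ω * b ω ∂P) - ∫ ω, a' ω * b' ω ∂P| ≤
      (∫ ω, |a ω - a' ω| ∂P) + ∫ ω, |b ω - b' ω| ∂P := by
  have hab := int_prod_bdd P ham hbm ha1 hb1
  have hab' := int_prod_bdd P ha'm hb'm ha'1 hb'1
  have haa' := int_abs_sub_bdd P ham ha'm ha1 ha'1
  have hbb' := int_abs_sub_bdd P hbm hb'm hb1 hb'1
  rw [← integral_sub hab hab']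
  have habs : |∫ ω, (a ω * b ω - a' ω * b' ω) ∂P| ≤ ∫ ω, |a ω * b ω - a' ω * b' ω| ∂P := by
    have h := norm_integral_le_integral_norm (μ := P) (f := fun ω => a ω * b ω - a' ω * b' ω)
    simpa [Real.norm_eq_abs] using h
  calc |∫ ω, (a ω * b ω - a' ω * b' ω) ∂P| ≤ ∫ ω, |a ω * b ω - a' ω * b' ω| ∂P := habs
    _ ≤ ∫ ω, (|a ω - a' ω| + |b ω - b' ω|) ∂P := by
        have hasm2 : AEStronglyMeasurable (fun ω => |a ω * b ω - a' ω * b' ω|) P := by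
          simpa [Real.norm_eq_abs, Pi.sub_apply] using ((ham.mul hbm).sub (ha'm.mul hb'm)).norm
        refine integral_mono_ae (int_bdd P hasm2 (C := 2) ?_) (haa'.add hbb') ?_
        · filter_upwards [ha1, hb1, ha'1, hb'1] with ω h1 h2 h3 h4
          rw [abs_abs]
          calc |a ω * b ω - a' ω * b' ω| ≤ |a ω * b ω| + |a' ω * b' ω| := abs_sub _ _
            _ ≤ 2 := by
              rw [abs_mul, abs_mul]
              have := mul_le_one₀ h1 (abs_nonneg _) h2
              have := mul_le_one₀ h3 (abs_nonneg _) h4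
              linarith
        · filter_upwards [hb1, ha'1] with ω h2 h3
          have hkey : a ω * b ω - a' ω * b' ω = (a ω - a' ω) * b ω + a' ω * (b ω - b' ω) := by ring
          rw [hkey]
          calc |(a ω - a' ω) * b ω + a' ω * (b ω - b' ω)|
              ≤ |(a ω - a' ω) * b ω| + |a' ω * (b ω - b' ω)| := abs_add_le _ _
            _ ≤ |a ω - a' ω| + |b ω - b' ω| := by
                rw [abs_mul, abs_mul]
                have h5 : |a ω - a' ω| * |b ω| ≤ |a ω - a' ω| * 1 :=
                  mul_le_mul_of_nonneg_left h2 (abs_nonneg _)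
                have h6 : |a' ω| * |b ω - b' ω| ≤ 1 * |b ω - b' ω| :=
                  mul_le_mul_of_nonneg_right h3 (abs_nonneg _)
                linarith
    _ = (∫ ω, |a ω - a' ω| ∂P) + ∫ ω, |b ω - b' ω| ∂P := integral_add haa' hbb'

end Analysis

section Calculus
open intervalIntegral

/-- a nonnegative continuous function on `[0,1]` with zero integral vanishes -/
lemma eq_zero_of_integral_zero {f : ℝ → ℝ} (hc : ContinuousOn f (Icc 0 1))
    (h0 : ∀ t ∈ Icc (0:ℝ) 1, 0 ≤ f t) (hI : ∫ t in (0:ℝ)..1, f t = 0) :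
    ∀ t ∈ Icc (0:ℝ) 1, f t = 0 := by
  by_contra hcon
  push_neg at hcon
  obtain ⟨t0, ht0, hft0⟩ := hcon
  have hc0 : 0 < f t0 := lt_of_le_of_ne (h0 t0 ht0) (Ne.symm hft0)
  have hnhds : {t | f t0 / 2 < f t} ∈ 𝓝[Icc (0:ℝ) 1] t0 :=
    (hc t0 ht0).eventually (eventually_gt_nhds (by linarith))
  rw [Metric.mem_nhdsWithin_iff] at hnhds
  obtain ⟨δ, hδ, hball⟩ := hnhds
  set a := max 0 (t0 - δ/2) with ha
  set b := min 1 (t0 + δ/2) with hb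
  have ha0 : 0 ≤ a := le_max_left _ _
  have hb1 : b ≤ 1 := min_le_left _ _
  have hat0 : a ≤ t0 := max_le ht0.1 (by linarith)
  have ht0b : t0 ≤ b := le_min ht0.2 (by linarith)
  have hab : a < b := by
    rcases lt_or_ge t0 1 with h | h
    · exact lt_of_le_of_lt hat0 (lt_min h (by linarith))
    · have ht01 : t0 = 1 := le_antisymm ht0.2 h
      have hbeq : (1:ℝ) ≤ b := le_min le_rfl (by rw [ht01]; linarith)
      have : a < 1 := max_lt one_pos (by rw [ht01]; linarith)
      linarith
  have hsub : Icc a b ⊆ Icc (0:ℝ) 1 := Icc_subset_Icc ha0 hb1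
  have hlow : ∀ t ∈ Icc a b, f t0 / 2 ≤ f t := by
    intro t ht
    refine le_of_lt (hball ⟨?_, hsub ht⟩)
    rw [Metric.mem_ball, Real.dist_eq, abs_lt]
    have h1 := ht.1; have h2 := ht.2
    have h3 : t0 - δ/2 ≤ a := le_max_right 0 (t0 - δ/2)
    have h4 : b ≤ t0 + δ/2 := min_le_right 1 (t0 + δ/2)
    constructor <;> linarith
  have hint : IntervalIntegrable f volume 0 1 := by
    apply ContinuousOn.intervalIntegrable
    rwa [uIcc_of_le (by norm_num : (0:ℝ) ≤ 1)]
  have hm : ∀ u v : ℝ, 0 ≤ u → u ≤ v → v ≤ 1 → IntervalIntegrable f volume u v := by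
    intro u v hu huv hv
    refine hint.mono_set ?_
    rw [uIcc_of_le huv, uIcc_of_le (by norm_num : (0:ℝ) ≤ 1)]
    exact Icc_subset_Icc hu hv
  have hsplit : ∫ t in (0:ℝ)..1, f t =
      (∫ t in (0:ℝ)..a, f t) + ((∫ t in a..b, f t) + ∫ t in b..1, f t) := by
    rw [integral_add_adjacent_intervals (hm a b ha0 hab.le hb1) (hm b 1 (ha0.trans hab.le) hb1 le_rfl),
      integral_add_adjacent_intervals (hm 0 a le_rfl ha0 (by linarith)) (hm a 1 ha0 (by linarith) le_rfl)]
  have h0a : 0 ≤ ∫ t in (0:ℝ)..a, f t :=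
    integral_nonneg ha0 (fun u hu => h0 u ⟨hu.1, hu.2.trans (by linarith)⟩)
  have hb1' : 0 ≤ ∫ t in b..1, f t :=
    integral_nonneg hb1 (fun u hu => h0 u ⟨(by linarith [hu.1] : (0:ℝ) ≤ u), hu.2⟩)
  have hmid : (b - a) * (f t0 / 2) ≤ ∫ t in a..b, f t := by
    have := integral_mono_on hab.le (intervalIntegrable_const (c := f t0 / 2))
      (hm a b ha0 hab.le hb1) hlow
    rwa [intervalIntegral.integral_const, smul_eq_mul] at this
  have : 0 < (b - a) * (f t0 / 2) := by
    apply mul_pos <;> linarith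
  linarith [hsplit ▸ hI]

lemma integral_two_min : ∫ t in (0:ℝ)..1, (2 * min t (1 - t)) = 1/2 := by
  have hcont : Continuous fun t : ℝ => 2 * min t (1 - t) :=
    continuous_const.mul (continuous_id.min (continuous_const.sub continuous_id))
  have hsplit : ∫ t in (0:ℝ)..1, (2 * min t (1 - t)) =
      (∫ t in (0:ℝ)..(1/2:ℝ), (2 * min t (1 - t))) +
        ∫ t in (1/2:ℝ)..1, (2 * min t (1 - t)) :=
    (integral_add_adjacent_intervals (hcont.intervalIntegrable _ _)
      (hcont.intervalIntegrable _ _)).symm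
  have h1 : ∫ t in (0:ℝ)..(1/2:ℝ), (2 * min t (1 - t)) = ∫ t in (0:ℝ)..(1/2:ℝ), 2 * t := by
    refine integral_congr fun t ht => ?_
    rw [uIcc_of_le (by norm_num : (0:ℝ) ≤ 1/2)] at ht
    rw [min_eq_left (by cases ht; linarith)]
  have h2 : ∫ t in (1/2:ℝ)..1, (2 * min t (1 - t)) = ∫ t in (1/2:ℝ)..1, (2 - 2 * t) := by
    refine integral_congr fun t ht => ?_
    rw [uIcc_of_le (by norm_num : (1/2:ℝ) ≤ 1)] at ht
    rw [min_eq_right (by cases ht; linarith)]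
    ring
  rw [hsplit, h1, h2]
  rw [intervalIntegral.integral_const_mul, integral_id]
  have : ∫ t in (1/2:ℝ)..1, (2 - 2 * t) =
      (∫ _ in (1/2:ℝ)..1, (2:ℝ)) - ∫ t in (1/2:ℝ)..1, 2 * t := by
    apply integral_sub (intervalIntegrable_const)
    exact (continuous_const.mul continuous_id).intervalIntegrable _ _
  rw [this, intervalIntegral.integral_const_mul, integral_id, intervalIntegral.integral_const, smul_eq_mul]
  norm_num

end Calculus


section Main
variable {Ω : Type*} (mX : MeasurableSpace Ω) [m0 : MeasurableSpace Ω] (P : Measure Ω)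
  [IsProbabilityMeasure P] (G : ℝ → ℝ) (Y : Ω → ℝ)

/-- conditional probability that `G (Y ω) ≤ t` given `mX` -/
noncomputable def gg (t : ℝ) : Ω → ℝ := P[It G Y t|mX]

/-- integrated squared deviation from reflection invariance -/
noncomputable def FF (t : ℝ) : ℝ :=
  ∫ ω, (gg mX P G Y t ω - (1 - gg mX P G Y (1-t) ω))^2 ∂P

variable {G Y}
variable (hY : Measurable Y) (hGc : Continuous G)
  (hG : ∀ y, G y = (P {ω | Y ω ≤ y}).toReal) (hm : mX ≤ m0)
include hY hGc hm

lemma gg_aesm (t : ℝ) : AEStronglyMeasurable (gg mX P G Y t) P :=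
  (stronglyMeasurable_condExp.mono hm).aestronglyMeasurable

lemma gg_abs_le_one (t : ℝ) : ∀ᵐ ω ∂P, |gg mX P G Y t ω| ≤ 1 :=
  g_abs_le_one (m0 := m0) P hY hGc mX hm t

lemma gg_nonneg (t : ℝ) : ∀ᵐ ω ∂P, 0 ≤ gg mX P G Y t ω := g_nonneg (m0 := m0) P hY hGc mX hm t

lemma gg_le_one (t : ℝ) : ∀ᵐ ω ∂P, gg mX P G Y t ω ≤ 1 := g_le_one (m0 := m0) P hY hGc mX hm t

lemma gg_int (t : ℝ) : Integrable (gg mX P G Y t) P := integrable_condExp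

include hG

lemma gg_integral {t : ℝ} (ht : t ∈ Icc (0:ℝ) 1) : ∫ ω, gg mX P G Y t ω ∂P = t :=
  integral_g (m0 := m0) P hY hGc mX hm hG ht

lemma gg_abs_sub {s t : ℝ} (hs : s ∈ Icc (0:ℝ) 1) (ht : t ∈ Icc (0:ℝ) 1) :
    ∫ ω, |gg mX P G Y t ω - gg mX P G Y s ω| ∂P ≤ |t - s| :=
  integral_abs_g_sub (m0 := m0) P hY hGc mX hm hG hs ht

lemma FF_expand {t : ℝ} (ht : t ∈ Icc (0:ℝ) 1) :
    FF mX P G Y t = (∫ ω, gg mX P G Y t ω * gg mX P G Y t ω ∂P)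
      + (∫ ω, gg mX P G Y (1-t) ω * gg mX P G Y (1-t) ω ∂P)
      + 2 * (∫ ω, gg mX P G Y t ω * gg mX P G Y (1-t) ω ∂P) - 1 := by
  have h1t : 1 - t ∈ Icc (0:ℝ) 1 := ⟨by linarith [ht.2], by linarith [ht.1]⟩
  set a := gg mX P G Y t with hadef
  set b := gg mX P G Y (1-t) with hbdef
  have ham := gg_aesm mX P hY hGc hm t
  have hbm := gg_aesm mX P hY hGc hm (1-t)
  have ha1 := gg_abs_le_one mX P hY hGc hm t
  have hb1 := gg_abs_le_one mX P hY hGc hm (1-t)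
  have haa := int_prod_bdd P ham ham ha1 ha1
  have hbb := int_prod_bdd P hbm hbm hb1 hb1
  have hab := int_prod_bdd P ham hbm ha1 hb1
  have hsum : Integrable (fun ω => a ω * a ω + b ω * b ω + 2 * (a ω * b ω)) P :=
    (haa.add hbb).add (hab.const_mul 2)
  have hlin : Integrable (fun ω => 2 * a ω + 2 * b ω - 1) P :=
    (((gg_int mX P hY hGc hm t).const_mul 2).add ((gg_int mX P hY hGc hm (1-t)).const_mul 2)).sub
      (integrable_const 1)
  have hFF : FF mX P G Y t = ∫ ω, ((a ω * a ω + b ω * b ω + 2 * (a ω * b ω))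
      - (2 * a ω + 2 * b ω - 1)) ∂P := by
    unfold FF
    exact integral_congr_ae (Eventually.of_forall fun ω => by ring)
  have h12 : Integrable (fun ω => a ω * a ω + b ω * b ω) P := haa.add hbb
  have h3 : Integrable (fun ω => 2 * (a ω * b ω)) P := hab.const_mul 2
  have h4 : Integrable (fun ω => 2 * a ω) P := (gg_int mX P hY hGc hm t).const_mul 2
  have h5 : Integrable (fun ω => 2 * b ω) P := (gg_int mX P hY hGc hm (1-t)).const_mul 2
  have h45 : Integrable (fun ω => 2 * a ω + 2 * b ω) P := h4.add h5
  rw [hFF, integral_sub hsum hlin, integral_add h12 h3,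
    integral_add haa hbb, integral_const_mul,
    integral_sub h45 (integrable_const 1),
    integral_add h4 h5,
    integral_const_mul, integral_const_mul, MeasureTheory.integral_const,
    gg_integral mX P hY hGc hG hm ht, gg_integral mX P hY hGc hG hm h1t]
  simp [measure_univ]
  ring

lemma FF_nonneg (t : ℝ) : 0 ≤ FF mX P G Y t :=
  integral_nonneg fun ω => sq_nonneg _

lemma FF_lip {s t : ℝ} (hs : s ∈ Icc (0:ℝ) 1) (ht : t ∈ Icc (0:ℝ) 1) :
    |FF mX P G Y t - FF mX P G Y s| ≤ 4 * |t - s| := by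
  have h1t : 1 - t ∈ Icc (0:ℝ) 1 := ⟨by linarith [ht.2], by linarith [ht.1]⟩
  have h1s : 1 - s ∈ Icc (0:ℝ) 1 := ⟨by linarith [hs.2], by linarith [hs.1]⟩
  set u : Ω → ℝ := fun ω => gg mX P G Y t ω - (1 - gg mX P G Y (1-t) ω) with hu
  set v : Ω → ℝ := fun ω => gg mX P G Y s ω - (1 - gg mX P G Y (1-s) ω) with hv
  have hum : AEStronglyMeasurable u P :=
    ((gg_aesm mX P hY hGc hm t).sub (aestronglyMeasurable_const.sub (gg_aesm mX P hY hGc hm (1-t))))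
  have hvm : AEStronglyMeasurable v P :=
    ((gg_aesm mX P hY hGc hm s).sub (aestronglyMeasurable_const.sub (gg_aesm mX P hY hGc hm (1-s))))
  have hu1 : ∀ᵐ ω ∂P, |u ω| ≤ 1 := by
    filter_upwards [gg_nonneg mX P hY hGc hm t, gg_le_one mX P hY hGc hm t,
      gg_nonneg mX P hY hGc hm (1-t), gg_le_one mX P hY hGc hm (1-t)] with ω p1 p2 p3 p4
    rw [abs_le]; constructor <;> simp only [hu] <;> nlinarith
  have hv1 : ∀ᵐ ω ∂P, |v ω| ≤ 1 := by
    filter_upwards [gg_nonneg mX P hY hGc hm s, gg_le_one mX P hY hGc hm s,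
      gg_nonneg mX P hY hGc hm (1-s), gg_le_one mX P hY hGc hm (1-s)] with ω p1 p2 p3 p4
    rw [abs_le]; constructor <;> simp only [hv] <;> nlinarith
  have hFFt : FF mX P G Y t = ∫ ω, u ω * u ω ∂P := by
    unfold FF; exact integral_congr_ae (Eventually.of_forall fun ω => by simp [hu, pow_two])
  have hFFs : FF mX P G Y s = ∫ ω, v ω * v ω ∂P := by
    unfold FF; exact integral_congr_ae (Eventually.of_forall fun ω => by simp [hv, pow_two])
  have hkey := abs_int_mul_sub P hum hum hvm hvm hu1 hu1 hv1 hv1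
  rw [← hFFt, ← hFFs] at hkey
  refine hkey.trans ?_
  have huv : ∫ ω, |u ω - v ω| ∂P ≤ 2 * |t - s| := by
    have hptw : ∀ᵐ ω ∂P, |u ω - v ω| ≤ |gg mX P G Y t ω - gg mX P G Y s ω|
        + |gg mX P G Y (1-t) ω - gg mX P G Y (1-s) ω| := by
      refine Eventually.of_forall fun ω => ?_
      simp only [hu, hv]
      have : gg mX P G Y t ω - (1 - gg mX P G Y (1-t) ω)
          - (gg mX P G Y s ω - (1 - gg mX P G Y (1-s) ω))
          = (gg mX P G Y t ω - gg mX P G Y s ω)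
            + (gg mX P G Y (1-t) ω - gg mX P G Y (1-s) ω) := by ring
      rw [this]; exact abs_add_le _ _
    have hi1 : Integrable (fun ω => |gg mX P G Y t ω - gg mX P G Y s ω|) P :=
      int_abs_sub_bdd P (gg_aesm mX P hY hGc hm t) (gg_aesm mX P hY hGc hm s)
        (gg_abs_le_one mX P hY hGc hm t) (gg_abs_le_one mX P hY hGc hm s)
    have hi2 : Integrable (fun ω => |gg mX P G Y (1-t) ω - gg mX P G Y (1-s) ω|) P :=
      int_abs_sub_bdd P (gg_aesm mX P hY hGc hm (1-t)) (gg_aesm mX P hY hGc hm (1-s))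
        (gg_abs_le_one mX P hY hGc hm (1-t)) (gg_abs_le_one mX P hY hGc hm (1-s))
    have hiuv : Integrable (fun ω => |u ω - v ω|) P := int_abs_sub_bdd P hum hvm hu1 hv1
    calc ∫ ω, |u ω - v ω| ∂P
        ≤ ∫ ω, (|gg mX P G Y t ω - gg mX P G Y s ω|
            + |gg mX P G Y (1-t) ω - gg mX P G Y (1-s) ω|) ∂P :=
          integral_mono_ae hiuv (hi1.add hi2) hptw
      _ = (∫ ω, |gg mX P G Y t ω - gg mX P G Y s ω| ∂P)
            + ∫ ω, |gg mX P G Y (1-t) ω - gg mX P G Y (1-s) ω| ∂P := integral_add hi1 hi2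
      _ ≤ |t - s| + |(1-t) - (1-s)| :=
          add_le_add (gg_abs_sub mX P hY hGc hG hm hs ht) (gg_abs_sub mX P hY hGc hG hm h1s h1t)
      _ = 2 * |t - s| := by rw [show (1-t) - (1-s) = -(t - s) by ring, abs_neg]; ring
  linarith

end Main



lemma zero_one_aux {p q : ℝ} (hp0 : 0 ≤ p) (hp1 : p ≤ 1) (hq0 : 0 ≤ q) (hq1 : q ≤ 1)
    (h : p + q = (p - q)^2) : (p = 0 ∨ p = 1) ∧ (q = 0 ∨ q = 1) := by
  have hex : (p - q)^2 = p*p - 2*(p*q) + q*q := by ring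
  have hpp : p*p ≤ p := by nlinarith
  have hqq : q*q ≤ q := by nlinarith
  have hpq0 : 0 ≤ p*q := mul_nonneg hp0 hq0
  have hpq : p*q = 0 := by nlinarith
  have hp : p*p = p := by nlinarith
  have hq : q*q = q := by nlinarith
  constructor
  · rcases mul_eq_zero.1 (show p * (p - 1) = 0 by nlinarith) with h' | h'
    · exact Or.inl h'
    · exact Or.inr (by linarith [sub_eq_zero.1 h'])
  · rcases mul_eq_zero.1 (show q * (q - 1) = 0 by nlinarith) with h' | h'
    · exact Or.inl h'
    · exact Or.inr (by linarith [sub_eq_zero.1 h'])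

lemma min_mem_Icc {t : ℝ} (ht : t ∈ Icc (0:ℝ) 1) : min t (1-t) ∈ Icc (0:ℝ) 1 := by
  rcases le_total t (1-t) with h | h
  · rw [min_eq_left h]; exact ht
  · rw [min_eq_right h]; exact ⟨by linarith [ht.2], by linarith [ht.1]⟩

lemma max_mem_Icc {t : ℝ} (ht : t ∈ Icc (0:ℝ) 1) : max t (1-t) ∈ Icc (0:ℝ) 1 := by
  rcases le_total t (1-t) with h | h
  · rw [max_eq_right h]; exact ⟨by linarith [ht.2], by linarith [ht.1]⟩
  · rw [max_eq_left h]; exact ht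

section Main2
variable {Ω : Type*} (mX : MeasurableSpace Ω) [m0 : MeasurableSpace Ω] (P : Measure Ω)
  [IsProbabilityMeasure P] {G : ℝ → ℝ} {Y : Ω → ℝ}
variable (hY : Measurable Y) (hGc : Continuous G)
  (hG : ∀ y, G y = (P {ω | Y ω ≤ y}).toReal) (hm : mX ≤ m0)
include hY hGc hm

lemma FF_eq_zero_iff (t : ℝ) :
    FF mX P G Y t = 0 ↔ gg mX P G Y t =ᵐ[P] fun ω => 1 - gg mX P G Y (1-t) ω := by
  set u : Ω → ℝ := fun ω => gg mX P G Y t ω - (1 - gg mX P G Y (1-t) ω) with hu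
  have hum : AEStronglyMeasurable u P :=
    ((gg_aesm mX P hY hGc hm t).sub (aestronglyMeasurable_const.sub (gg_aesm mX P hY hGc hm (1-t))))
  have husqm : AEStronglyMeasurable (fun ω => u ω ^ 2) P := by
    simpa [pow_two, Pi.mul_def] using hum.mul hum
  have hu1 : ∀ᵐ ω ∂P, |u ω| ≤ 1 := by
    filter_upwards [gg_nonneg mX P hY hGc hm t, gg_le_one mX P hY hGc hm t,
      gg_nonneg mX P hY hGc hm (1-t), gg_le_one mX P hY hGc hm (1-t)] with ω p1 p2 p3 p4
    rw [abs_le]; constructor <;> simp only [hu] <;> nlinarith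
  have husq : Integrable (fun ω => u ω ^ 2) P := by
    refine int_bdd P husqm (C := 1) ?_
    filter_upwards [hu1] with ω h
    rw [abs_pow]
    calc |u ω| ^ 2 ≤ 1 ^ 2 := pow_le_pow_left₀ (abs_nonneg _) h 2
      _ = 1 := one_pow 2
  have hFFu : FF mX P G Y t = ∫ ω, u ω ^ 2 ∂P := rfl
  rw [hFFu, integral_eq_zero_iff_of_nonneg_ae (Eventually.of_forall fun ω => sq_nonneg (u ω)) husq]
  constructor
  · intro h
    filter_upwards [h] with ω hω
    have h2 : u ω ^ 2 = 0 := by simpa using hω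
    have h3 : u ω = 0 := by
      have := sq_nonneg (u ω)
      nlinarith [sq_abs (u ω), abs_nonneg (u ω), sq_nonneg (|u ω| - 1), sq_nonneg (|u ω| + 1)]
    simpa [hu, sub_eq_zero] using h3
  · intro h
    filter_upwards [h] with ω hω
    simp only [hu, Pi.zero_apply]
    rw [show gg mX P G Y t ω - (1 - gg mX P G Y (1-t) ω) = 0 by rw [hω]; ring]
    norm_num

lemma u_eq_mM (t : ℝ) (ω : Ω) :
    gg mX P G Y t ω - (1 - gg mX P G Y (1-t) ω) =
      gg mX P G Y (min t (1-t)) ω - (1 - gg mX P G Y (max t (1-t)) ω) := by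
  rcases le_total t (1-t) with h | h
  · rw [min_eq_left h, max_eq_right h]
  · rw [min_eq_right h, max_eq_left h]; ring

lemma FF_integrand_rw (t : ℝ) :
    FF mX P G Y t = ∫ ω, (gg mX P G Y (min t (1-t)) ω
      - (1 - gg mX P G Y (max t (1-t)) ω))^2 ∂P := by
  unfold FF
  exact integral_congr_ae (Eventually.of_forall fun ω =>
    congrArg (fun x : ℝ => x ^ 2) (u_eq_mM mX P hY hGc hm t ω))

include hG

lemma integral_p_add_q {t : ℝ} (ht : t ∈ Icc (0:ℝ) 1) :
    ∫ ω, (gg mX P G Y (min t (1-t)) ω + (1 - gg mX P G Y (max t (1-t)) ω)) ∂P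
      = 2 * min t (1-t) := by
  have hmm : min t (1-t) + max t (1-t) = 1 := by rw [min_add_max]; ring
  have h2 : Integrable (fun ω => 1 - gg mX P G Y (max t (1-t)) ω) P :=
    (integrable_const 1).sub (gg_int mX P hY hGc hm _)
  rw [integral_add (gg_int mX P hY hGc hm _) h2,
    integral_sub (integrable_const 1) (gg_int mX P hY hGc hm _),
    gg_integral mX P hY hGc hG hm (min_mem_Icc ht), gg_integral mX P hY hGc hG hm (max_mem_Icc ht),
    MeasureTheory.integral_const]
  simp [measure_univ]
  linarith

lemma FF_le {t : ℝ} (ht : t ∈ Icc (0:ℝ) 1) : FF mX P G Y t ≤ 2 * min t (1-t) := by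
  set m := min t (1-t)
  set M := max t (1-t)
  have h2 : Integrable (fun ω => gg mX P G Y m ω + (1 - gg mX P G Y M ω)) P :=
    (gg_int mX P hY hGc hm _).add ((integrable_const 1).sub (gg_int mX P hY hGc hm _))
  have hsqm : AEStronglyMeasurable (fun ω => (gg mX P G Y m ω - (1 - gg mX P G Y M ω))^2) P := by
    have h : AEStronglyMeasurable (fun ω => gg mX P G Y m ω - (1 - gg mX P G Y M ω)) P :=
      ((gg_aesm mX P hY hGc hm m).sub
        (aestronglyMeasurable_const.sub (gg_aesm mX P hY hGc hm M)))
    simpa [pow_two, Pi.mul_def] using h.mul h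
  have hsqi : Integrable (fun ω => (gg mX P G Y m ω - (1 - gg mX P G Y M ω))^2) P := by
    refine int_bdd P hsqm (C := 4) ?_
    filter_upwards [gg_nonneg mX P hY hGc hm m, gg_le_one mX P hY hGc hm m,
      gg_nonneg mX P hY hGc hm M, gg_le_one mX P hY hGc hm M] with ω p1 p2 p3 p4
    rw [abs_le]; constructor <;> nlinarith
  rw [FF_integrand_rw mX P hY hGc hm t, ← integral_p_add_q mX P hY hGc hG hm ht]
  refine integral_mono_ae hsqi h2 ?_
  filter_upwards [gg_nonneg mX P hY hGc hm m, gg_le_one mX P hY hGc hm m,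
    gg_nonneg mX P hY hGc hm M, gg_le_one mX P hY hGc hm M] with ω p1 p2 p3 p4
  nlinarith

lemma FF_eq_case {t : ℝ} (ht : t ∈ Icc (0:ℝ) 1) (heq : FF mX P G Y t = 2 * min t (1-t)) :
    (∀ᵐ ω ∂P, gg mX P G Y (min t (1-t)) ω = 0 ∨ gg mX P G Y (min t (1-t)) ω = 1) ∧
    (∀ᵐ ω ∂P, gg mX P G Y (max t (1-t)) ω = 0 ∨ gg mX P G Y (max t (1-t)) ω = 1) := by
  set m := min t (1-t)
  set M := max t (1-t)
  set w : Ω → ℝ := fun ω => (gg mX P G Y m ω + (1 - gg mX P G Y M ω))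
    - (gg mX P G Y m ω - (1 - gg mX P G Y M ω))^2 with hw
  have h2 : Integrable (fun ω => gg mX P G Y m ω + (1 - gg mX P G Y M ω)) P :=
    (gg_int mX P hY hGc hm _).add ((integrable_const 1).sub (gg_int mX P hY hGc hm _))
  have hsqm : AEStronglyMeasurable (fun ω => (gg mX P G Y m ω - (1 - gg mX P G Y M ω))^2) P := by
    have h : AEStronglyMeasurable (fun ω => gg mX P G Y m ω - (1 - gg mX P G Y M ω)) P :=
      ((gg_aesm mX P hY hGc hm m).sub
        (aestronglyMeasurable_const.sub (gg_aesm mX P hY hGc hm M)))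
    simpa [pow_two, Pi.mul_def] using h.mul h
  have hsqi : Integrable (fun ω => (gg mX P G Y m ω - (1 - gg mX P G Y M ω))^2) P := by
    refine int_bdd P hsqm (C := 4) ?_
    filter_upwards [gg_nonneg mX P hY hGc hm m, gg_le_one mX P hY hGc hm m,
      gg_nonneg mX P hY hGc hm M, gg_le_one mX P hY hGc hm M] with ω p1 p2 p3 p4
    rw [abs_le]; constructor <;> nlinarith
  have hwi : Integrable w P := h2.sub hsqi
  have hwnn : 0 ≤ᵐ[P] w := by
    filter_upwards [gg_nonneg mX P hY hGc hm m, gg_le_one mX P hY hGc hm m,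
      gg_nonneg mX P hY hGc hm M, gg_le_one mX P hY hGc hm M] with ω p1 p2 p3 p4
    simp only [hw, Pi.zero_apply]
    nlinarith
  have hwint : ∫ ω, w ω ∂P = 0 := by
    rw [hw]
    rw [integral_sub h2 hsqi, integral_p_add_q mX P hY hGc hG hm ht,
      ← FF_integrand_rw mX P hY hGc hm t, heq, sub_self]
  have hw0 : w =ᵐ[P] 0 := (integral_eq_zero_iff_of_nonneg_ae hwnn hwi).1 hwint
  have hkey : ∀ᵐ ω ∂P, (gg mX P G Y m ω = 0 ∨ gg mX P G Y m ω = 1) ∧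
      (gg mX P G Y M ω = 0 ∨ gg mX P G Y M ω = 1) := by
    filter_upwards [hw0, gg_nonneg mX P hY hGc hm m, gg_le_one mX P hY hGc hm m,
      gg_nonneg mX P hY hGc hm M, gg_le_one mX P hY hGc hm M] with ω h0 p1 p2 p3 p4
    simp only [hw, Pi.zero_apply] at h0
    have heqn : gg mX P G Y m ω + (1 - gg mX P G Y M ω)
        = (gg mX P G Y m ω - (1 - gg mX P G Y M ω))^2 := by linarith
    obtain ⟨hp, hq⟩ := zero_one_aux p1 p2 (by linarith) (by linarith) heqn
    refine ⟨hp, ?_⟩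
    rcases hq with h | h
    · exact Or.inr (by linarith)
    · exact Or.inl (by linarith)
  exact ⟨hkey.mono fun ω h => h.1, hkey.mono fun ω h => h.2⟩

lemma gg_two_valued (hFFall : ∀ t ∈ Icc (0:ℝ) 1, FF mX P G Y t = 2 * min t (1-t)) :
    ∀ s ∈ Icc (0:ℝ) 1, ∀ᵐ ω ∂P, gg mX P G Y s ω = 0 ∨ gg mX P G Y s ω = 1 := by
  intro s hs
  have h := FF_eq_case mX P hY hGc hG hm hs (hFFall s hs)
  rcases le_total s (1-s) with hcmp | hcmp
  · have := h.1; rwa [min_eq_left hcmp] at this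
  · have := h.2; rwa [max_eq_left hcmp] at this

end Main2



section Level
variable {Ω : Type*} [m0 : MeasurableSpace Ω] (P : Measure Ω) [IsProbabilityMeasure P]
  {Y : Ω → ℝ} {G : ℝ → ℝ}
variable (hY : Measurable Y) (hG : ∀ y, G y = (P {ω | Y ω ≤ y}).toReal) (hGc : Continuous G)
include hY hG hGc

lemma level (r : ℝ) : ∀ᵐ ω ∂P, (Y ω ≤ r ↔ G (Y ω) ≤ G r) := by
  set T : Set ℝ := {y | G y ≤ G r ∧ r < y} with hT
  have hconst : ∀ y ∈ T, G y = G r := fun y hy => le_antisymm hy.1 (G_mono P hY hG hy.2.le)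
  have hTnull : P (Y ⁻¹' T) = 0 := by
    rcases eq_empty_or_nonempty T with hTe | hTne
    · rw [hTe]; simp
    · by_cases hbdd : BddAbove T
      · set b := sSup T with hb
        have hbT : b ∈ closure T := csSup_mem_closure hTne hbdd
        have hGb : G b = G r :=
          (closure_minimal (fun y hy => hconst y hy)
            (isClosed_eq hGc continuous_const)) hbT
        have hrb : r ≤ b := by
          obtain ⟨y, hy⟩ := hTne
          exact le_trans hy.2.le (le_csSup hbdd hy)
        have hsub : T ⊆ Ioc r b := fun y hy => ⟨hy.2, le_csSup hbdd hy⟩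
        have hIoc : Y ⁻¹' (Ioc r b) = {ω | Y ω ≤ b} \ {ω | Y ω ≤ r} := by
          ext ω
          simp only [mem_preimage, mem_Ioc, mem_diff, mem_setOf_eq, not_le]
          tauto
        have hPb : P {ω | Y ω ≤ b} = P {ω | Y ω ≤ r} := by
          have h1 : (P {ω | Y ω ≤ b}).toReal = (P {ω | Y ω ≤ r}).toReal := by
            rw [← hG, ← hG, hGb]
          exact (ENNReal.toReal_eq_toReal_iff' (measure_ne_top P _) (measure_ne_top P _)).1 h1
        have hmeasr : MeasurableSet {ω | Y ω ≤ r} := hY measurableSet_Iic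
        have hss : {ω | Y ω ≤ r} ⊆ {ω | Y ω ≤ b} := fun ω h => le_trans h hrb
        have hdiff : P ({ω | Y ω ≤ b} \ {ω | Y ω ≤ r}) = 0 := by
          rw [measure_diff hss hmeasr.nullMeasurableSet (measure_ne_top P _), hPb, tsub_self]
        refine le_antisymm ?_ (zero_le)
        calc P (Y ⁻¹' T) ≤ P (Y ⁻¹' (Ioc r b)) := measure_mono (preimage_mono hsub)
          _ = 0 := by rw [hIoc, hdiff]
      · have hsup : ∀ z, r < z → z ∈ T := by
          intro z hz
          rw [not_bddAbove_iff] at hbdd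
          obtain ⟨y, hyT, hzy⟩ := hbdd z
          exact ⟨le_trans (G_mono P hY hG hzy.le) (hconst y hyT).le, hz⟩
        have hGr1 : G r = 1 := by
          have hev : ∀ᶠ z in atTop, G z = G r := by
            filter_upwards [eventually_gt_atTop r] with z hz
            exact hconst z (hsup z hz)
          have h1 : Tendsto G atTop (𝓝 (G r)) :=
            Tendsto.congr' (by filter_upwards [hev] with z hz using hz.symm) tendsto_const_nhds
          exact tendsto_nhds_unique h1 (G_tendsto_atTop P hY hG)
        have hP1 : P {ω | Y ω ≤ r} = 1 := by
          have := hG r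
          rw [hGr1] at this
          exact ((ENNReal.toReal_eq_one_iff _).1 this.symm)
        have hmr : MeasurableSet {ω | Y ω ≤ r} := hY measurableSet_Iic
        have hcompl : P ({ω | Y ω ≤ r}ᶜ) = 0 := by
          rw [measure_compl hmr (measure_ne_top P _), measure_univ, hP1, tsub_self]
        refine le_antisymm ?_ (zero_le)
        calc P (Y ⁻¹' T) ≤ P ({ω | Y ω ≤ r}ᶜ) :=
              measure_mono (fun ω h => not_le.2 h.2)
          _ = 0 := hcompl
  rw [ae_iff]
  refine measure_mono_null (fun ω hω => ?_) hTnull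
  simp only [mem_setOf_eq] at hω
  by_cases hle : Y ω ≤ r
  · exact absurd (iff_of_true hle (G_mono P hY hG hle)) hω
  · have hright : G (Y ω) ≤ G r := by
      by_contra hc
      exact hω (iff_of_false hle hc)
    exact ⟨hright, not_le.1 hle⟩

end Level

lemma ereal_iInf_rat (y : ℝ) :
    (⨅ q : ℚ, if y ≤ (q:ℝ) then (((q:ℝ)):EReal) else ⊤) = (y : EReal) := by
  apply le_antisymm
  · by_contra hcon
    push_neg at hcon
    obtain ⟨q, hq1, hq2⟩ := EReal.lt_iff_exists_rat_btwn.1 hcon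
    have hyq : y ≤ (q:ℝ) := by exact_mod_cast hq1.le
    have hle : (⨅ q : ℚ, if y ≤ (q:ℝ) then (((q:ℝ)):EReal) else ⊤) ≤ (((q:ℝ)):EReal) :=
      iInf_le_of_le q (by rw [if_pos hyq])
    exact absurd (lt_of_le_of_lt hle hq2) (lt_irrefl _)
  · refine le_iInf fun q => ?_
    by_cases h : y ≤ (q:ℝ)
    · rw [if_pos h]; exact_mod_cast h
    · rw [if_neg h]; exact le_top

lemma exists_factor {Ω : Type*} [m0 : MeasurableSpace Ω] (P : Measure Ω) {Y : Ω → ℝ}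
    {d : ℕ} {X : Ω → (Fin d → ℝ)}
    (hsets : ∀ q : ℚ, ∃ S : Set (Fin d → ℝ), MeasurableSet S ∧
      ∀ᵐ ω ∂P, (Y ω ≤ (q:ℝ) ↔ X ω ∈ S)) :
    ∃ f : (Fin d → ℝ) → ℝ, Measurable f ∧ ∀ᵐ ω ∂P, Y ω = f (X ω) := by
  classical
  choose S hSmeas hSae using hsets
  set F : (Fin d → ℝ) → EReal := fun x => ⨅ q : ℚ, if x ∈ S q then (((q:ℝ)):EReal) else ⊤ with hF
  have hFm : Measurable F :=
    Measurable.iInf fun q => Measurable.ite (hSmeas q) measurable_const measurable_const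
  refine ⟨fun x => (F x).toReal, measurable_ereal_toReal.comp hFm, ?_⟩
  have hall : ∀ᵐ ω ∂P, ∀ q : ℚ, (Y ω ≤ (q:ℝ) ↔ X ω ∈ S q) := ae_all_iff.2 hSae
  filter_upwards [hall] with ω hω
  have hkey : F (X ω) = ((Y ω : ℝ) : EReal) := by
    rw [hF]
    have hcong : ∀ q : ℚ, (if X ω ∈ S q then (((q:ℝ)):EReal) else ⊤)
        = if Y ω ≤ (q:ℝ) then (((q:ℝ)):EReal) else ⊤ := by
      intro q
      by_cases h : Y ω ≤ (q:ℝ)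
      · rw [if_pos ((hω q).1 h), if_pos h]
      · rw [if_neg (fun hmem => h ((hω q).2 hmem)), if_neg h]
    calc (⨅ q : ℚ, if X ω ∈ S q then (((q:ℝ)):EReal) else ⊤)
        = ⨅ q : ℚ, (if Y ω ≤ (q:ℝ) then (((q:ℝ)):EReal) else ⊤) := iInf_congr hcong
      _ = ((Y ω : ℝ) : EReal) := ereal_iInf_rat _
  rw [hkey]
  simp



lemma ind_sq_aux {u t : ℝ} :
    ((if u ≤ t then (1:ℝ) else 0) - (1 - (if u ≤ 1-t then (1:ℝ) else 0)))^2
      = (if u ≤ min t (1-t) then (1:ℝ) else 0)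
        + (1 - (if u ≤ max t (1-t) then (1:ℝ) else 0)) := by
  rcases le_total t (1-t) with h | h
  · rw [min_eq_left h, max_eq_right h]
    by_cases h1 : u ≤ t <;> by_cases h2 : u ≤ 1-t
    · rw [if_pos h1, if_pos h2]; norm_num
    · exact absurd (h1.trans h) h2
    · rw [if_neg h1, if_pos h2]; norm_num
    · rw [if_neg h1, if_neg h2]; norm_num
  · rw [min_eq_right h, max_eq_left h]
    by_cases h1 : u ≤ t <;> by_cases h2 : u ≤ 1-t
    · rw [if_pos h1, if_pos h2]; norm_num
    · rw [if_pos h1, if_neg h2]; norm_num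
    · exact absurd (h2.trans h) h1
    · rw [if_neg h1, if_neg h2]; norm_num

section Main3
variable {Ω : Type*} (mX : MeasurableSpace Ω) [m0 : MeasurableSpace Ω] (P : Measure Ω)
  [IsProbabilityMeasure P] {G : ℝ → ℝ} {Y : Ω → ℝ}
variable (hY : Measurable Y) (hGc : Continuous G)
  (hG : ∀ y, G y = (P {ω | Y ω ≤ y}).toReal) (hm : mX ≤ m0)
include hY hGc hm

lemma It_self_mul (s : ℝ) (ω : Ω) : It G Y s ω = 0 ∨ It G Y s ω = 1 := by
  unfold It; split
  · exact Or.inr rfl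
  · exact Or.inl rfl

lemma indicator_extract {s : ℝ}
    (h01 : ∀ᵐ ω ∂P, gg mX P G Y s ω = 0 ∨ gg mX P G Y s ω = 1) :
    ∃ A : Set Ω, MeasurableSet[mX] A ∧ ∀ᵐ ω ∂P, (G (Y ω) ≤ s ↔ ω ∈ A) := by
  classical
  have hgsm : StronglyMeasurable[mX] (gg mX P G Y s) := stronglyMeasurable_condExp
  set A : Set Ω := (gg mX P G Y s) ⁻¹' {1} with hA
  have hAmX : MeasurableSet[mX] A := hgsm.measurable (measurableSet_singleton 1)
  have hAm0 : MeasurableSet A := hm _ hAmX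
  set χ : Ω → ℝ := A.indicator (fun _ => (1:ℝ)) with hχ
  have hχint : Integrable χ P := (integrable_const (1:ℝ)).indicator hAm0
  have hga : gg mX P G Y s =ᵐ[P] χ := by
    filter_upwards [h01] with ω h
    rcases h with h | h
    · have hnotmem : ω ∉ A := by
        simp only [hA, mem_preimage, mem_singleton_iff]
        rw [h]; norm_num
      rw [h, hχ, indicator_of_notMem hnotmem]
    · have hmem : ω ∈ A := by simp only [hA, mem_preimage, mem_singleton_iff, h]
      rw [h, hχ, indicator_of_mem hmem]
  have hItint := integrable_It (m0 := m0) P hY hGc s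
  set c : ℝ := (P A).toReal with hc
  have hI1 : ∫ ω, χ ω ∂P = c := by
    rw [hχ, integral_indicator_const (1:ℝ) hAm0, smul_eq_mul, mul_one, measureReal_def, hc]
  have hga' : (P[It G Y s|mX]) =ᵐ[P] χ := hga
  have hI2 : ∫ ω, It G Y s ω ∂P = c := by
    rw [← integral_condExp hm (f := It G Y s), integral_congr_ae hga', hI1]
  have hprod_eq : (fun ω => It G Y s ω * χ ω) = A.indicator (It G Y s) := by
    funext ω
    by_cases hmem : ω ∈ A
    · rw [hχ, indicator_of_mem hmem, indicator_of_mem hmem, mul_one]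
    · rw [hχ, indicator_of_notMem hmem, indicator_of_notMem hmem, mul_zero]
  have hprodint : Integrable (fun ω => It G Y s ω * χ ω) P := by
    rw [hprod_eq]; exact hItint.indicator hAm0
  have hI3 : ∫ ω, It G Y s ω * χ ω ∂P = c := by
    rw [hprod_eq, integral_indicator hAm0, ← setIntegral_condExp hm hItint hAmX]
    calc ∫ ω in A, (P[It G Y s|mX]) ω ∂P = ∫ ω in A, χ ω ∂P :=
          integral_congr_ae (ae_restrict_of_ae hga)
      _ = ∫ _ in A, (1:ℝ) ∂P :=
          setIntegral_congr_fun hAm0 (fun ω hω => by rw [hχ, indicator_of_mem hω])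
      _ = c := by rw [setIntegral_const, smul_eq_mul, mul_one, measureReal_def, hc]
  have hχ01 : ∀ ω, χ ω = 0 ∨ χ ω = 1 := by
    intro ω
    by_cases hmem : ω ∈ A
    · exact Or.inr (by rw [hχ, indicator_of_mem hmem])
    · exact Or.inl (by rw [hχ, indicator_of_notMem hmem])
  have hptw : ∀ ω, (It G Y s ω - χ ω)^2 = It G Y s ω - 2*(It G Y s ω * χ ω) + χ ω := by
    intro ω
    rcases It_self_mul mX hY hGc hm s ω with hx | hx <;>
      rcases hχ01 ω with hy | hy <;> rw [hx, hy] <;> norm_num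
  have hi5 : Integrable (fun ω => It G Y s ω - 2*(It G Y s ω * χ ω)) P :=
    hItint.sub (hprodint.const_mul 2)
  have hsq0 : ∫ ω, (It G Y s ω - χ ω)^2 ∂P = 0 := by
    rw [integral_congr_ae (Eventually.of_forall hptw), integral_add hi5 hχint,
      integral_sub hItint (hprodint.const_mul 2), integral_const_mul, hI1, hI2, hI3]
    ring
  have hsqint : Integrable (fun ω => (It G Y s ω - χ ω)^2) P := by
    refine int_bdd P ?_ (C := 4) ?_
    · have hd : AEStronglyMeasurable (fun ω => It G Y s ω - χ ω) P :=
        ((measurable_It (m0 := m0) hY hGc s).aestronglyMeasurable).sub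
          ((measurable_const.indicator hAm0).aestronglyMeasurable)
      simpa [pow_two, Pi.mul_def] using hd.mul hd
    · refine Eventually.of_forall fun ω => ?_
      rcases It_self_mul mX hY hGc hm s ω with hx | hx <;>
        rcases hχ01 ω with hy | hy <;> rw [hx, hy] <;> norm_num
  have hae0 : (fun ω => (It G Y s ω - χ ω)^2) =ᵐ[P] 0 :=
    (integral_eq_zero_iff_of_nonneg_ae (Eventually.of_forall fun ω => sq_nonneg _) hsqint).1 hsq0
  refine ⟨A, hAmX, ?_⟩
  filter_upwards [hae0] with ω h
  have hsqz : (It G Y s ω - χ ω)^2 = 0 := by simpa using h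
  have heq : It G Y s ω = χ ω := by nlinarith [sq_nonneg (It G Y s ω - χ ω)]
  constructor
  · intro hle
    have h1 : It G Y s ω = 1 := by unfold It; rw [if_pos hle]
    by_contra hmem
    rw [h1, hχ, indicator_of_notMem hmem] at heq
    norm_num at heq
  · intro hmem
    rw [hχ, indicator_of_mem hmem] at heq
    by_contra hle
    rw [show It G Y s ω = 0 from by unfold It; rw [if_neg hle]] at heq
    norm_num at heq

include hG

lemma rat_sets {d : ℕ} (X : Ω → (Fin d → ℝ))
    (hmX : mX = MeasurableSpace.comap X inferInstance)
    (h2v : ∀ s ∈ Icc (0:ℝ) 1, ∀ᵐ ω ∂P, gg mX P G Y s ω = 0 ∨ gg mX P G Y s ω = 1) (q : ℚ) :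
    ∃ S : Set (Fin d → ℝ), MeasurableSet S ∧ ∀ᵐ ω ∂P, (Y ω ≤ (q:ℝ) ↔ X ω ∈ S) := by
  have hsIcc : G (q:ℝ) ∈ Icc (0:ℝ) 1 := ⟨G_nonneg P hY hG _, G_le_one P hY hG _⟩
  obtain ⟨A, hAmX, hAae⟩ := indicator_extract mX P hY hGc hm (h2v _ hsIcc)
  rw [hmX] at hAmX
  obtain ⟨S, hS, hpre⟩ := hAmX
  refine ⟨S, hS, ?_⟩
  filter_upwards [hAae, level P hY hG hGc (q:ℝ)] with ω h1 h2
  rw [h2, h1, ← hpre]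
  exact Iff.rfl

lemma gg_const_of_indep {d : ℕ} {X : Ω → (Fin d → ℝ)}
    (hmX : mX = MeasurableSpace.comap X inferInstance) (hind : IndepFun Y X P)
    {t : ℝ} (ht : t ∈ Icc (0:ℝ) 1) : gg mX P G Y t =ᵐ[P] fun _ => t := by
  have hle1 : MeasurableSpace.comap Y inferInstance ≤ m0 := hY.comap_le
  have hsm : StronglyMeasurable[MeasurableSpace.comap Y inferInstance] (It G Y t) := by
    rw [It_eq_ind]
    have hset : MeasurableSet[MeasurableSpace.comap Y inferInstance] {ω | G (Y ω) ≤ t} :=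
      ⟨{y | G y ≤ t}, hGc.measurable measurableSet_Iic, rfl⟩
    exact (measurable_const.indicator hset).stronglyMeasurable
  have hindp : Indep (MeasurableSpace.comap Y inferInstance) mX P := by
    rw [hmX]; exact (IndepFun_iff_Indep Y X P).1 hind
  have h := condExp_indep_eq hle1 hm hsm hindp
  have hval : ∫ x, It G Y t x ∂P = t := integral_It (m0 := m0) P hY hGc hG ht
  rw [hval] at h
  exact h

lemma FF_of_dep {d : ℕ} {X : Ω → (Fin d → ℝ)} (hX : Measurable X)
    (hmX : mX = MeasurableSpace.comap X inferInstance)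
    (f : (Fin d → ℝ) → ℝ) (hf : Measurable f) (hYf : ∀ᵐ ω ∂P, Y ω = f (X ω))
    {t : ℝ} (ht : t ∈ Icc (0:ℝ) 1) : FF mX P G Y t = 2 * min t (1-t) := by
  have hgg : ∀ s : ℝ, gg mX P G Y s =ᵐ[P] It G Y s := by
    intro s
    set It' : Ω → ℝ := fun ω => if G (f (X ω)) ≤ s then 1 else 0 with hIt'
    have haeIt : It G Y s =ᵐ[P] It' := by
      filter_upwards [hYf] with ω h
      unfold It
      rw [hIt']
      simp only [h]
    have hfun : Measurable (fun x => if G (f x) ≤ s then (1:ℝ) else 0) :=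
      Measurable.ite (measurableSet_le (hGc.measurable.comp hf) measurable_const)
        measurable_const measurable_const
    have hsm' : StronglyMeasurable[mX] It' := by
      rw [hmX]
      exact (hfun.comp (comap_measurable X)).stronglyMeasurable
    have hint' : Integrable It' P := by
      refine int_bdd P (hfun.comp hX).aestronglyMeasurable (C := 1) ?_
      refine Eventually.of_forall fun ω => ?_
      show |if G (f (X ω)) ≤ s then (1:ℝ) else 0| ≤ 1
      split <;> norm_num
    calc gg mX P G Y s = P[It G Y s|mX] := rfl
      _ =ᵐ[P] P[It'|mX] := condExp_congr_ae haeIt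
      _ = It' := condExp_of_stronglyMeasurable hm hsm' hint'
      _ =ᵐ[P] It G Y s := haeIt.symm
  have hcong : FF mX P G Y t = ∫ ω, (It G Y t ω - (1 - It G Y (1-t) ω))^2 ∂P := by
    unfold FF
    refine integral_congr_ae ?_
    filter_upwards [hgg t, hgg (1-t)] with ω h1 h2
    rw [h1, h2]
  have hpt : ∀ ω, (It G Y t ω - (1 - It G Y (1-t) ω))^2
      = It G Y (min t (1-t)) ω + (1 - It G Y (max t (1-t)) ω) := by
    intro ω
    exact ind_sq_aux
  have hint1 := integrable_It (m0 := m0) P hY hGc (min t (1-t))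
  have hint2 : Integrable (fun ω => 1 - It G Y (max t (1-t)) ω) P :=
    (integrable_const 1).sub (integrable_It (m0 := m0) P hY hGc (max t (1-t)))
  rw [hcong, integral_congr_ae (Eventually.of_forall hpt), integral_add hint1 hint2,
    integral_sub (integrable_const 1) (integrable_It (m0 := m0) P hY hGc (max t (1-t))),
    integral_It (m0 := m0) P hY hGc hG (min_mem_Icc ht),
    integral_It (m0 := m0) P hY hGc hG (max_mem_Icc ht), MeasureTheory.integral_const]
  have hmm : min t (1-t) + max t (1-t) = 1 := by rw [min_add_max]; ring
  simp [measure_univ]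
  linarith

end Main3



lemma contOn_of_lip (f : ℝ → ℝ) (K : ℝ)
    (hf : ∀ s ∈ Icc (0:ℝ) 1, ∀ t ∈ Icc (0:ℝ) 1, |f t - f s| ≤ K * |t - s|) :
    ContinuousOn f (Icc 0 1) := by
  refine LipschitzOnWith.continuousOn (K := K.toNNReal) (LipschitzOnWith.of_dist_le_mul ?_)
  intro x hx y hy
  rw [Real.dist_eq, Real.dist_eq]
  calc |f x - f y| ≤ K * |x - y| := hf y hy x hx
    _ ≤ (K.toNNReal : ℝ) * |x - y| := by
        apply mul_le_mul_of_nonneg_right _ (abs_nonneg _)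
        rw [Real.coe_toNNReal']
        exact le_max_left _ _

section Main4
variable {Ω : Type*} (mX : MeasurableSpace Ω) [m0 : MeasurableSpace Ω] (P : Measure Ω)
  [IsProbabilityMeasure P] {G : ℝ → ℝ} {Y : Ω → ℝ}
variable (hY : Measurable Y) (hGc : Continuous G)
  (hG : ∀ y, G y = (P {ω | Y ω ≤ y}).toReal) (hm : mX ≤ m0)
include hY hGc hG hm

lemma intgg_tt_lip {s t : ℝ} (hs : s ∈ Icc (0:ℝ) 1) (ht : t ∈ Icc (0:ℝ) 1) :
    |(∫ ω, gg mX P G Y t ω * gg mX P G Y t ω ∂P)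
      - ∫ ω, gg mX P G Y s ω * gg mX P G Y s ω ∂P| ≤ 2 * |t - s| := by
  have h := abs_int_mul_sub P (gg_aesm mX P hY hGc hm t) (gg_aesm mX P hY hGc hm t)
    (gg_aesm mX P hY hGc hm s) (gg_aesm mX P hY hGc hm s)
    (gg_abs_le_one mX P hY hGc hm t) (gg_abs_le_one mX P hY hGc hm t)
    (gg_abs_le_one mX P hY hGc hm s) (gg_abs_le_one mX P hY hGc hm s)
  refine h.trans ?_
  have h1 := gg_abs_sub mX P hY hGc hG hm hs ht
  linarith

lemma intgg_tm_lip {s t : ℝ} (hs : s ∈ Icc (0:ℝ) 1) (ht : t ∈ Icc (0:ℝ) 1) :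
    |(∫ ω, gg mX P G Y t ω * gg mX P G Y (1-t) ω ∂P)
      - ∫ ω, gg mX P G Y s ω * gg mX P G Y (1-s) ω ∂P| ≤ 2 * |t - s| := by
  have h1t : 1 - t ∈ Icc (0:ℝ) 1 := ⟨by linarith [ht.2], by linarith [ht.1]⟩
  have h1s : 1 - s ∈ Icc (0:ℝ) 1 := ⟨by linarith [hs.2], by linarith [hs.1]⟩
  have h := abs_int_mul_sub P (gg_aesm mX P hY hGc hm t) (gg_aesm mX P hY hGc hm (1-t))
    (gg_aesm mX P hY hGc hm s) (gg_aesm mX P hY hGc hm (1-s))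
    (gg_abs_le_one mX P hY hGc hm t) (gg_abs_le_one mX P hY hGc hm (1-t))
    (gg_abs_le_one mX P hY hGc hm s) (gg_abs_le_one mX P hY hGc hm (1-s))
  refine h.trans ?_
  have h1 := gg_abs_sub mX P hY hGc hG hm hs ht
  have h2 := gg_abs_sub mX P hY hGc hG hm h1s h1t
  have h3 : |(1-t) - (1-s)| = |t - s| := by
    rw [show (1-t) - (1-s) = -(t - s) by ring, abs_neg]
  linarith

theorem master {d : ℕ} (X : Ω → (Fin d → ℝ)) (hX : Measurable X)
    (hmX : mX = MeasurableSpace.comap X inferInstance)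
    (ψ : ℝ → ℝ → ℝ)
    (hψ : ∀ s t : ℝ, ψ s t =
      ∫ ω, (P[fun ω' => if G (Y ω') ≤ s then (1:ℝ) else 0 | mX]) ω *
           (P[fun ω' => if G (Y ω') ≤ t then (1:ℝ) else 0 | mX]) ω ∂P)
    (Q : ℝ)
    (hQ : Q = 4 * (∫ t in (0:ℝ)..1, (ψ t t + ψ t (1 - t))) - 2) :
    Q = 2 * ∫ t in (0:ℝ)..1,
        ∫ ω, ((P[fun ω' => if G (Y ω') ≤ t then (1:ℝ) else 0 | mX]) ω -
              (1 - (P[fun ω' => if G (Y ω') ≤ 1 - t then (1:ℝ) else 0 | mX]) ω)) ^ 2 ∂P ∧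
    0 ≤ Q ∧
    (Q = 0 ↔ ∀ t ∈ Icc (0:ℝ) 1,
        P[fun ω' => if G (Y ω') ≤ t then (1:ℝ) else 0 | mX]
          =ᵐ[P] fun ω => 1 - (P[fun ω' => if G (Y ω') ≤ 1 - t then (1:ℝ) else 0 | mX]) ω) ∧
    (IndepFun Y X P → Q = 0) ∧
    (Q = 1 ↔ ∃ f : (Fin d → ℝ) → ℝ, Measurable f ∧ ∀ᵐ ω ∂P, Y ω = f (X ω)) := by
  have hpsi : ∀ s t : ℝ, ψ s t = ∫ ω, gg mX P G Y s ω * gg mX P G Y t ω ∂P := hψ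
  -- continuity facts
  have contF : ContinuousOn (FF mX P G Y) (Icc 0 1) :=
    contOn_of_lip _ 4 (fun s hs t ht => FF_lip mX P hY hGc hG hm hs ht)
  have cont1 : ContinuousOn (fun t => ψ t t) (Icc 0 1) := by
    refine contOn_of_lip _ 2 (fun s hs t ht => ?_)
    rw [hpsi, hpsi]
    exact intgg_tt_lip mX P hY hGc hG hm hs ht
  have cont3 : ContinuousOn (fun t => ψ t (1-t)) (Icc 0 1) := by
    refine contOn_of_lip _ 2 (fun s hs t ht => ?_)
    rw [hpsi, hpsi]
    exact intgg_tm_lip mX P hY hGc hG hm hs ht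
  have cont2 : ContinuousOn (fun t => ψ (1-t) (1-t)) (Icc 0 1) := by
    have hmaps : MapsTo (fun t : ℝ => 1 - t) (Icc 0 1) (Icc 0 1) := by
      intro x hx
      show (1 - x) ∈ Icc (0:ℝ) 1
      exact ⟨by linarith [hx.2], by linarith [hx.1]⟩
    exact cont1.comp ((continuous_const.sub continuous_id).continuousOn) hmaps
  have huIcc : uIcc (0:ℝ) 1 = Icc 0 1 := uIcc_of_le (by norm_num)
  have ii1 : IntervalIntegrable (fun t => ψ t t) volume 0 1 :=
    ContinuousOn.intervalIntegrable (by rw [huIcc]; exact cont1)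
  have ii2 : IntervalIntegrable (fun t => ψ (1-t) (1-t)) volume 0 1 :=
    ContinuousOn.intervalIntegrable (by rw [huIcc]; exact cont2)
  have ii3 : IntervalIntegrable (fun t => ψ t (1-t)) volume 0 1 :=
    ContinuousOn.intervalIntegrable (by rw [huIcc]; exact cont3)
  have iiF : IntervalIntegrable (FF mX P G Y) volume 0 1 :=
    ContinuousOn.intervalIntegrable (by rw [huIcc]; exact contF)
  -- key identity : Q = 2 ∫ F
  have hflip : (∫ t in (0:ℝ)..1, ψ (1-t) (1-t)) = ∫ t in (0:ℝ)..1, ψ t t := by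
    simpa using intervalIntegral.integral_comp_sub_left (a := 0) (b := 1) (fun s => ψ s s) 1
  have hsplitQ : (∫ t in (0:ℝ)..1, (ψ t t + ψ t (1 - t)))
      = (∫ t in (0:ℝ)..1, ψ t t) + ∫ t in (0:ℝ)..1, ψ t (1-t) :=
    intervalIntegral.integral_add ii1 ii3
  have hIFeq : (∫ t in (0:ℝ)..1, FF mX P G Y t)
      = (∫ t in (0:ℝ)..1, ψ t t) + (∫ t in (0:ℝ)..1, ψ (1-t) (1-t))
        + 2 * (∫ t in (0:ℝ)..1, ψ t (1-t)) - 1 := by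
    have hcongr : (∫ t in (0:ℝ)..1, FF mX P G Y t)
        = ∫ t in (0:ℝ)..1, (ψ t t + ψ (1-t) (1-t) + 2 * ψ t (1-t) - 1) := by
      refine intervalIntegral.integral_congr ?_
      intro t ht
      rw [huIcc] at ht
      show FF mX P G Y t = ψ t t + ψ (1-t) (1-t) + 2 * ψ t (1-t) - 1
      rw [FF_expand mX P hY hGc hG hm ht, hpsi, hpsi, hpsi]
    have ii12 : IntervalIntegrable (fun t => ψ t t + ψ (1-t) (1-t)) volume 0 1 := ii1.add ii2
    have ii32 : IntervalIntegrable (fun t => 2 * ψ t (1-t)) volume 0 1 := by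
      have := ii3.const_mul 2
      simpa using this
    have e1 : (∫ t in (0:ℝ)..1, (ψ t t + ψ (1-t) (1-t) + 2 * ψ t (1-t) - 1))
        = (∫ t in (0:ℝ)..1, (ψ t t + ψ (1-t) (1-t) + 2 * ψ t (1-t)))
          - ∫ _ in (0:ℝ)..1, (1:ℝ) :=
      intervalIntegral.integral_sub (ii12.add ii32) (intervalIntegrable_const)
    have e2 : (∫ t in (0:ℝ)..1, (ψ t t + ψ (1-t) (1-t) + 2 * ψ t (1-t)))
        = (∫ t in (0:ℝ)..1, (ψ t t + ψ (1-t) (1-t))) + ∫ t in (0:ℝ)..1, 2 * ψ t (1-t) :=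
      intervalIntegral.integral_add ii12 ii32
    have e3 : (∫ t in (0:ℝ)..1, (ψ t t + ψ (1-t) (1-t)))
        = (∫ t in (0:ℝ)..1, ψ t t) + ∫ t in (0:ℝ)..1, ψ (1-t) (1-t) :=
      intervalIntegral.integral_add ii1 ii2
    have e4 : (∫ t in (0:ℝ)..1, 2 * ψ t (1-t)) = 2 * ∫ t in (0:ℝ)..1, ψ t (1-t) :=
      intervalIntegral.integral_const_mul _ _
    rw [hcongr, e1, e2, e3, e4, intervalIntegral.integral_const, smul_eq_mul, mul_one]
    ring
  have key1 : Q = 2 * ∫ t in (0:ℝ)..1, FF mX P G Y t := by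
    rw [hQ, hsplitQ, hIFeq, hflip]
    ring
  -- nonnegativity of ∫ F
  have hIFnn : 0 ≤ ∫ t in (0:ℝ)..1, FF mX P G Y t :=
    intervalIntegral.integral_nonneg (by norm_num) (fun u _ => FF_nonneg mX P hY hGc hG hm u)
  -- the Q = 0 characterization
  have hiff0 : Q = 0 ↔ ∀ t ∈ Icc (0:ℝ) 1,
      gg mX P G Y t =ᵐ[P] fun ω => 1 - gg mX P G Y (1-t) ω := by
    constructor
    · intro hQ0
      have hIF0 : ∫ t in (0:ℝ)..1, FF mX P G Y t = 0 := by linarith [key1.symm.trans hQ0]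
      have hFzero := eq_zero_of_integral_zero contF
        (fun t _ => FF_nonneg mX P hY hGc hG hm t) hIF0
      intro t ht
      exact (FF_eq_zero_iff mX P hY hGc hm t).1 (hFzero t ht)
    · intro hall
      have hFzero : ∀ t ∈ Icc (0:ℝ) 1, FF mX P G Y t = 0 :=
        fun t ht => (FF_eq_zero_iff mX P hY hGc hm t).2 (hall t ht)
      have hIF0 : ∫ t in (0:ℝ)..1, FF mX P G Y t = 0 := by
        have : (∫ t in (0:ℝ)..1, FF mX P G Y t) = ∫ _ in (0:ℝ)..1, (0:ℝ) := by
          refine intervalIntegral.integral_congr ?_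
          intro t ht
          rw [huIcc] at ht
          show FF mX P G Y t = 0
          exact hFzero t ht
        rw [this]
        simp
      rw [key1, hIF0, mul_zero]
  refine ⟨key1, by linarith [key1], hiff0, ?_, ?_⟩
  · -- independence
    intro hind
    refine hiff0.2 (fun t ht => ?_)
    have h1t : 1 - t ∈ Icc (0:ℝ) 1 := ⟨by linarith [ht.2], by linarith [ht.1]⟩
    have e1 := gg_const_of_indep mX P hY hGc hG hm hmX hind ht
    have e2 := gg_const_of_indep mX P hY hGc hG hm hmX hind h1t
    filter_upwards [e1, e2] with ω g1 g2
    show gg mX P G Y t ω = 1 - gg mX P G Y (1-t) ω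
    rw [g1, g2]
    ring
  · -- complete dependence
    constructor
    · intro hQ1
      have hIF : ∫ t in (0:ℝ)..1, FF mX P G Y t = 1/2 := by linarith [key1.symm.trans hQ1]
      have contMin : ContinuousOn (fun t : ℝ => 2 * min t (1-t)) (Icc 0 1) :=
        (continuous_const.mul (continuous_id.min (continuous_const.sub continuous_id))).continuousOn
      have contD : ContinuousOn (fun t => 2 * min t (1-t) - FF mX P G Y t) (Icc 0 1) :=
        contMin.sub contF
      have hDnn : ∀ t ∈ Icc (0:ℝ) 1, 0 ≤ 2 * min t (1-t) - FF mX P G Y t :=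
        fun t ht => sub_nonneg.2 (FF_le mX P hY hGc hG hm ht)
      have iiMin : IntervalIntegrable (fun t : ℝ => 2 * min t (1-t)) volume 0 1 :=
        (continuous_const.mul (continuous_id.min (continuous_const.sub
          continuous_id))).intervalIntegrable _ _
      have hDint : ∫ t in (0:ℝ)..1, (2 * min t (1-t) - FF mX P G Y t) = 0 := by
        rw [intervalIntegral.integral_sub iiMin iiF, integral_two_min, hIF]
        norm_num
      have hDzero := eq_zero_of_integral_zero contD hDnn hDint
      have hFFall : ∀ t ∈ Icc (0:ℝ) 1, FF mX P G Y t = 2 * min t (1-t) := by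
        intro t ht
        have := hDzero t ht
        linarith
      have h2v := gg_two_valued mX P hY hGc hG hm hFFall
      exact exists_factor P (fun q => rat_sets mX P hY hGc hG hm X hmX h2v q)
    · rintro ⟨f, hf, hYf⟩
      have hFFall : ∀ t ∈ Icc (0:ℝ) 1, FF mX P G Y t = 2 * min t (1-t) :=
        fun t ht => FF_of_dep mX P hY hGc hG hm hX hmX f hf hYf ht
      have hIF : ∫ t in (0:ℝ)..1, FF mX P G Y t = 1/2 := by
        have hcongr : (∫ t in (0:ℝ)..1, FF mX P G Y t)
            = ∫ t in (0:ℝ)..1, (2 * min t (1-t)) := by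
          refine intervalIntegral.integral_congr ?_
          intro t ht
          rw [huIcc] at ht
          show FF mX P G Y t = 2 * min t (1-t)
          exact hFFall t ht
        rw [hcongr, integral_two_min]
      rw [key1, hIF]
      norm_num

end Main4

end GiniAux


/-- Gini's gamma applied to `ψ_C` gives the measure of indifference `Q`:
it equals twice the integrated squared deviation from reflection invariance, is
nonnegative, vanishes iff `(X,Y)` and `(X,−Y)` have the same copula (in particular when
`Y` and `X` are independent), and equals `1` iff `Y` is completely dependent on `X`. -/
theorem gini_gamma_of_psi_properties
    {Ω : Type*} [MeasurableSpace Ω] (P : Measure Ω) [IsProbabilityMeasure P]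
    {d : ℕ} (X : Ω → (Fin d → ℝ)) (Y : Ω → ℝ) (hX : Measurable X) (hY : Measurable Y)
    (G : ℝ → ℝ) (hG : ∀ y, G y = (P {ω | Y ω ≤ y}).toReal) (hGc : Continuous G)
    (mX : MeasurableSpace Ω) (hmX : mX = MeasurableSpace.comap X inferInstance)
    (ψ : ℝ → ℝ → ℝ)
    (hψ : ∀ s t : ℝ, ψ s t =
      ∫ ω, (P[fun ω' => if G (Y ω') ≤ s then (1:ℝ) else 0 | mX]) ω *
           (P[fun ω' => if G (Y ω') ≤ t then (1:ℝ) else 0 | mX]) ω ∂P)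
    (Q : ℝ)
    (hQ : Q = 4 * (∫ t in (0:ℝ)..1, (ψ t t + ψ t (1 - t))) - 2) :
    Q = 2 * ∫ t in (0:ℝ)..1,
        ∫ ω, ((P[fun ω' => if G (Y ω') ≤ t then (1:ℝ) else 0 | mX]) ω -
              (1 - (P[fun ω' => if G (Y ω') ≤ 1 - t then (1:ℝ) else 0 | mX]) ω)) ^ 2 ∂P ∧
    0 ≤ Q ∧
    (Q = 0 ↔ ∀ t ∈ Icc (0:ℝ) 1,
        P[fun ω' => if G (Y ω') ≤ t then (1:ℝ) else 0 | mX]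
          =ᵐ[P] fun ω => 1 - (P[fun ω' => if G (Y ω') ≤ 1 - t then (1:ℝ) else 0 | mX]) ω) ∧
    (IndepFun Y X P → Q = 0) ∧
    (Q = 1 ↔ ∃ f : (Fin d → ℝ) → ℝ, Measurable f ∧ ∀ᵐ ω ∂P, Y ω = f (X ω)) := by
  refine GiniAux.master (m0 := _) mX P hY hGc hG ?_ X hX hmX ψ hψ Q hQ
  rw [hmX]; exact hX.comap_le
end

section
/- Let α, β ∈ [0,1] with α + β ≤ 1 and let (U,V) be a random vector on [0,1]² whose law is μ = α·μ_M + (1−α−β)·μ_Π + β·μ_W, where μ_M is the law of (T,T), μ_W is the law of (T,1−T) for T uniformly distributed on [0,1], and μ_Π is the Lebesgue measure on [0,1]² (the Fréchet copula A_{α,β}). Let V' be a random variable such that V and V' share the same conditional distribution given U and are conditionally independent given U. Then the law of (V,V') is (α²+β²)·μ_M + (1 − (α+β)²)·μ_Π + 2αβ·μ_W, i.e., ψ(A_{α,β}) is the Fréchet copula A_{α²+β², 2αβ}. In particular, ψ((M+W)/2) = (M+W)/2. -/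
open MeasureTheory ProbabilityTheory Set

/-- The `ψ`-transform maps the Fréchet copula `A_{α,β} = αM + (1−α−β)Π + βW`
to the Fréchet copula `A_{α²+β², 2αβ}`: if `(U,V)` has law `A_{α,β}` and `V'` shares the
same conditional distribution as `V` given `U` and is conditionally independent of `V`
given `U`, then the law of `(V,V')` is `(α²+β²)·μ_M + (1−(α+β)²)·μ_Π + 2αβ·μ_W`. -/
theorem psi_frechet
    {Ω : Type*} [MeasurableSpace Ω] (P : Measure Ω) [IsProbabilityMeasure P]
    (U V V' : Ω → ℝ) (hU : Measurable U) (hV : Measurable V) (hV' : Measurable V')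
    (α β : ℝ) (hα : α ∈ Icc (0:ℝ) 1) (hβ : β ∈ Icc (0:ℝ) 1) (hαβ : α + β ≤ 1)
    (μM μPi μW : Measure (ℝ × ℝ))
    (hμM : μM = Measure.map (fun t : ℝ => (t, t)) (volume.restrict (Icc (0:ℝ) 1)))
    (hμW : μW = Measure.map (fun t : ℝ => (t, 1 - t)) (volume.restrict (Icc (0:ℝ) 1)))
    (hμPi : μPi = (volume.restrict (Icc (0:ℝ) 1)).prod (volume.restrict (Icc (0:ℝ) 1)))
    (hlaw : Measure.map (fun ω => (U ω, V ω)) P =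
      ENNReal.ofReal α • μM + ENNReal.ofReal (1 - α - β) • μPi + ENNReal.ofReal β • μW)
    (hci : ∀ g h : ℝ → ℝ, Measurable g → (∃ C, ∀ x, |g x| ≤ C) →
        Measurable h → (∃ C, ∀ x, |h x| ≤ C) →
      P[fun ω => g (V ω) * h (V' ω) | MeasurableSpace.comap U inferInstance]
        =ᵐ[P] fun ω =>
          (P[fun ω' => g (V ω') | MeasurableSpace.comap U inferInstance]) ω *
          (P[fun ω' => h (V ω') | MeasurableSpace.comap U inferInstance]) ω) :
    Measure.map (fun ω => (V ω, V' ω)) P =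
      ENNReal.ofReal (α ^ 2 + β ^ 2) • μM + ENNReal.ofReal (1 - (α + β) ^ 2) • μPi +
        ENNReal.ofReal (2 * α * β) • μW := by
  obtain ⟨hα0, hα1⟩ := hα
  obtain ⟨hβ0, hβ1⟩ := hβ
  have hc0 : (0:ℝ) ≤ 1 - α - β := by linarith
  set m : Measure ℝ := volume.restrict (Icc (0:ℝ) 1) with hm_def
  haveI hmP : IsProbabilityMeasure m := ⟨by rw [hm_def, Measure.restrict_apply_univ, Real.volume_Icc]; norm_num⟩
  -- indicator notation
  set I : Set ℝ → ℝ → ℝ := fun A => A.indicator (fun _ => (1:ℝ)) with hI_def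
  have hIb : ∀ (A : Set ℝ) (x : ℝ), |I A x| ≤ 1 := by
    intro A x
    rw [hI_def]
    by_cases h : x ∈ A <;> simp [indicator, h]
  have hImeas : ∀ (A : Set ℝ), MeasurableSet A → Measurable (I A) := by
    intro A hA; exact measurable_const.indicator hA
  -- reflection invariance of m
  have hmp : MeasurePreserving (fun t : ℝ => 1 - t) volume volume :=
    Measure.measurePreserving_sub_left volume 1
  have hpre : (fun t : ℝ => 1 - t) ⁻¹' (Icc (0:ℝ) 1) = Icc (0:ℝ) 1 := by
    ext x
    simp only [mem_preimage, mem_Icc]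
    constructor <;> intro h <;> constructor <;> linarith [h.1, h.2]
  have hrefm : Measure.map (fun t : ℝ => 1 - t) m = m := by
    calc Measure.map (fun t:ℝ => 1-t) m
        = Measure.map (fun t:ℝ => 1-t) (volume.restrict ((fun t:ℝ => 1-t) ⁻¹' (Icc 0 1))) := by
          rw [hpre, hm_def]
      _ = (volume.map (fun t:ℝ => 1-t)).restrict (Icc 0 1) :=
          (Measure.restrict_map hmp.measurable measurableSet_Icc).symm
      _ = m := by rw [hmp.map_eq, hm_def]
  -- integrability helpers
  have hint1 : ∀ (f : ℝ → ℝ), Measurable f → (∀ x, |f x| ≤ 1) → Integrable f m := by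
    intro f hf hb
    exact (integrable_const 1).mono' hf.aestronglyMeasurable
      (ae_of_all _ (fun x => by simpa [Real.norm_eq_abs] using hb x))
  -- law of U
  have hUlaw : Measure.map U P = m := by
    have h1 : Measure.map U P = Measure.map Prod.fst (Measure.map (fun ω => (U ω, V ω)) P) := by
      rw [Measure.map_map measurable_fst (hU.prodMk hV)]; rfl
    rw [h1, hlaw, Measure.map_add _ _ measurable_fst, Measure.map_add _ _ measurable_fst,
      Measure.map_smul, Measure.map_smul, Measure.map_smul, hμM, hμPi, hμW,
      Measure.map_map measurable_fst ((show Measurable fun t : ℝ => (t, t) from measurable_id.prodMk measurable_id)),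
      Measure.map_map measurable_fst ((show Measurable fun t : ℝ => (t, 1 - t) from measurable_id.prodMk (measurable_const.sub measurable_id))),
      Measure.map_fst_prod]
    have hd1 : (Prod.fst ∘ fun t : ℝ => (t, t)) = id := rfl
    have hd2 : (Prod.fst ∘ fun t : ℝ => (t, 1 - t)) = id := rfl
    rw [hd1, hd2, Measure.map_id]
    have hu : m univ = 1 := measure_univ
    rw [hu, one_smul, ← add_smul, ← add_smul, ← ENNReal.ofReal_add hα0 hc0,
      ← ENNReal.ofReal_add (by linarith) hβ0]
    have h2 : α + (1 - α - β) + β = 1 := by ring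
    rw [h2, ENNReal.ofReal_one, one_smul]
  -- joint integral formula
  have hjoint : ∀ F : ℝ × ℝ → ℝ, Measurable F → (∀ p, |F p| ≤ 1) →
      ∫ ω, F (U ω, V ω) ∂P =
        α * (∫ t, F (t, t) ∂m) + (1-α-β) * (∫ p, F p ∂μPi) + β * (∫ t, F (t, 1-t) ∂m) := by
    intro F hF hFb
    haveI hPM : IsProbabilityMeasure μM := by
      rw [hμM]; exact Measure.isProbabilityMeasure_map ((show Measurable fun t : ℝ => (t, t) from measurable_id.prodMk measurable_id)).aemeasurable
    haveI hPW : IsProbabilityMeasure μW := by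
      rw [hμW]
      exact Measure.isProbabilityMeasure_map (measurable_id.prodMk
        (measurable_const.sub measurable_id)).aemeasurable
    haveI hPPi : IsProbabilityMeasure μPi := by rw [hμPi]; infer_instance
    have hFiM : Integrable F μM := (integrable_const 1).mono' hF.aestronglyMeasurable
      (ae_of_all _ fun x => by simpa [Real.norm_eq_abs] using hFb x)
    have hFiW : Integrable F μW := (integrable_const 1).mono' hF.aestronglyMeasurable
      (ae_of_all _ fun x => by simpa [Real.norm_eq_abs] using hFb x)
    have hFiPi : Integrable F μPi := (integrable_const 1).mono' hF.aestronglyMeasurable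
      (ae_of_all _ fun x => by simpa [Real.norm_eq_abs] using hFb x)
    have h1 : ∫ ω, F (U ω, V ω) ∂P = ∫ p, F p ∂(Measure.map (fun ω => (U ω, V ω)) P) :=
      (integral_map (hU.prodMk hV).aemeasurable hF.aestronglyMeasurable).symm
    rw [h1, hlaw,
      integral_add_measure
        ((hFiM.smul_measure ENNReal.ofReal_ne_top).add_measure
          (hFiPi.smul_measure ENNReal.ofReal_ne_top))
        (hFiW.smul_measure ENNReal.ofReal_ne_top),
      integral_add_measure (hFiM.smul_measure ENNReal.ofReal_ne_top)
        (hFiPi.smul_measure ENNReal.ofReal_ne_top),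
      integral_smul_measure, integral_smul_measure, integral_smul_measure,
      ENNReal.toReal_ofReal hα0, ENNReal.toReal_ofReal hc0, ENNReal.toReal_ofReal hβ0,
      hμM, hμW,
      integral_map ((show Measurable fun t : ℝ => (t, t) from measurable_id.prodMk measurable_id)).aemeasurable hF.aestronglyMeasurable,
      integral_map ((show Measurable fun t : ℝ => (t, 1 - t) from measurable_id.prodMk (measurable_const.sub measurable_id))).aemeasurable
        hF.aestronglyMeasurable]
    simp only [smul_eq_mul, id_eq]
  -- conditional expectation formula
  have hce : ∀ A : Set ℝ, MeasurableSet A →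
      (P[fun ω => I A (V ω) | MeasurableSpace.comap U inferInstance]) =ᵐ[P]
        fun ω => α * I A (U ω) + (1-α-β) * (m A).toReal + β * I A (1 - U ω) := by
    intro A hA
    have hIA := hImeas A hA
    have hInn : ∀ (B : Set ℝ) (x : ℝ), 0 ≤ I B x := by
      intro B x; rw [hI_def]; by_cases h : x ∈ B <;> simp [indicator, h]
    have hI1 : ∀ (B : Set ℝ) (x : ℝ), I B x ≤ 1 := fun B x => (abs_le.mp (hIb B x)).2
    have hmA1 : (m A).toReal ≤ 1 := by
      have h1 : m A ≤ 1 := prob_le_one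
      calc (m A).toReal ≤ (1:ENNReal).toReal := ENNReal.toReal_mono ENNReal.one_ne_top h1
        _ = 1 := by simp
    have hmA0 : (0:ℝ) ≤ (m A).toReal := ENNReal.toReal_nonneg
    set φ : ℝ → ℝ := fun u => α * I A u + (1-α-β) * (m A).toReal + β * I A (1 - u) with hφ_def
    have hφm : Measurable φ := by
      exact ((measurable_const.mul hIA).add measurable_const).add
        (measurable_const.mul (hIA.comp (measurable_const.sub measurable_id)))
    have hφb : ∀ u, |φ u| ≤ 1 := by
      intro u
      show |α * I A u + (1 - α - β) * (m A).toReal + β * I A (1 - u)| ≤ 1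
      rw [abs_le]
      constructor
      · nlinarith [hInn A u, hInn A (1 - u), hI1 A u, hI1 A (1 - u)]
      · nlinarith [hInn A u, hInn A (1 - u), hI1 A u, hI1 A (1 - u)]
    have hφU_int : Integrable (fun ω => φ (U ω)) P :=
      (integrable_const 1).mono' (hφm.comp hU).aestronglyMeasurable
        (ae_of_all _ fun ω => by simpa [Real.norm_eq_abs] using hφb (U ω))
    have hfint : Integrable (fun ω => I A (V ω)) P :=
      (integrable_const 1).mono' (hIA.comp hV).aestronglyMeasurable
        (ae_of_all _ fun ω => by simpa [Real.norm_eq_abs] using hIb A (V ω))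
    have hIint : ∀ (B : Set ℝ), MeasurableSet B → ∫ x, I B x ∂m = (m B).toReal := by
      intro B hB
      rw [hI_def]
      rw [integral_indicator_const (1:ℝ) hB]
      simp [measureReal_def]
    refine (ae_eq_condExp_of_forall_setIntegral_eq hU.comap_le hfint
      (fun s _ _ => hφU_int.integrableOn) ?_ ?_).symm
    · intro s hs _
      obtain ⟨S, hS, rfl⟩ := hs
      have hIS := hImeas S hS
      -- RHS: ∫ in U⁻¹S of I A (V ω)
      have hF : Measurable (fun p : ℝ × ℝ => I S p.1 * I A p.2) :=
        (hIS.comp measurable_fst).mul (hIA.comp measurable_snd)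
      have hFb : ∀ p : ℝ × ℝ, |I S p.1 * I A p.2| ≤ 1 := by
        intro p
        rw [abs_mul]
        exact mul_le_one₀ (hIb S p.1) (abs_nonneg _) (hIb A p.2)
      have hRHS : ∫ ω in U ⁻¹' S, I A (V ω) ∂P =
          α * (∫ t, I S t * I A t ∂m) + (1-α-β) * ((∫ t, I S t ∂m) * (∫ t, I A t ∂m))
            + β * (∫ t, I S t * I A (1-t) ∂m) := by
        rw [← integral_indicator (hU hS)]
        have heq : (U ⁻¹' S).indicator (fun ω => I A (V ω)) =
            fun ω => (fun p : ℝ × ℝ => I S p.1 * I A p.2) (U ω, V ω) := by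
          funext ω
          by_cases h : U ω ∈ S <;> simp [indicator, hI_def, h]
        rw [heq, hjoint _ hF hFb, hμPi, integral_prod_mul (I S) (I A)]
      -- LHS
      have hLHS : ∫ ω in U ⁻¹' S, φ (U ω) ∂P =
          α * (∫ t, I S t * I A t ∂m) + (1-α-β) * (m A).toReal * (∫ t, I S t ∂m)
            + β * (∫ t, I S t * I A (1-t) ∂m) := by
        rw [← setIntegral_map hS hφm.aestronglyMeasurable hU.aemeasurable, hUlaw,
          ← integral_indicator hS]
        have heq : S.indicator φ = fun u =>
            α * (I S u * I A u) + (1-α-β) * (m A).toReal * I S u + β * (I S u * I A (1-u)) := by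
          funext u
          by_cases h : u ∈ S <;>
            simp [indicator, hI_def, hφ_def, h] <;> ring_nf
        simp only [heq]
        have i1 : Integrable (fun u => α * (I S u * I A u)) m :=
          (hint1 (fun u => I S u * I A u) (hIS.mul hIA) (fun x => by
            rw [abs_mul]; exact mul_le_one₀ (hIb S x) (abs_nonneg _) (hIb A x))).const_mul α
        have i2 : Integrable (fun u => (1-α-β) * (m A).toReal * I S u) m :=
          (hint1 _ hIS (hIb S)).const_mul _
        have i3 : Integrable (fun u => β * (I S u * I A (1-u))) m :=
          (hint1 (fun u => I S u * I A (1-u)) (hIS.mul (hIA.comp (measurable_const.sub measurable_id))) (fun x => by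
            rw [abs_mul]; exact mul_le_one₀ (hIb S x) (abs_nonneg _) (hIb A (1-x)))).const_mul β
        have i12 : Integrable (fun u =>
            α * (I S u * I A u) + (1 - α - β) * (m A).toReal * I S u) m := i1.add i2
        rw [integral_add i12 i3, integral_add i1 i2, integral_const_mul,
          integral_const_mul, integral_const_mul]
      rw [hLHS, hRHS, hIint A hA]
      ring
    · exact StronglyMeasurable.aestronglyMeasurable
        ((hφm.comp (measurable_iff_comap_le.mpr le_rfl)).stronglyMeasurable)
  -- main integral identity
  have hmain : ∀ A B : Set ℝ, MeasurableSet A → MeasurableSet B →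
      ∫ ω, I A (V ω) * I B (V' ω) ∂P =
        (α^2+β^2) * (∫ t, I A t * I B t ∂m)
          + (1-(α+β)^2) * ((m A).toReal * (m B).toReal)
          + (2*α*β) * (∫ t, I A t * I B (1-t) ∂m) := by
    intro A B hA hB
    have hIA := hImeas A hA
    have hIB := hImeas B hB
    have hJA : Measurable (fun u : ℝ => I A (1 - u)) :=
      hIA.comp (measurable_const.sub measurable_id)
    have hJB : Measurable (fun u : ℝ => I B (1 - u)) :=
      hIB.comp (measurable_const.sub measurable_id)
    have hprodb : ∀ (f g : ℝ → ℝ), (∀ x, |f x| ≤ 1) → (∀ x, |g x| ≤ 1) →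
        ∀ x, |f x * g x| ≤ 1 := fun f g hf hg x => by
      rw [abs_mul]; exact mul_le_one₀ (hf x) (abs_nonneg _) (hg x)
    have h1 : ∫ ω, I A (V ω) * I B (V' ω) ∂P
        = ∫ ω, (P[fun ω => I A (V ω) * I B (V' ω) | MeasurableSpace.comap U inferInstance]) ω ∂P :=
      (integral_condExp hU.comap_le).symm
    rw [h1, integral_congr_ae (hci (I A) (I B) hIA ⟨1, hIb A⟩ hIB ⟨1, hIb B⟩)]
    have h3 : (fun ω => (P[fun ω' => I A (V ω') | MeasurableSpace.comap U inferInstance]) ω *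
          (P[fun ω' => I B (V ω') | MeasurableSpace.comap U inferInstance]) ω) =ᵐ[P]
        (fun ω => (α * I A (U ω) + (1-α-β) * (m A).toReal + β * I A (1 - U ω)) *
          (α * I B (U ω) + (1-α-β) * (m B).toReal + β * I B (1 - U ω))) :=
      (hce A hA).mul (hce B hB)
    rw [integral_congr_ae h3]
    have hφAm : Measurable (fun u : ℝ =>
        α * I A u + (1-α-β) * (m A).toReal + β * I A (1 - u)) :=
      ((measurable_const.mul hIA).add measurable_const).add (measurable_const.mul hJA)
    have hφBm : Measurable (fun u : ℝ =>
        α * I B u + (1-α-β) * (m B).toReal + β * I B (1 - u)) :=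
      ((measurable_const.mul hIB).add measurable_const).add (measurable_const.mul hJB)
    have h4 : ∫ ω, (α * I A (U ω) + (1-α-β) * (m A).toReal + β * I A (1 - U ω)) *
          (α * I B (U ω) + (1-α-β) * (m B).toReal + β * I B (1 - U ω)) ∂P
        = ∫ u, (α * I A u + (1-α-β) * (m A).toReal + β * I A (1 - u)) *
          (α * I B u + (1-α-β) * (m B).toReal + β * I B (1 - u)) ∂m := by
      calc ∫ ω, (α * I A (U ω) + (1-α-β) * (m A).toReal + β * I A (1 - U ω)) *
            (α * I B (U ω) + (1-α-β) * (m B).toReal + β * I B (1 - U ω)) ∂P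
          = ∫ u, (α * I A u + (1-α-β) * (m A).toReal + β * I A (1 - u)) *
            (α * I B u + (1-α-β) * (m B).toReal + β * I B (1 - u)) ∂(Measure.map U P) :=
          (integral_map hU.aemeasurable (hφAm.mul hφBm).aestronglyMeasurable).symm
        _ = _ := by rw [hUlaw]
    rw [h4]
    -- expand the product
    have hexp : (fun u : ℝ => (α * I A u + (1-α-β) * (m A).toReal + β * I A (1 - u)) *
          (α * I B u + (1-α-β) * (m B).toReal + β * I B (1 - u)))
        = fun u => α^2 * (I A u * I B u)
          + (β^2 * (I A (1-u) * I B (1-u))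
          + ((α*β) * (I A u * I B (1-u))
          + ((α*β) * (I A (1-u) * I B u)
          + ((α*(1-α-β)*(m B).toReal) * I A u
          + ((α*(1-α-β)*(m A).toReal) * I B u
          + ((β*(1-α-β)*(m B).toReal) * I A (1-u)
          + ((β*(1-α-β)*(m A).toReal) * I B (1-u)
          + (1-α-β)^2*((m A).toReal*(m B).toReal)))))))) := by
      funext u; ring
    rw [hexp]
    -- integrability of each piece
    have iAB : Integrable (fun u => I A u * I B u) m := hint1 _ (hIA.mul hIB) (hprodb _ _ (hIb A) (hIb B))
    have iJJ : Integrable (fun u => I A (1-u) * I B (1-u)) m := hint1 _ (hJA.mul hJB) (hprodb _ _ (fun x => hIb A (1-x)) (fun x => hIb B (1-x)))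
    have iAJ : Integrable (fun u => I A u * I B (1-u)) m := hint1 _ (hIA.mul hJB) (hprodb _ _ (hIb A) (fun x => hIb B (1-x)))
    have iJB : Integrable (fun u => I A (1-u) * I B u) m := hint1 _ (hJA.mul hIB) (hprodb _ _ (fun x => hIb A (1-x)) (hIb B))
    have iA := hint1 _ hIA (hIb A)
    have iB := hint1 _ hIB (hIb B)
    have iJA' := hint1 _ hJA (fun x => hIb A (1-x))
    have iJB' := hint1 _ hJB (fun x => hIb B (1-x))
    have t9 : Integrable (fun _ : ℝ => (1-α-β)^2*((m A).toReal*(m B).toReal)) m :=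
      integrable_const _
    have t8 : Integrable (fun u : ℝ => (β*(1-α-β)*(m A).toReal) * I B (1-u) +
        (1-α-β)^2*((m A).toReal*(m B).toReal)) m := (iJB'.const_mul _).add t9
    have t7 : Integrable (fun u : ℝ => (β*(1-α-β)*(m B).toReal) * I A (1-u) + ((β*(1-α-β)*(m A).toReal) * I B (1-u) +
        (1-α-β)^2*((m A).toReal*(m B).toReal))) m := (iJA'.const_mul _).add t8
    have t6 : Integrable (fun u : ℝ => (α*(1-α-β)*(m A).toReal) * I B u + ((β*(1-α-β)*(m B).toReal) * I A (1-u) + ((β*(1-α-β)*(m A).toReal) * I B (1-u) +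
        (1-α-β)^2*((m A).toReal*(m B).toReal)))) m := (iB.const_mul _).add t7
    have t5 : Integrable (fun u : ℝ => (α*(1-α-β)*(m B).toReal) * I A u + ((α*(1-α-β)*(m A).toReal) * I B u + ((β*(1-α-β)*(m B).toReal) * I A (1-u) + ((β*(1-α-β)*(m A).toReal) * I B (1-u) +
        (1-α-β)^2*((m A).toReal*(m B).toReal))))) m := (iA.const_mul _).add t6
    have t4 : Integrable (fun u : ℝ => (α*β) * (I A (1-u) * I B u) + ((α*(1-α-β)*(m B).toReal) * I A u + ((α*(1-α-β)*(m A).toReal) * I B u + ((β*(1-α-β)*(m B).toReal) * I A (1-u) + ((β*(1-α-β)*(m A).toReal) * I B (1-u) +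
        (1-α-β)^2*((m A).toReal*(m B).toReal)))))) m := (iJB.const_mul _).add t5
    have t3 : Integrable (fun u : ℝ => (α*β) * (I A u * I B (1-u)) + ((α*β) * (I A (1-u) * I B u) + ((α*(1-α-β)*(m B).toReal) * I A u + ((α*(1-α-β)*(m A).toReal) * I B u + ((β*(1-α-β)*(m B).toReal) * I A (1-u) + ((β*(1-α-β)*(m A).toReal) * I B (1-u) +
        (1-α-β)^2*((m A).toReal*(m B).toReal))))))) m := (iAJ.const_mul _).add t4
    have t2 : Integrable (fun u : ℝ => β^2 * (I A (1-u) * I B (1-u)) + ((α*β) * (I A u * I B (1-u)) + ((α*β) * (I A (1-u) * I B u) + ((α*(1-α-β)*(m B).toReal) * I A u + ((α*(1-α-β)*(m A).toReal) * I B u + ((β*(1-α-β)*(m B).toReal) * I A (1-u) + ((β*(1-α-β)*(m A).toReal) * I B (1-u) +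
        (1-α-β)^2*((m A).toReal*(m B).toReal)))))))) m := (iJJ.const_mul _).add t3
    rw [integral_add (iAB.const_mul _) t2, integral_add (iJJ.const_mul _) t3,
      integral_add (iAJ.const_mul _) t4, integral_add (iJB.const_mul _) t5,
      integral_add (iA.const_mul _) t6, integral_add (iB.const_mul _) t7,
      integral_add (iJA'.const_mul _) t8, integral_add (iJB'.const_mul _) t9,
      integral_const_mul, integral_const_mul, integral_const_mul, integral_const_mul,
      integral_const_mul, integral_const_mul, integral_const_mul, integral_const_mul,
      integral_const]
    -- reflection substitutions
    have e1 : ∫ u, I A (1-u) * I B (1-u) ∂m = ∫ u, I A u * I B u ∂m := by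
      calc ∫ u, I A (1-u) * I B (1-u) ∂m
          = ∫ u, I A u * I B u ∂(Measure.map (fun t : ℝ => 1 - t) m) :=
            (integral_map (measurable_const.sub measurable_id).aemeasurable
              (hIA.mul hIB).aestronglyMeasurable).symm
        _ = ∫ u, I A u * I B u ∂m := by rw [hrefm]
    have e2 : ∫ u, I A (1-u) * I B u ∂m = ∫ u, I A u * I B (1-u) ∂m := by
      have step : ∫ u, I A u * I B (1-u) ∂(Measure.map (fun t : ℝ => 1 - t) m)
          = ∫ u, I A (1-u) * I B (1-(1-u)) ∂m :=
        integral_map (measurable_const.sub measurable_id).aemeasurable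
          (hIA.mul hJB).aestronglyMeasurable
      rw [hrefm] at step
      have heq2 : (fun u : ℝ => I A (1-u) * I B u) = fun u => I A (1-u) * I B (1-(1-u)) := by
        funext u; norm_num
      rw [heq2]
      exact step.symm
    have e3 : ∫ u, I A (1-u) ∂m = ∫ u, I A u ∂m := by
      calc ∫ u, I A (1-u) ∂m
          = ∫ u, I A u ∂(Measure.map (fun t : ℝ => 1 - t) m) :=
            (integral_map (measurable_const.sub measurable_id).aemeasurable
              hIA.aestronglyMeasurable).symm
        _ = ∫ u, I A u ∂m := by rw [hrefm]
    have e4 : ∫ u, I B (1-u) ∂m = ∫ u, I B u ∂m := by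
      calc ∫ u, I B (1-u) ∂m
          = ∫ u, I B u ∂(Measure.map (fun t : ℝ => 1 - t) m) :=
            (integral_map (measurable_const.sub measurable_id).aemeasurable
              hIB.aestronglyMeasurable).symm
        _ = ∫ u, I B u ∂m := by rw [hrefm]
    have hIintA : ∫ x, I A x ∂m = (m A).toReal := by
      rw [hI_def, integral_indicator_const (1:ℝ) hA]; simp [measureReal_def]
    have hIintB : ∫ x, I B x ∂m = (m B).toReal := by
      rw [hI_def, integral_indicator_const (1:ℝ) hB]; simp [measureReal_def]
    rw [e1, e2, e3, e4, hIintA, hIintB]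
    have hmu : (m univ).toReal = 1 := by simp
    rw [measureReal_def, hmu]
    simp only [smul_eq_mul, one_mul]
    ring
  -- rectangles
  have hrect : ∀ A B : Set ℝ, MeasurableSet A → MeasurableSet B →
      Measure.map (fun ω => (V ω, V' ω)) P (A ×ˢ B) =
        (ENNReal.ofReal (α ^ 2 + β ^ 2) • μM + ENNReal.ofReal (1 - (α + β) ^ 2) • μPi +
          ENNReal.ofReal (2 * α * β) • μW) (A ×ˢ B) := by
    intro A B hA hB
    have hIA := hImeas A hA
    have hIB := hImeas B hB
    have hWset : MeasurableSet (A ∩ (fun t : ℝ => 1 - t) ⁻¹' B) :=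
      hA.inter ((measurable_const.sub measurable_id) hB)
    -- LHS
    have hLHS : Measure.map (fun ω => (V ω, V' ω)) P (A ×ˢ B)
        = ENNReal.ofReal (∫ ω, I A (V ω) * I B (V' ω) ∂P) := by
      rw [Measure.map_apply (hV.prodMk hV') (hA.prod hB)]
      have hs : MeasurableSet (V ⁻¹' A ∩ V' ⁻¹' B) := (hV hA).inter (hV' hB)
      have hpre2 : (fun ω => (V ω, V' ω)) ⁻¹' (A ×ˢ B) = V ⁻¹' A ∩ V' ⁻¹' B := rfl
      rw [hpre2]
      have heq : (fun ω => I A (V ω) * I B (V' ω))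
          = (V ⁻¹' A ∩ V' ⁻¹' B).indicator (fun _ => (1:ℝ)) := by
        funext ω
        by_cases h1 : V ω ∈ A <;> by_cases h2 : V' ω ∈ B <;>
          simp [hI_def, indicator, h1, h2]
      rw [heq, integral_indicator_const (1:ℝ) hs, smul_eq_mul, mul_one, measureReal_def,
        ENNReal.ofReal_toReal (measure_ne_top P _)]
    -- values of the integrals
    have hXM : ∫ t, I A t * I B t ∂m = (m (A ∩ B)).toReal := by
      have heq : (fun t => I A t * I B t) = (A ∩ B).indicator (fun _ => (1:ℝ)) := by
        funext t
        by_cases h1 : t ∈ A <;> by_cases h2 : t ∈ B <;> simp [hI_def, indicator, h1, h2]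
      rw [heq, integral_indicator_const (1:ℝ) (hA.inter hB), smul_eq_mul, mul_one, measureReal_def]
    have hXW : ∫ t, I A t * I B (1-t) ∂m = (m (A ∩ (fun t : ℝ => 1 - t) ⁻¹' B)).toReal := by
      have heq : (fun t => I A t * I B (1-t))
          = (A ∩ (fun t : ℝ => 1 - t) ⁻¹' B).indicator (fun _ => (1:ℝ)) := by
        funext t
        by_cases h1 : t ∈ A <;> by_cases h2 : 1 - t ∈ B <;> simp [hI_def, indicator, h1, h2]
      rw [heq, integral_indicator_const (1:ℝ) hWset, smul_eq_mul, mul_one, measureReal_def]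
    -- values of the measures on the rectangle
    have hμMv : μM (A ×ˢ B) = m (A ∩ B) := by
      rw [hμM, Measure.map_apply
        (show Measurable fun t : ℝ => (t, t) from measurable_id.prodMk measurable_id)
        (hA.prod hB)]
      rfl
    have hμWv : μW (A ×ˢ B) = m (A ∩ (fun t : ℝ => 1 - t) ⁻¹' B) := by
      rw [hμW, Measure.map_apply
        (show Measurable fun t : ℝ => (t, 1 - t) from
          measurable_id.prodMk (measurable_const.sub measurable_id))
        (hA.prod hB)]
      rfl
    have hμPiv : μPi (A ×ˢ B) = m A * m B := by rw [hμPi, Measure.prod_prod]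
    have hn1 : (0:ℝ) ≤ α^2 + β^2 := by positivity
    have hn2 : (0:ℝ) ≤ 1 - (α+β)^2 := by nlinarith
    have hn3 : (0:ℝ) ≤ 2*α*β := by positivity
    rw [Measure.add_apply, Measure.add_apply, Measure.smul_apply, Measure.smul_apply,
      Measure.smul_apply, hμMv, hμWv, hμPiv, hLHS, hmain A B hA hB, hXM, hXW,
      smul_eq_mul, smul_eq_mul, smul_eq_mul,
      ← ENNReal.ofReal_toReal (measure_ne_top m (A ∩ B)),
      ← ENNReal.ofReal_toReal (measure_ne_top m (A ∩ (fun t : ℝ => 1 - t) ⁻¹' B)),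
      ← ENNReal.ofReal_toReal (measure_ne_top m A),
      ← ENNReal.ofReal_toReal (measure_ne_top m B),
      ← ENNReal.ofReal_mul ENNReal.toReal_nonneg,
      ← ENNReal.ofReal_mul hn1, ← ENNReal.ofReal_mul hn2, ← ENNReal.ofReal_mul hn3,
      ← ENNReal.ofReal_add (mul_nonneg hn1 ENNReal.toReal_nonneg)
        (mul_nonneg hn2 (mul_nonneg ENNReal.toReal_nonneg ENNReal.toReal_nonneg)),
      ← ENNReal.ofReal_add (add_nonneg (mul_nonneg hn1 ENNReal.toReal_nonneg)
        (mul_nonneg hn2 (mul_nonneg ENNReal.toReal_nonneg ENNReal.toReal_nonneg)))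
        (mul_nonneg hn3 ENNReal.toReal_nonneg)]
    congr 1
    rw [ENNReal.toReal_ofReal ENNReal.toReal_nonneg, ENNReal.toReal_ofReal ENNReal.toReal_nonneg,
      ENNReal.toReal_ofReal ENNReal.toReal_nonneg, ENNReal.toReal_ofReal ENNReal.toReal_nonneg]
  -- conclude by π-system extensionality
  haveI : IsProbabilityMeasure (Measure.map (fun ω => (V ω, V' ω)) P) :=
    Measure.isProbabilityMeasure_map (hV.prodMk hV').aemeasurable
  refine ext_of_generate_finite _ generateFrom_prod.symm isPiSystem_prod ?_ ?_
  · rintro s ⟨A, hA, B, hB, rfl⟩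
    exact hrect A B hA hB
  · rw [← univ_prod_univ]
    exact hrect univ univ MeasurableSet.univ MeasurableSet.univ
end

section
/- Let β ∈ [0,1] and let (U,V) be a random vector on [0,1]² with joint distribution function A_{1,β}(u,v) = min{v, u·v^{1−β}} (the Marshall–Olkin copula with parameters α = 1 and β). Let V' be a random variable such that V and V' share the same conditional distribution given U and are conditionally independent given U. Then the joint distribution function of (V,V') is the Marshall–Olkin copula A_{β,β}(s,t) = min{s^{1−β}·t, s·t^{1−β}}, i.e., ψ(A_{1,β}) = A_{β,β}. -/
open MeasureTheory ProbabilityTheory Set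

private lemma mo_alg0 {β u : ℝ} (hβ0 : 0 ≤ β) (hu0 : 0 ≤ u) :
    (0:ℝ) ^ (1 - β) * min u ((0:ℝ) ^ β) = min 0 (u * (0:ℝ) ^ (1 - β)) := by
  rcases eq_or_lt_of_le hβ0 with hb | hb
  · rw [← hb]; norm_num
  · rw [Real.zero_rpow hb.ne', min_eq_right hu0, mul_zero,
      min_eq_left (mul_nonneg hu0 (Real.rpow_nonneg le_rfl _))]

private lemma mo_alg1 {β s u : ℝ} (hβ0 : 0 ≤ β) (hs0 : 0 ≤ s) (hu0 : 0 ≤ u) :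
    s ^ (1 - β) * min u (s ^ β) = min s (u * s ^ (1 - β)) := by
  rcases eq_or_lt_of_le hs0 with h | h
  · rw [← h]; exact mo_alg0 hβ0 hu0
  · have h1 : s ^ (1 - β) * s ^ β = s := by
      rw [← Real.rpow_add h, sub_add_cancel, Real.rpow_one]
    rw [mul_min_of_nonneg _ _ (Real.rpow_nonneg hs0 _), h1, min_comm, mul_comm]

private lemma mo_alg2 {β s t : ℝ} (hβ0 : 0 ≤ β) (hs0 : 0 ≤ s) (ht0 : 0 ≤ t)
    (hst : s ≤ t) :
    s ^ (1 - β) * t ^ (1 - β) * min (s ^ β) (t ^ β) = min (s ^ (1 - β) * t) (s * t ^ (1 - β)) := by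
  have hmin : min (s ^ β) (t ^ β) = s ^ β :=
    min_eq_left (Real.rpow_le_rpow hs0 hst hβ0)
  rw [hmin]
  rcases eq_or_lt_of_le hs0 with h | h
  · have hz : (0:ℝ) ^ (1 - β) * t ^ (1 - β) * (0:ℝ) ^ β = 0 := by
      rcases eq_or_lt_of_le hβ0 with hb | hb
      · rw [← hb]; norm_num
      · rw [Real.zero_rpow hb.ne', mul_zero]
    rw [← h, hz, zero_mul, min_eq_right (mul_nonneg (Real.rpow_nonneg le_rfl _) ht0)]
  · have h1 : s ^ (1 - β) * s ^ β = s := by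
      rw [← Real.rpow_add h, sub_add_cancel, Real.rpow_one]
    have ht' : 0 < t := lt_of_lt_of_le h hst
    have h2 : t ^ β * t ^ (1 - β) = t := by
      rw [← Real.rpow_add ht', add_sub_cancel, Real.rpow_one]
    have hle : s * t ^ (1 - β) ≤ s ^ (1 - β) * t := by
      calc s * t ^ (1 - β) = s ^ (1 - β) * s ^ β * t ^ (1 - β) := by rw [h1]
        _ ≤ s ^ (1 - β) * t ^ β * t ^ (1 - β) := by gcongr
        _ = s ^ (1 - β) * t := by rw [mul_assoc, h2]
    rw [min_eq_right hle]
    calc s ^ (1 - β) * t ^ (1 - β) * s ^ β = s ^ (1 - β) * s ^ β * t ^ (1 - β) := by ring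
      _ = s * t ^ (1 - β) := by rw [h1]

/-- indicator of `(-∞, s]` -/
private noncomputable def gfun (s : ℝ) : ℝ → ℝ := fun x => if x ≤ s then 1 else 0

/-- conditional cdf candidate -/
private noncomputable def ffun (β s : ℝ) : ℝ → ℝ := fun u => if u ≤ s ^ β then s ^ (1 - β) else 0

private lemma gfun_meas (s : ℝ) : Measurable (gfun s) :=
  Measurable.ite measurableSet_Iic measurable_const measurable_const

private lemma gfun_bdd (s : ℝ) : ∃ C, ∀ x, |gfun s x| ≤ C := by
  refine ⟨1, fun x => ?_⟩
  unfold gfun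
  split_ifs <;> simp

private lemma ffun_meas (β s : ℝ) : Measurable (ffun β s) :=
  Measurable.ite measurableSet_Iic measurable_const measurable_const

private lemma gfun_comp_eq {Ω : Type*} (V : Ω → ℝ) (s : ℝ) :
    (fun ω => gfun s (V ω)) = Set.indicator {ω | V ω ≤ s} (fun _ => (1:ℝ)) := by
  funext ω
  simp only [gfun, Set.indicator_apply, mem_setOf_eq]

private lemma ffun_comp_eq {Ω : Type*} (U : Ω → ℝ) (β s : ℝ) :
    (fun ω => ffun β s (U ω))
      = Set.indicator {ω | U ω ≤ s ^ β} (fun _ => (s ^ (1 - β) : ℝ)) := by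
  funext ω
  simp only [ffun, Set.indicator_apply, mem_setOf_eq]

private lemma gfun_mul {Ω : Type*} (V V' : Ω → ℝ) (s t : ℝ) :
    (fun ω => gfun s (V ω) * gfun t (V' ω))
      = Set.indicator {ω | V ω ≤ s ∧ V' ω ≤ t} (fun _ => (1:ℝ)) := by
  funext ω
  simp only [gfun, Set.indicator_apply, mem_setOf_eq]
  by_cases h1 : V ω ≤ s <;> by_cases h2 : V' ω ≤ t <;> simp [h1, h2]

private lemma ffun_mul {Ω : Type*} (U : Ω → ℝ) (β s t : ℝ) :
    (fun ω => ffun β s (U ω) * ffun β t (U ω))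
      = Set.indicator {ω | U ω ≤ min (s ^ β) (t ^ β)}
          (fun _ => (s ^ (1 - β) * t ^ (1 - β) : ℝ)) := by
  funext ω
  simp only [ffun, Set.indicator_apply, mem_setOf_eq, le_min_iff]
  by_cases h1 : U ω ≤ s ^ β <;> by_cases h2 : U ω ≤ t ^ β <;> simp [h1, h2]

private lemma my_setIntegral_indicator_const {Ω : Type*} [MeasurableSpace Ω] (P : Measure Ω)
    [IsFiniteMeasure P] {A T : Set Ω} (hT : MeasurableSet T) (c : ℝ) :
    ∫ ω in A, T.indicator (fun _ => c) ω ∂P = c * (P (A ∩ T)).toReal := by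
  rw [setIntegral_indicator hT, setIntegral_const, smul_eq_mul, mul_comm]; rfl

private lemma my_integral_indicator_const {Ω : Type*} [MeasurableSpace Ω] (P : Measure Ω)
    [IsFiniteMeasure P] {T : Set Ω} (hT : MeasurableSet T) (c : ℝ) :
    ∫ ω, T.indicator (fun _ => c) ω ∂P = c * (P T).toReal := by
  rw [integral_indicator_const _ hT, smul_eq_mul, mul_comm]; rfl

/-- The `ψ`-transform maps the Marshall–Olkin copula `A_{1,β}` to the
Marshall–Olkin copula `A_{β,β}`: if `(U,V)` lives on `[0,1]²` with joint distribution
function `A_{1,β}(u,v) = min{v, u·v^{1−β}}` and `V'` shares the same conditional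
distribution as `V` given `U` and is conditionally independent of `V` given `U`, then
`(V,V')` has joint distribution function `A_{β,β}(s,t) = min{s^{1−β}·t, s·t^{1−β}}`. -/
theorem psi_marshall_olkin
    {Ω : Type*} [MeasurableSpace Ω] (P : Measure Ω) [IsProbabilityMeasure P]
    (U V V' : Ω → ℝ) (hU : Measurable U) (hV : Measurable V) (hV' : Measurable V')
    (β : ℝ) (hβ : β ∈ Icc (0:ℝ) 1)
    (hrange : ∀ᵐ ω ∂P, U ω ∈ Icc (0:ℝ) 1 ∧ V ω ∈ Icc (0:ℝ) 1)
    (hlaw : ∀ u ∈ Icc (0:ℝ) 1, ∀ v ∈ Icc (0:ℝ) 1,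
      (P {ω | U ω ≤ u ∧ V ω ≤ v}).toReal = min v (u * v ^ (1 - β)))
    (hci : ∀ g h : ℝ → ℝ, Measurable g → (∃ C, ∀ x, |g x| ≤ C) →
        Measurable h → (∃ C, ∀ x, |h x| ≤ C) →
      P[fun ω => g (V ω) * h (V' ω) | MeasurableSpace.comap U inferInstance]
        =ᵐ[P] fun ω =>
          (P[fun ω' => g (V ω') | MeasurableSpace.comap U inferInstance]) ω *
          (P[fun ω' => h (V ω') | MeasurableSpace.comap U inferInstance]) ω) :
    ∀ s ∈ Icc (0:ℝ) 1, ∀ t ∈ Icc (0:ℝ) 1,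
      (P {ω | V ω ≤ s ∧ V' ω ≤ t}).toReal =
        min (s ^ (1 - β) * t) (s * t ^ (1 - β)) := by
  obtain ⟨hβ0, hβ1⟩ := hβ
  have hm : MeasurableSpace.comap U inferInstance ≤ ‹MeasurableSpace Ω› := hU.comap_le
  haveI : SigmaFinite (P.trim hm) := (isFiniteMeasure_trim hm).toSigmaFinite
  have hU0 : ∀ᵐ ω ∂P, 0 ≤ U ω := hrange.mono fun ω h => h.1.1
  have hU1 : ∀ᵐ ω ∂P, U ω ≤ 1 := hrange.mono fun ω h => h.1.2
  have hV1 : ∀ᵐ ω ∂P, V ω ≤ 1 := hrange.mono fun ω h => h.2.2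
  have hVmeas : ∀ s : ℝ, MeasurableSet {ω | V ω ≤ s} := fun s => hV measurableSet_Iic
  have hUmeas : ∀ a : ℝ, MeasurableSet {ω | U ω ≤ a} := fun a => hU measurableSet_Iic
  -- joint law in ENNReal
  have hjoint : ∀ a ∈ Icc (0:ℝ) 1, ∀ v ∈ Icc (0:ℝ) 1,
      P {ω | U ω ≤ a ∧ V ω ≤ v} = ENNReal.ofReal (min v (a * v ^ (1 - β))) := by
    intro a ha v hv
    rw [← hlaw a ha v hv, ENNReal.ofReal_toReal (measure_ne_top P _)]
  -- U is uniform
  have hunif : ∀ a ∈ Icc (0:ℝ) 1, P {ω | U ω ≤ a} = ENNReal.ofReal a := by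
    intro a ha
    have h1 : ({ω | U ω ≤ a} : Set Ω) =ᵐ[P] {ω | U ω ≤ a ∧ V ω ≤ 1} := by
      refine Filter.eventuallyEq_set.mpr ?_
      filter_upwards [hV1] with ω hω
      exact ⟨fun h => ⟨h, hω⟩, fun h => h.1⟩
    rw [measure_congr h1, hjoint a ha 1 ⟨zero_le_one, le_refl 1⟩, Real.one_rpow, mul_one,
      min_eq_right ha.2]
  have hUneg : ∀ a : ℝ, a < 0 → P {ω | U ω ≤ a} = 0 := by
    intro a ha
    refine measure_mono_null (fun ω hω => ?_) (ae_iff.mp hU0)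
    simp only [mem_setOf_eq] at hω ⊢
    exact fun h0 => absurd (le_trans h0 hω) (not_le.mpr ha)
  have hcap : ∀ (S : Set Ω) (a : ℝ), 1 ≤ a →
      P ({ω | U ω ≤ a} ∩ S) = P ({ω | U ω ≤ 1} ∩ S) := by
    intro S a ha
    refine measure_congr (Filter.eventuallyEq_set.mpr ?_)
    filter_upwards [hU1] with ω hω
    simp only [mem_inter_iff, mem_setOf_eq]
    exact ⟨fun h => ⟨hω, h.2⟩, fun h => ⟨le_trans hω ha, h.2⟩⟩
  -- key disintegration identity on preimages
  have hmeas_eq : ∀ s ∈ Icc (0:ℝ) 1, ∀ B : Set ℝ, MeasurableSet B →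
      P (U ⁻¹' B ∩ {ω | V ω ≤ s})
        = ENNReal.ofReal (s ^ (1 - β)) * P (U ⁻¹' B ∩ {ω | U ω ≤ s ^ β}) := by
    intro s hs B hB
    have hsβ0 : 0 ≤ s ^ β := Real.rpow_nonneg hs.1 _
    have hsβ1 : s ^ β ≤ 1 := Real.rpow_le_one hs.1 hs.2 hβ0
    have hmid : ∀ a : ℝ, 0 ≤ a → a ≤ 1 → P ({ω | U ω ≤ a} ∩ {ω | V ω ≤ s})
        = ENNReal.ofReal (s ^ (1 - β)) * P ({ω | U ω ≤ a} ∩ {ω | U ω ≤ s ^ β}) := by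
      intro a ha0 ha1
      have e1 : ({ω | U ω ≤ a} ∩ {ω | V ω ≤ s} : Set Ω) = {ω | U ω ≤ a ∧ V ω ≤ s} := by
        ext ω; simp [mem_setOf_eq]
      have e2 : ({ω | U ω ≤ a} ∩ {ω | U ω ≤ s ^ β} : Set Ω)
          = {ω | U ω ≤ min a (s ^ β)} := by
        ext ω; simp [mem_setOf_eq, le_min_iff]
      rw [e1, e2, hjoint a ⟨ha0, ha1⟩ s hs,
        hunif (min a (s ^ β)) ⟨le_min ha0 hsβ0, min_le_of_left_le ha1⟩,
        ← ENNReal.ofReal_mul (Real.rpow_nonneg hs.1 _), mo_alg1 hβ0 hs.1 ha0]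
    have hIic : ∀ a : ℝ, P ({ω | U ω ≤ a} ∩ {ω | V ω ≤ s})
        = ENNReal.ofReal (s ^ (1 - β)) * P ({ω | U ω ≤ a} ∩ {ω | U ω ≤ s ^ β}) := by
      intro a
      rcases lt_or_ge a 0 with ha | ha
      · rw [measure_mono_null inter_subset_left (hUneg a ha),
          measure_mono_null inter_subset_left (hUneg a ha), mul_zero]
      rcases le_or_gt a 1 with ha1 | ha1
      · exact hmid a ha ha1
      · rw [hcap _ a ha1.le, hcap _ a ha1.le]
        exact hmid 1 zero_le_one le_rfl
    have key : (P.restrict {ω | V ω ≤ s}).map U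
        = ENNReal.ofReal (s ^ (1 - β)) • ((P.restrict {ω | U ω ≤ s ^ β}).map U) := by
      refine Measure.ext_of_Iic _ _ (fun a => ?_)
      rw [Measure.map_apply hU measurableSet_Iic, Measure.smul_apply,
        Measure.map_apply hU measurableSet_Iic, smul_eq_mul,
        Measure.restrict_apply (hU measurableSet_Iic),
        Measure.restrict_apply (hU measurableSet_Iic)]
      exact hIic a
    have h2 := congrArg (fun μ : Measure ℝ => μ B) key
    simpa only [Measure.map_apply hU hB, Measure.smul_apply, smul_eq_mul,
      Measure.restrict_apply (hU hB)] using h2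
  -- conditional expectation identification
  have hcond : ∀ s ∈ Icc (0:ℝ) 1,
      (fun ω => ffun β s (U ω))
        =ᵐ[P] P[fun ω => gfun s (V ω) | MeasurableSpace.comap U inferInstance] := by
    intro s hs
    have hgV_int : Integrable (fun ω => gfun s (V ω)) P := by
      rw [gfun_comp_eq V s]
      exact (integrable_const (1:ℝ)).indicator (hVmeas s)
    refine ae_eq_condExp_of_forall_setIntegral_eq hm hgV_int (fun A _ _ => ?_)
      (fun A hA _ => ?_) ?_
    · refine Integrable.integrableOn ?_
      rw [ffun_comp_eq U β s]
      exact (integrable_const _).indicator (hUmeas _)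
    · obtain ⟨B, hB, rfl⟩ := hA
      have hL : ∫ ω in U ⁻¹' B, ffun β s (U ω) ∂P
          = s ^ (1 - β) * (P (U ⁻¹' B ∩ {ω | U ω ≤ s ^ β})).toReal := by
        rw [ffun_comp_eq U β s]
        exact my_setIntegral_indicator_const P (hUmeas _) _
      have hR : ∫ ω in U ⁻¹' B, gfun s (V ω) ∂P
          = 1 * (P (U ⁻¹' B ∩ {ω | V ω ≤ s})).toReal := by
        rw [gfun_comp_eq V s]
        exact my_setIntegral_indicator_const P (hVmeas s) _
      rw [hL, hR, one_mul, hmeas_eq s hs B hB, ENNReal.toReal_mul,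
        ENNReal.toReal_ofReal (Real.rpow_nonneg hs.1 _)]
    · have hUm : Measurable[MeasurableSpace.comap U inferInstance] U :=
        Measurable.of_comap_le le_rfl
      have hmm : Measurable[MeasurableSpace.comap U inferInstance]
          (fun ω => ffun β s (U ω)) := (ffun_meas β s).comp hUm
      exact hmm.stronglyMeasurable.aestronglyMeasurable
  -- main computation
  intro s hs t ht
  have hciA := hci (gfun s) (gfun t) (gfun_meas s) (gfun_bdd s) (gfun_meas t) (gfun_bdd t)
  have e1 : (P {ω | V ω ≤ s ∧ V' ω ≤ t}).toReal
      = ∫ ω, gfun s (V ω) * gfun t (V' ω) ∂P := by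
    have hmeas : MeasurableSet {ω | V ω ≤ s ∧ V' ω ≤ t} :=
      (hVmeas s).inter (hV' measurableSet_Iic)
    rw [gfun_mul V V' s t, my_integral_indicator_const P hmeas 1, one_mul]
  have e2 : ∫ ω, gfun s (V ω) * gfun t (V' ω) ∂P = ∫ ω, ffun β s (U ω) * ffun β t (U ω) ∂P := by
    rw [← integral_condExp hm]
    refine integral_congr_ae ?_
    exact hciA.trans (((hcond s hs).symm.mul (hcond t ht).symm))
  have e3 : ∫ ω, ffun β s (U ω) * ffun β t (U ω) ∂P
      = s ^ (1 - β) * t ^ (1 - β) * (P {ω | U ω ≤ min (s ^ β) (t ^ β)}).toReal := by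
    rw [ffun_mul U β s t]
    exact my_integral_indicator_const P (hUmeas _) _
  have hmin_mem : min (s ^ β) (t ^ β) ∈ Icc (0:ℝ) 1 :=
    ⟨le_min (Real.rpow_nonneg hs.1 _) (Real.rpow_nonneg ht.1 _),
      min_le_of_left_le (Real.rpow_le_one hs.1 hs.2 hβ0)⟩
  have e4 : (P {ω | U ω ≤ min (s ^ β) (t ^ β)}).toReal = min (s ^ β) (t ^ β) := by
    rw [hunif _ hmin_mem, ENNReal.toReal_ofReal hmin_mem.1]
  rw [e1, e2, e3, e4]
  rcases le_total s t with hst | hst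
  · exact mo_alg2 hβ0 hs.1 ht.1 hst
  · rw [min_comm (s ^ β) (t ^ β), mul_comm (s ^ (1 - β)) (t ^ (1 - β)),
      mo_alg2 hβ0 ht.1 hs.1 hst, min_comm]
    congr 1 <;> ring
end
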